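/- arXiv:1509.06402 — 5 statements merged into one kernel-verified Lean document; each statement's English description precedes it below -/
import Mathlib

section
/- For any given k ≥ 1 and any sequence (m_j)_{j<ω} of positive integers, there are numbers S_k(m_0, …, m_j) such that for any n < ω and any coloring c : [S_k(m_0)]^k × ∏_{j=1}^n S_k(m_0, …, m_j) → 2, there are sets H_j ⊆ S_k(m_0, …, m_j) for j ≤ n such that |H_j| = m_j and c is constant on [H_0]^k × ∏_{j=1}^n H_j. -/
def RamseyProp (k s N : ℕ) : Prop :=
  ∀ X : Finset ℕ, N ≤ X.card → ∀ c : Finset ℕ → Bool,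
    ∃ H : Finset ℕ, H ⊆ X ∧ H.card = s ∧ ∃ ε : Bool, ∀ A ⊆ H, A.card = k → c A = ε

theorem ramsey_exists (k s : ℕ) : ∃ N, RamseyProp k s N := by
  induction k generalizing s with
  | zero =>
    refine ⟨s, fun X hX c => ?_⟩
    obtain ⟨H, hHX, hcard⟩ := Finset.exists_subset_card_eq hX
    exact ⟨H, hHX, hcard, c ∅, fun A hA h0 => by rw [Finset.card_eq_zero.mp h0]⟩
  | succ k IH =>
    obtain ⟨NR, hNR⟩ : ∃ NR : ℕ → ℕ, ∀ s', RamseyProp k s' (NR s') :=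
      ⟨fun s' => (IH s').choose, fun s' => (IH s').choose_spec⟩
    set g : ℕ → ℕ := fun i => Nat.rec 0 (fun _ acc => NR acc + 1) i with hg
    have key : ∀ i : ℕ, ∀ X : Finset ℕ, g i ≤ X.card → ∀ c : Finset ℕ → Bool,
        ∃ T : Finset ℕ, T ⊆ X ∧ T.card = i ∧ ∃ e : ℕ → Bool,
          ∀ a ∈ T, ∀ A ⊆ T.filter (fun b => a < b), A.card = k → c (insert a A) = e a := by
      intro i
      induction i with
      | zero => exact fun X _ c => ⟨∅, Finset.empty_subset X, rfl, fun _ => true, by simp⟩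
      | succ i ih =>
        intro X hX c
        have hXne : X.Nonempty := by
          rw [← Finset.card_pos]; have : g (i+1) = NR (g i) + 1 := rfl; omega
        set a := X.min' hXne with ha
        have haX : a ∈ X := X.min'_mem hXne
        have hcard' : NR (g i) ≤ (X.erase a).card := by
          rw [Finset.card_erase_of_mem haX]
          have : g (i+1) = NR (g i) + 1 := rfl
          omega
        obtain ⟨H', hH'sub, hH'card, εa, hεa⟩ :=
          hNR (g i) (X.erase a) hcard' (fun B => c (insert a B))
        obtain ⟨T', hT'sub, hT'card, e', he'⟩ := ih H' (le_of_eq hH'card.symm) c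
        have haT' : a ∉ T' := fun h => (Finset.mem_erase.mp (hH'sub (hT'sub h))).1 rfl
        have hlt : ∀ b ∈ T', a < b := by
          intro b hb
          have hbX : b ∈ X := (Finset.erase_subset a X) (hH'sub (hT'sub hb))
          have hne : b ≠ a := (Finset.mem_erase.mp (hH'sub (hT'sub hb))).1
          exact lt_of_le_of_ne (X.min'_le b hbX) (Ne.symm hne)
        refine ⟨insert a T', ?_, ?_, Function.update e' a εa, ?_⟩
        · exact Finset.insert_subset haX (hT'sub.trans (hH'sub.trans (Finset.erase_subset a X)))
        · rw [Finset.card_insert_of_notMem haT', hT'card]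
        · intro b hb A hA hAcard
          rcases Finset.mem_insert.mp hb with rfl | hbT'
          · have hfil : (insert a T').filter (fun x => a < x) = T' := by
              ext y
              simp only [Finset.mem_filter, Finset.mem_insert]
              constructor
              · rintro ⟨rfl | hy, hlt'⟩
                · exact absurd hlt' (lt_irrefl _)
                · exact hy
              · exact fun hy => ⟨Or.inr hy, hlt y hy⟩
            rw [hfil] at hA
            rw [Function.update_self]
            exact hεa A (hA.trans hT'sub) hAcard
          · have hba : b ≠ a := fun h => haT' (h ▸ hbT')
            have hfil : (insert a T').filter (fun x => b < x) = T'.filter (fun x => b < x) := by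
              rw [Finset.filter_insert, if_neg (not_lt_of_gt (hlt b hbT'))]
            rw [hfil] at hA
            rw [Function.update_of_ne hba]
            exact he' b hbT' A hA hAcard
    refine ⟨g (2 * s), fun X hX c => ?_⟩
    obtain ⟨T, hTX, hTcard, e, he⟩ := key (2 * s) X hX c
    have hsplit := Finset.card_filter_add_card_filter_not
      (s := T) (p := fun x => e x = true)
    obtain ⟨ε, hε⟩ : ∃ ε : Bool, s ≤ (T.filter (fun x => e x = ε)).card := by
      by_cases h : s ≤ (T.filter (fun x => e x = true)).card
      · exact ⟨true, h⟩
      · refine ⟨false, ?_⟩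
        have : (T.filter (fun x => ¬ e x = true)) = T.filter (fun x => e x = false) := by
          apply Finset.filter_congr; intro x _; simp
        rw [this] at hsplit
        omega
    obtain ⟨H, hHsub, hHcard⟩ := Finset.exists_subset_card_eq hε
    refine ⟨H, (hHsub.trans (Finset.filter_subset _ _)).trans hTX, hHcard, ε, ?_⟩
    intro A hA hAcard
    have hAne : A.Nonempty := by rw [← Finset.card_pos]; omega
    set a := A.min' hAne with ha
    have haA : a ∈ A := A.min'_mem hAne
    have haH : a ∈ H := hA haA
    have haT : a ∈ T := (Finset.filter_subset _ _) (hHsub haH)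
    have hea : e a = ε := (Finset.mem_filter.mp (hHsub haH)).2
    have hsub : A.erase a ⊆ T.filter (fun b => a < b) := by
      intro b hb
      obtain ⟨hba, hbA⟩ := Finset.mem_erase.mp hb
      refine Finset.mem_filter.mpr ⟨(Finset.filter_subset _ _) (hHsub (hA hbA)), ?_⟩
      exact lt_of_le_of_ne (A.min'_le b hbA) (Ne.symm hba)
    have hcard : (A.erase a).card = k := by rw [Finset.card_erase_of_mem haA]; omega
    have := he a haT (A.erase a) hsub hcard
    rwa [Finset.insert_erase haA, hea] at this


/- STATEMENT 2 (Lemma 3.20 variant):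
For any k ≥ 1 and any sequence (m_j) of positive integers there are numbers
S_k(m_0,…,m_j) (here S j, since the sequence m is fixed) such that for any n and any
coloring c : [S_k(m_0)]^k × ∏_{j=1}^n S_k(m_0,…,m_j) → 2 there are H_j ⊆ S_k(m_0,…,m_j)
for j ≤ n with |H_j| = m_j and c constant on [H_0]^k × ∏_{j=1}^n H_j.

A point of the product is encoded as (A, x): A is the k-element subset at coordinate 0
and x : ℕ → ℕ gives coordinates 1,…,n, with the canonical convention x j = 0 for the
irrelevant coordinates (j = 0 and j > n).  For n = 0 the product is just [H_0]^k. -/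
noncomputable def Rnum (k s : ℕ) : ℕ := (ramsey_exists k s).choose

theorem Rnum_spec (k s : ℕ) : RamseyProp k s (Rnum k s) := (ramsey_exists k s).choose_spec

abbrev ColorT (s : ℕ → ℕ) (n : ℕ) : Type :=
  Finset (Fin (s 0)) → ((j : Fin n) → Fin (s (j.val + 1))) → Bool

noncomputable def pfun (k : ℕ) (m : ℕ → ℕ) : ℕ → ℕ → ℕ
  | 0 => fun _ => Rnum k (m 0)
  | n+1 => fun j =>
      if j ≤ n then pfun k m n j
      else Fintype.card (ColorT (pfun k m n) n) * m (n+1)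

theorem pfun_agree (k : ℕ) (m : ℕ → ℕ) : ∀ n j, j ≤ n → pfun k m n j = pfun k m j j := by
  intro n
  induction n with
  | zero => intro j hj; have : j = 0 := Nat.le_zero.mp hj; subst this; rfl
  | succ n ih =>
    intro j hj
    by_cases h : j ≤ n
    · have : pfun k m (n+1) j = pfun k m n j := by simp [pfun, h]
      rw [this, ih j h]
    · have : j = n + 1 := by omega
      rw [this]

theorem stmt2 (k : ℕ) (hk : 1 ≤ k) (m : ℕ → ℕ) (hm : ∀ j, 1 ≤ m j) :
    ∃ S : ℕ → ℕ,
      ∀ n : ℕ, ∀ c : Finset ℕ → (ℕ → ℕ) → Bool,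
        ∃ H : ℕ → Finset ℕ,
          (∀ j, j ≤ n → H j ⊆ Finset.range (S j) ∧ (H j).card = m j) ∧
          ∃ ε : Bool, ∀ A : Finset ℕ, A ⊆ H 0 → A.card = k →
            ∀ x : ℕ → ℕ, (∀ j, 1 ≤ j → j ≤ n → x j ∈ H j) →
              x 0 = 0 → (∀ j, n < j → x j = 0) →
              c A x = ε := by
  refine ⟨fun j => pfun k m j j, ?_⟩
  intro n
  induction n with
  | zero =>
    intro c
    have h0 : pfun k m 0 0 = Rnum k (m 0) := rfl
    obtain ⟨H0, hH0sub, hH0card, ε, hε⟩ :=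
      Rnum_spec k (m 0) (Finset.range (Rnum k (m 0)))
        (by rw [Finset.card_range]) (fun A => c A (fun _ => 0))
    refine ⟨fun _ => H0, ?_, ε, ?_⟩
    · intro j hj
      have : j = 0 := by omega
      subst this
      exact ⟨hH0sub, hH0card⟩
    · intro A hA hAk x hx hx0 hxhigh
      have hxeq : x = fun _ => 0 := by
        funext j
        cases j with
        | zero => exact hx0
        | succ j => exact hxhigh (j+1) (Nat.succ_pos j)
      rw [hxeq]
      exact hε A hA hAk
  | succ n IH =>
    intro c
    set s : ℕ → ℕ := pfun k m n with hs
    have hagree : ∀ j, j ≤ n → pfun k m j j = s j :=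
      fun j hj => (pfun_agree k m n j hj).symm
    have hSn1 : pfun k m (n+1) (n+1) = Fintype.card (ColorT s n) * m (n+1) := by
      simp [pfun, hs]
    -- the color map
    set f : ℕ → ColorT s n := fun v A y =>
      c (A.image Fin.val)
        (fun j => if hj0 : j = 0 then 0
          else if hj : j ≤ n then (y ⟨j - 1, by omega⟩ : Fin _).val
          else if j = n + 1 then v else 0) with hf
    have hmaps : ∀ v ∈ Finset.range (pfun k m (n+1) (n+1)),
        f v ∈ (Finset.univ : Finset (ColorT s n)) := fun _ _ => Finset.mem_univ _
    have hcards : (Finset.univ : Finset (ColorT s n)).card * m (n+1)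
        ≤ (Finset.range (pfun k m (n+1) (n+1))).card := by
      rw [Finset.card_range, hSn1, Finset.card_univ]
    obtain ⟨t0, -, ht0⟩ := Finset.exists_le_card_fiber_of_mul_le_card_of_maps_to
      hmaps Finset.univ_nonempty hcards
    obtain ⟨Hn1, hHn1sub, hHn1card⟩ := Finset.exists_subset_card_eq ht0
    have hfib : ∀ v ∈ Hn1, f v = t0 ∧ v < pfun k m (n+1) (n+1) := by
      intro v hv
      have := Finset.mem_filter.mp (hHn1sub hv)
      exact ⟨this.2, Finset.mem_range.mp this.1⟩
    have hHn1ne : Hn1.Nonempty := by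
      rw [← Finset.card_pos, hHn1card]; exact hm (n+1)
    obtain ⟨v0, hv0⟩ := hHn1ne
    obtain ⟨H', hH', ε, hε⟩ := IH (fun A x => c A (Function.update x (n+1) v0))
    refine ⟨Function.update H' (n+1) Hn1, ?_, ε, ?_⟩
    · intro j hj
      by_cases h : j = n + 1
      · subst h
        rw [Function.update_self]
        refine ⟨fun v hv => Finset.mem_range.mpr (hfib v hv).2, hHn1card⟩
      · rw [Function.update_of_ne h]
        exact hH' j (by omega)
    · intro A hA hAk x hx hx0 hxhigh
      rw [Function.update_of_ne (by omega : (0:ℕ) ≠ n+1)] at hA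
      -- encodings
      have hA0 : ∀ a ∈ A, a < s 0 := by
        intro a ha
        have h1 := (hH' 0 (Nat.zero_le n)).1 (hA ha)
        have h2 : a < pfun k m 0 0 := Finset.mem_range.mp h1
        exact lt_of_lt_of_eq h2 (hagree 0 (Nat.zero_le n))
      set Ah : Finset (Fin (s 0)) := A.attachFin hA0 with hAh
      have him : Ah.image Fin.val = A := by
        ext b
        simp only [hAh, Finset.mem_image]
        constructor
        · rintro ⟨a, ha, rfl⟩
          exact (Finset.mem_attachFin hA0).mp ha
        · intro hb
          exact ⟨⟨b, hA0 b hb⟩, (Finset.mem_attachFin hA0).mpr hb, rfl⟩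
      have hxmem : ∀ j : Fin n, x (j.val + 1) < s (j.val + 1) := by
        intro j
        have h1 : x (j.val + 1) ∈ Function.update H' (n+1) Hn1 (j.val + 1) :=
          hx (j.val + 1) (by omega) (by omega)
        rw [Function.update_of_ne (by omega : j.val + 1 ≠ n+1)] at h1
        have h2 := (hH' (j.val + 1) (by omega)).1 h1
        have h3 : x (j.val + 1) < pfun k m (j.val+1) (j.val+1) := Finset.mem_range.mp h2
        exact lt_of_lt_of_eq h3 (hagree (j.val + 1) (by omega))
      set xh : (j : Fin n) → Fin (s (j.val + 1)) := fun j => ⟨x (j.val + 1), hxmem j⟩ with hxh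
      have hdecode : ∀ v : ℕ,
          (fun j => if hj0 : j = 0 then 0
            else if hj : j ≤ n then (xh ⟨j - 1, by omega⟩ : Fin _).val
            else if j = n + 1 then v else 0) = Function.update x (n+1) v := by
        intro v
        funext j
        by_cases hj0 : j = 0
        · subst hj0
          rw [dif_pos rfl, Function.update_of_ne (by omega : (0:ℕ) ≠ n+1), hx0]
        · by_cases hj : j ≤ n
          · rw [dif_neg hj0, dif_pos hj, Function.update_of_ne (by omega : j ≠ n+1)]
            show x ((j - 1) + 1) = x j
            congr 1
            omega
          · by_cases hj1 : j = n + 1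
            · subst hj1
              rw [dif_neg hj0, dif_neg hj, if_pos rfl, Function.update_self]
            · rw [dif_neg hj0, dif_neg hj, if_neg hj1,
                Function.update_of_ne hj1, hxhigh j (by omega)]
      have hfval : ∀ v : ℕ, f v Ah xh = c A (Function.update x (n+1) v) := by
        intro v
        show c (Ah.image Fin.val) _ = _
        rw [him, hdecode v]
      -- x (n+1) ∈ Hn1
      have hxn1 : x (n+1) ∈ Hn1 := by
        have := hx (n+1) (by omega) (le_refl _)
        rwa [Function.update_self] at this
      have step1 : c A x = c A (Function.update x (n+1) v0) := by
        have e1 : c A x = f (x (n+1)) Ah xh := by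
          rw [hfval (x (n+1)), Function.update_eq_self]
        rw [e1, (hfib _ hxn1).1, ← (hfib v0 hv0).1, hfval v0]
      rw [step1]
      have : Function.update x (n+1) v0
          = Function.update (Function.update x (n+1) 0) (n+1) v0 := by
        rw [Function.update_idem]
      rw [this]
      apply hε A hA hAk
      · intro j hj1 hjn
        rw [Function.update_of_ne (by omega : j ≠ n+1)]
        have := hx j hj1 (by omega)
        rwa [Function.update_of_ne (by omega : j ≠ n+1)] at this
      · rw [Function.update_of_ne (by omega : (0:ℕ) ≠ n+1)]; exact hx0
      · intro j hj
        by_cases h : j = n+1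
        · subst h; rw [Function.update_self]
        · rw [Function.update_of_ne h]; exact hxhigh j (by omega)
end

section
/- Given k ≥ 1 and n < ω, there is a function S_{k,n} : [ℕ⁺]^{≤n+1} → ℕ⁺ (depending on both k and n) such that for each sequence (m_j)_{j≤n} of positive integers and each coloring c : ⋃_{l≤n} ([S_{k,n}(m_0, …, m_l)]^k × ∏_{j∈(n+1)∖{l}} S_{k,n}(m_0, …, m_j)) → 2, there are subsets H_j ⊆ S_{k,n}(m_0, …, m_j) with |H_j| = m_j for each j ≤ n, such that for each l ≤ n, c is constant on [H_l]^k × ∏_{j∈(n+1)∖{l}} H_j. -/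
open Finset

lemma myPigeon (κ : Type) [Fintype κ] (X : Finset ℕ) (f : ℕ → κ) (M : ℕ)
    (h : Fintype.card κ * M < X.card) :
    ∃ Y, Y ⊆ X ∧ Y.card = M ∧ ∀ u ∈ Y, ∀ v ∈ Y, f u = f v := by
  classical
  obtain ⟨y, -, hy⟩ := Finset.exists_lt_card_fiber_of_mul_lt_card_of_maps_to
    (t := (Finset.univ : Finset κ)) (fun a _ => Finset.mem_univ (f a)) (by simpa using h)
  obtain ⟨Y, hYsub, hYcard⟩ := Finset.exists_subset_card_eq (le_of_lt hy)
  refine ⟨Y, fun a ha => (Finset.mem_filter.1 (hYsub ha)).1, hYcard, ?_⟩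
  intro u hu v hv
  have h1 := (Finset.mem_filter.1 (hYsub hu)).2
  have h2 := (Finset.mem_filter.1 (hYsub hv)).2
  rw [h1, h2]

lemma preHom (k : ℕ) (κ : Type) [Fintype κ] [Nonempty κ]
    (hram : ∀ M, ∃ N, ∀ X : Finset ℕ, N ≤ X.card → ∀ c : Finset ℕ → κ,
      ∃ Y, Y ⊆ X ∧ Y.card = M ∧ ∃ ε, ∀ A, A ⊆ Y → A.card = k → c A = ε) :
    ∀ t, ∃ N, ∀ X : Finset ℕ, N ≤ X.card → ∀ c : Finset ℕ → κ,
      ∃ a : ℕ → ℕ, ∃ e : ℕ → κ,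
        (∀ i, i < t → a i ∈ X) ∧
        (∀ i j, i < j → j < t → a i < a j) ∧
        (∀ i, i < t → ∀ B : Finset ℕ, B.card = k →
          (∀ b ∈ B, ∃ j, i < j ∧ j < t ∧ b = a j) → c (insert (a i) B) = e i) := by
  intro t
  induction t with
  | zero =>
    exact ⟨0, fun X _ c => ⟨id, fun _ => Classical.arbitrary κ,
      by omega, by omega, by omega⟩⟩
  | succ t ih =>
    obtain ⟨Nt, hNt⟩ := ih
    obtain ⟨R, hR⟩ := hram Nt
    refine ⟨R + 1, fun X hX c => ?_⟩
    have hXne : X.Nonempty := Finset.card_pos.1 (by omega)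
    set a0 := X.min' hXne with ha0
    have ha0mem : a0 ∈ X := X.min'_mem hXne
    set X' := X.erase a0 with hX'
    have hX'card : R ≤ X'.card := by
      rw [hX', Finset.card_erase_of_mem ha0mem]; omega
    obtain ⟨Y, hYX', hYcard, ε0, hhom⟩ := hR X' hX'card (fun B => c (insert a0 B))
    obtain ⟨a', e', ha'X, ha'mono, ha'cond⟩ := hNt Y (le_of_eq hYcard.symm) c
    refine ⟨fun i => if i = 0 then a0 else a' (i - 1),
            fun i => if i = 0 then ε0 else e' (i - 1), ?_, ?_, ?_⟩
    · intro i hi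
      by_cases h0 : i = 0
      · simp [h0, ha0mem]
      · simp only [if_neg h0]
        exact Finset.erase_subset _ _ (hYX' (ha'X _ (by omega)))
    · intro i j hij hj
      have hj0 : j ≠ 0 := by omega
      by_cases h0 : i = 0
      · simp only [h0, if_neg hj0, if_pos]
        have hmem : a' (j - 1) ∈ X' := hYX' (ha'X _ (by omega))
        have hne : a' (j - 1) ≠ a0 := (Finset.mem_erase.1 hmem).1
        have hle : a0 ≤ a' (j - 1) := X.min'_le _ ((Finset.erase_subset _ _) hmem)
        omega
      · simp only [if_neg h0, if_neg hj0]
        exact ha'mono (i - 1) (j - 1) (by omega) (by omega)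
    · intro i hi B hBcard hB
      by_cases h0 : i = 0
      · simp only [h0, if_pos rfl]
        have hBY : B ⊆ Y := by
          intro b hb
          obtain ⟨j, hj1, hj2, hj3⟩ := hB b hb
          have : b = a' (j - 1) := by rw [hj3]; simp [show j ≠ 0 by omega]
          rw [this]; exact ha'X _ (by omega)
        exact hhom B hBY hBcard
      · simp only [if_neg h0]
        refine ha'cond (i - 1) (by omega) B hBcard ?_
        intro b hb
        obtain ⟨j, hj1, hj2, hj3⟩ := hB b hb
        exact ⟨j - 1, by omega, by omega, by rw [hj3]; simp [show j ≠ 0 by omega]⟩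

lemma myRamsey (κ : Type) [Fintype κ] [Nonempty κ] :
    ∀ k M : ℕ, ∃ N, ∀ X : Finset ℕ, N ≤ X.card → ∀ c : Finset ℕ → κ,
      ∃ Y, Y ⊆ X ∧ Y.card = M ∧ ∃ ε, ∀ A, A ⊆ Y → A.card = k → c A = ε := by
  intro k
  induction k with
  | zero =>
    intro M
    refine ⟨M, fun X hX c => ?_⟩
    obtain ⟨Y, hYX, hYcard⟩ := Finset.exists_subset_card_eq hX
    refine ⟨Y, hYX, hYcard, c ∅, fun A _ hA => ?_⟩
    rw [Finset.card_eq_zero.1 hA]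
  | succ k ih =>
    intro M
    obtain ⟨N, hN⟩ := preHom k κ ih (Fintype.card κ * M + 1)
    refine ⟨N, fun X hX c => ?_⟩
    obtain ⟨a, e, hmem, hmono, hcond⟩ := hN X hX c
    set t := Fintype.card κ * M + 1 with ht
    obtain ⟨T, hTsub, hTcard, hTconst⟩ := myPigeon κ (Finset.range t) e M (by rw [Finset.card_range]; omega)
    have hTlt : ∀ i ∈ T, i < t := fun i hi => Finset.mem_range.1 (hTsub hi)
    refine ⟨T.image a, ?_, ?_, ?_⟩
    · intro b hb
      obtain ⟨i, hi, rfl⟩ := Finset.mem_image.1 hb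
      exact hmem i (hTlt i hi)
    · rw [Finset.card_image_of_injOn, hTcard]
      intro u hu v hv huv
      by_contra hne
      rcases Nat.lt_or_ge u v with h | h
      · exact absurd huv (Nat.ne_of_lt (hmono u v h (hTlt v hv)))
      · have : v < u := by omega
        exact absurd huv.symm (Nat.ne_of_lt (hmono v u this (hTlt u hu)))
    · by_cases hT : T.Nonempty
      · refine ⟨e (T.min' hT), ?_⟩
        intro A hA hAcard
        have hAne : A.Nonempty := Finset.card_pos.1 (by omega)
        set v0 := A.min' hAne with hv0
        have hv0A : v0 ∈ A := A.min'_mem hAne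
        obtain ⟨i0, hi0T, hi0⟩ := Finset.mem_image.1 (hA hv0A)
        have hi0t : i0 < t := hTlt i0 hi0T
        have hkey : ∀ b ∈ A.erase v0, ∃ j, i0 < j ∧ j < t ∧ b = a j := by
          intro b hb
          have hbA : b ∈ A := Finset.mem_of_mem_erase hb
          obtain ⟨j, hjT, hj⟩ := Finset.mem_image.1 (hA hbA)
          have hjt : j < t := hTlt j hjT
          have hbne : b ≠ v0 := (Finset.mem_erase.1 hb).1
          have hble : v0 ≤ b := A.min'_le _ hbA
          have halt : a i0 < a j := by
            rw [hj, hi0]; exact lt_of_le_of_ne hble (Ne.symm hbne)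
          have hij : i0 < j := by
            rcases lt_trichotomy j i0 with h | h | h
            · exact absurd (hmono j i0 h hi0t) (by omega)
            · rw [h] at halt; exact absurd halt (lt_irrefl _)
            · exact h
          exact ⟨j, hij, hjt, hj.symm⟩
        have := hcond i0 hi0t (A.erase v0)
          (by rw [Finset.card_erase_of_mem hv0A, hAcard]; omega) hkey
        rw [hi0, Finset.insert_erase hv0A] at this
        rw [this]
        exact hTconst i0 hi0T (T.min' hT) (T.min'_mem hT)
      · refine ⟨Classical.arbitrary κ, fun A hA hAcard => absurd hAcard ?_⟩
        have : T = ∅ := Finset.not_nonempty_iff_eq_empty.1 hT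
        have : A = ∅ := Finset.subset_empty.1 (by simpa [this] using hA)
        simp [this]

lemma polarized (k : ℕ) : ∀ (n : ℕ) (κ : Type) [Fintype κ] [Nonempty κ],
    ∃ S : List ℕ → ℕ, (∀ s, 1 ≤ S s) ∧
      ∀ m : ℕ → ℕ, (∀ j, 1 ≤ m j) →
      ∀ c : ℕ → Finset ℕ → (ℕ → ℕ) → κ, ∀ g : (ℕ → ℕ) → κ,
        ∃ H : ℕ → Finset ℕ,
          (∀ j, j ≤ n → H j ⊆ Finset.range (S ((List.range (j + 1)).map m)) ∧
            (H j).card = m j) ∧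
          (∀ l, l ≤ n → ∃ ε : κ, ∀ A : Finset ℕ, A ⊆ H l → A.card = k →
            ∀ x : ℕ → ℕ, (∀ j, j ≤ n → j ≠ l → x j ∈ H j) →
              (∀ j, n < j ∨ j = l → x j = 0) → c l A x = ε) ∧
          (∃ ε : κ, ∀ x : ℕ → ℕ, (∀ j, j ≤ n → x j ∈ H j) →
            (∀ j, n < j → x j = 0) → g x = ε) := by
  intro n
  induction n with
  | zero =>
    intro κ _ _
    refine ⟨fun s => max 1 (Classical.choose
      (myRamsey κ k (Fintype.card κ * s.getD 0 0 + 1))), fun s => le_max_left _ _, ?_⟩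
    intro m hm c g
    have hsd : ((List.range (0 + 1)).map m).getD 0 0 = m 0 := by simp
    obtain ⟨Z, hZsub, hZcard, ε0, hZhom⟩ :=
      Classical.choose_spec
        (myRamsey κ k (Fintype.card κ * ((List.range (0 + 1)).map m).getD 0 0 + 1))
        (Finset.range (max 1 (Classical.choose
          (myRamsey κ k (Fintype.card κ * ((List.range (0 + 1)).map m).getD 0 0 + 1)))))
        (by rw [Finset.card_range]; exact le_max_right _ _)
        (fun A => c 0 A (fun _ => 0))
    obtain ⟨H0, hH0Z, hH0card, hH0const⟩ := myPigeon κ Z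
      (fun v => g (fun j => if j = 0 then v else 0)) (m 0)
      (by rw [hZcard, hsd]; omega)
    refine ⟨fun _ => H0, ?_, ?_, ?_⟩
    · intro j hj
      have hj0 : j = 0 := by omega
      subst hj0
      exact ⟨hH0Z.trans hZsub, hH0card⟩
    · intro l hl
      have hl0 : l = 0 := by omega
      subst hl0
      refine ⟨ε0, fun A hA hAcard x hx hx0 => ?_⟩
      have hx' : x = fun _ => 0 := funext fun j => hx0 j (by omega)
      rw [hx']
      exact hZhom A (hA.trans hH0Z) hAcard
    · have hne : H0.Nonempty := Finset.card_pos.1 (by rw [hH0card]; exact hm 0)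
      refine ⟨g (fun j => if j = 0 then H0.min' hne else 0), fun x hx hx0 => ?_⟩
      have hgx : g x = (fun v => g (fun j => if j = 0 then v else 0)) (x 0) := by
        congr 1
        funext j
        by_cases hj : j = 0
        · subst hj; simp
        · simp only [if_neg hj]
          exact hx0 j (by omega)
      rw [hgx]
      exact hH0const (x 0) (hx 0 le_rfl) _ (H0.min'_mem hne)
  | succ n IH =>
    intro κ _ _
    obtain ⟨S', hS'pos, hS'⟩ := IH (κ × κ)
    classical
    set Bof : List ℕ → ℕ :=
      fun s => 1 + ((List.range s.length).map (fun j => S' (s.take (j + 1)))).sum with hBof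
    have hBpos : ∀ s, 0 < Bof s := fun s => by simp only [hBof]; omega
    set M₁ : List ℕ → ℕ := fun s =>
      Fintype.card (((Fin (n + 1) × Finset (Fin (Bof s)) × (Fin (n + 1) → Fin (Bof s))) → κ) ×
        ((Fin (n + 1) → Fin (Bof s)) → κ)) * s.getD (n + 1) 0 + 1 with hM₁
    set Ntop : List ℕ → ℕ := fun s =>
      max 1 (Classical.choose (myRamsey ((Fin (n + 1) → Fin (Bof s)) → κ) k (M₁ s))) with hNtop
    refine ⟨fun s => if s.length = n + 2 then Ntop s else S' s, ?_, ?_⟩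
    · intro s
      dsimp only
      by_cases h : s.length = n + 2
      · rw [if_pos h]; exact le_max_left _ _
      · rw [if_neg h]; exact hS'pos s
    intro m hm c g
    set s := (List.range (n + 1 + 1)).map m with hs
    have hslen : s.length = n + 2 := by simp [hs]
    have hsget : s.getD (n + 1) 0 = m (n + 1) := by
      have hlen : n + 1 < s.length := by omega
      rw [List.getD_eq_getElem s 0 hlen]
      simp [hs]
    have htake : ∀ j, j ≤ n + 1 → s.take (j + 1) = (List.range (j + 1)).map m := by
      intro j hj
      have hmin : min (j + 1) (n + 1 + 1) = j + 1 := by omega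
      rw [hs, ← List.map_take, List.take_range, hmin]
    have hBle : ∀ j, j ≤ n → S' ((List.range (j + 1)).map m) ≤ Bof s := by
      intro j hj
      have hmem : S' ((List.range (j + 1)).map m) ∈
          (List.range s.length).map (fun j => S' (s.take (j + 1))) := by
        refine List.mem_map.2 ⟨j, List.mem_range.2 (by omega), ?_⟩
        rw [htake j (by omega)]
      have := List.single_le_sum (fun x _ => Nat.zero_le x) _ hmem
      simp only [hBof]
      omega
    obtain ⟨Z, hZsub, hZcard, F, hF⟩ :=
      Classical.choose_spec (myRamsey ((Fin (n + 1) → Fin (Bof s)) → κ) k (M₁ s))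
        (Finset.range (Ntop s))
        (by rw [Finset.card_range, hNtop]; exact le_max_right _ _)
        (fun A => fun y => c (n + 1) A (fun j => if h : j < n + 1 then (y ⟨j, h⟩ : ℕ) else 0))
    set Φ : ℕ → (((Fin (n + 1) × Finset (Fin (Bof s)) × (Fin (n + 1) → Fin (Bof s))) → κ) ×
        ((Fin (n + 1) → Fin (Bof s)) → κ)) := fun v =>
      (fun p => c p.1 (p.2.1.image Fin.val)
        (fun j => if j = (p.1 : ℕ) then 0 else if h : j < n + 1 then (p.2.2 ⟨j, h⟩ : ℕ)
          else if j = n + 1 then v else 0),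
       fun y => g (fun j => if h : j < n + 1 then (y ⟨j, h⟩ : ℕ)
          else if j = n + 1 then v else 0)) with hΦ
    obtain ⟨Y, hYZ, hYcard, hYconst⟩ := myPigeon _ Z Φ (m (n + 1))
      (by rw [hZcard, hM₁]; simp only []; rw [hsget]; omega)
    have hYne : Y.Nonempty := Finset.card_pos.1 (by rw [hYcard]; exact hm (n + 1))
    set v₀ := Y.min' hYne with hv₀def
    have hv₀ : v₀ ∈ Y := Y.min'_mem hYne
    set enc : (ℕ → ℕ) → (Fin (n + 1) → Fin (Bof s)) :=
      fun x j => ⟨x j % Bof s, Nat.mod_lt _ (hBpos s)⟩ with henc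
    obtain ⟨H, hH, hHl, hHg⟩ := hS' m hm
      (fun l A x => (c l A (fun j => if j = n + 1 then v₀ else x j),
                     c l A (fun j => if j = n + 1 then v₀ else x j)))
      (fun x => (g (fun j => if j = n + 1 then v₀ else x j), F (enc x)))
    have hxltB : ∀ j, j ≤ n → ∀ v ∈ H j, v < Bof s := by
      intro j hj v hv
      have := (hH j hj).1 hv
      rw [Finset.mem_range] at this
      exact lt_of_lt_of_le this (hBle j hj)
    refine ⟨fun j => if j = n + 1 then Y else H j, ?_, ?_, ?_⟩
    · intro j hj
      dsimp only
      by_cases hj1 : j = n + 1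
      · subst hj1
        rw [if_pos rfl]
        constructor
        · have hlen : ((List.range (n + 1 + 1)).map m).length = n + 2 := by simp
          rw [if_pos hlen]
          exact (hYZ.trans hZsub)
        · exact hYcard
      · rw [if_neg hj1]
        have hlen : ((List.range (j + 1)).map m).length ≠ n + 2 := by
          simp only [List.length_map, List.length_range]; omega
        rw [if_neg hlen]
        exact hH j (by omega)
    · intro l hl
      by_cases hl1 : l = n + 1
      · -- top slot
        subst hl1
        obtain ⟨εg, hεg⟩ := hHg
        refine ⟨εg.2, ?_⟩
        intro A hA hAk x hx hx0
        replace hA : A ⊆ Y := by simpa using hA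
        have h2 := hF A (hA.trans hYZ) hAk
        have h3 := congrFun h2 (enc x)
        have hxH : ∀ j, j ≤ n → x j ∈ H j := by
          intro j hj
          have h := hx j (by omega) (by omega)
          simpa [show j ≠ n + 1 by omega] using h
        have h4 : (fun j => if h : j < n + 1 then ((enc x ⟨j, h⟩ : Fin (Bof s)) : ℕ) else 0)
            = x := by
          funext j
          by_cases hj : j < n + 1
          · rw [dif_pos hj]
            exact Nat.mod_eq_of_lt (hxltB j (by omega) _ (hxH j (by omega)))
          · rw [dif_neg hj]
            exact (hx0 j (by omega)).symm
        rw [h4] at h3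
        have h5 := hεg x (fun j hj => hxH j hj) (fun j hj => hx0 j (by omega))
        rw [h3]
        exact congrArg Prod.snd h5
      · -- lower slot
        have hln : l ≤ n := by omega
        obtain ⟨ε2, hε2⟩ := hHl l hln
        refine ⟨ε2.1, ?_⟩
        intro A hA hAk x hx hx0
        replace hA : A ⊆ H l := by simpa [hl1] using hA
        have hAlt : ∀ a ∈ A, a < Bof s := fun a ha => hxltB l hln a (hA ha)
        have hA'img : (A.attachFin hAlt).image Fin.val = A := by
          ext b
          simp only [Finset.mem_image]
          constructor
          · rintro ⟨⟨a, halt⟩, hmem, rfl⟩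
            exact (Finset.mem_attachFin hAlt).1 hmem
          · intro hb
            exact ⟨⟨b, hAlt b hb⟩, (Finset.mem_attachFin hAlt).2 hb, rfl⟩
        have hxH : ∀ j, j ≤ n → j ≠ l → x j ∈ H j := by
          intro j hj hjl
          have h := hx j (by omega) (by omega)
          simpa [show j ≠ n + 1 by omega] using h
        have key : ∀ v, (Φ v).1 (⟨l, by omega⟩, A.attachFin hAlt, enc x) =
            c l A (fun j => if j = n + 1 then v else if j = l then 0 else x j) := by
          intro v
          rw [hΦ]
          dsimp only
          rw [hA'img]
          congr 1
          funext j
          by_cases hjl : j = l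
          · subst hjl
            rw [if_pos rfl, if_neg (by omega : j ≠ n + 1), if_pos rfl]
          · rw [if_neg (by exact_mod_cast hjl)]
            by_cases hjn : j < n + 1
            · rw [dif_pos hjn, if_neg (by omega : j ≠ n + 1), if_neg hjl]
              exact Nat.mod_eq_of_lt (hxltB j (by omega) _ (hxH j (by omega) hjl))
            · rw [dif_neg hjn]
              by_cases hj1 : j = n + 1
              · rw [if_pos hj1, if_pos hj1]
              · rw [if_neg hj1, if_neg hj1, if_neg hjl]
                exact (hx0 j (by omega)).symm
        have hx1 : x (n + 1) ∈ Y := by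
          have h := hx (n + 1) le_rfl (by omega)
          simpa using h
        have e1 : c l A x =
            (Φ (x (n + 1))).1 (⟨l, by omega⟩, A.attachFin hAlt, enc x) := by
          rw [key (x (n + 1))]
          congr 1
          funext j
          by_cases hj1 : j = n + 1
          · subst hj1; rw [if_pos rfl]
          · rw [if_neg hj1]
            by_cases hjl : j = l
            · rw [if_pos hjl]
              exact hx0 j (Or.inr hjl)
            · rw [if_neg hjl]
        have e2 := congrArg Prod.fst
          (hYconst (x (n + 1)) hx1 v₀ hv₀)
        have e3 : (Φ v₀).1 (⟨l, by omega⟩, A.attachFin hAlt, enc x) =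
            c l A (fun j => if j = n + 1 then v₀
              else (fun j' => if j' = n + 1 then 0 else x j') j) := by
          rw [key v₀]
          congr 1
          funext j
          by_cases hj1 : j = n + 1
          · simp only [if_pos hj1]
          · simp only [if_neg hj1]
            by_cases hjl : j = l
            · simp only [if_pos hjl]
              exact (hx0 j (Or.inr hjl)).symm
            · simp only [if_neg hjl]
        have h5 := hε2 A hA hAk (fun j' => if j' = n + 1 then 0 else x j')
          (fun j hj hjl => by
            simp only [if_neg (by omega : j ≠ n + 1)]
            exact hxH j hj hjl)
          (fun j hj => by
            rcases hj with hj | hj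
            · by_cases hj1 : j = n + 1
              · simp only [if_pos hj1]
              · simp only [if_neg hj1]
                exact hx0 j (Or.inl (by omega))
            · simp only [if_neg (show j ≠ n + 1 by omega)]
              exact hx0 j (Or.inr hj))
        have h6 := congrArg Prod.fst h5
        rw [e1, congrFun e2 _, e3]
        exact h6
    · -- slotless g
      obtain ⟨εg, hεg⟩ := hHg
      refine ⟨εg.1, ?_⟩
      intro x hx hx0
      have hxH : ∀ j, j ≤ n → x j ∈ H j := by
        intro j hj
        have h := hx j (by omega)
        simpa [show j ≠ n + 1 by omega] using h
      have hx1 : x (n + 1) ∈ Y := by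
        have h := hx (n + 1) le_rfl
        simpa using h
      have keyg : ∀ v, (Φ v).2 (enc x) =
          g (fun j => if j = n + 1 then v else if j ≤ n then x j else 0) := by
        intro v
        rw [hΦ]
        dsimp only
        congr 1
        funext j
        by_cases hjn : j < n + 1
        · rw [dif_pos hjn, if_neg (by omega : j ≠ n + 1), if_pos (by omega : j ≤ n)]
          exact Nat.mod_eq_of_lt (hxltB j (by omega) _ (hxH j (by omega)))
        · rw [dif_neg hjn]
          by_cases hj1 : j = n + 1
          · rw [if_pos hj1, if_pos hj1]
          · rw [if_neg hj1, if_neg hj1, if_neg (by omega : ¬ j ≤ n)]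
      have e1 : g x = (Φ (x (n + 1))).2 (enc x) := by
        rw [keyg (x (n + 1))]
        congr 1
        funext j
        by_cases hj1 : j = n + 1
        · subst hj1; rw [if_pos rfl]
        · rw [if_neg hj1]
          by_cases hjn : j ≤ n
          · rw [if_pos hjn]
          · rw [if_neg hjn]
            exact hx0 j (by omega)
      have e2 := congrArg Prod.snd (hYconst (x (n + 1)) hx1 v₀ hv₀)
      have e3 : (Φ v₀).2 (enc x) =
          g (fun j => if j = n + 1 then v₀
            else (fun j' => if j' ≤ n then x j' else 0) j) := keyg v₀
      have h5 := hεg (fun j' => if j' ≤ n then x j' else 0)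
        (fun j hj => by simp only [if_pos hj]; exact hxH j hj)
        (fun j hj => by simp only [if_neg (by omega : ¬ j ≤ n)])
      have h6 := congrArg Prod.fst h5
      rw [e1, congrFun e2 _, e3]
      exact h6

/- STATEMENT 3 (finite version with moving index of the k-sized subsets):
Given k ≥ 1 and n < ω, there is S_{k,n} : [ℕ⁺]^{≤n+1} → ℕ⁺ such that for each sequence
(m_j)_{j≤n} of positive integers and each coloring
c : ⋃_{l≤n} ([S_{k,n}(m_0,…,m_l)]^k × ∏_{j∈(n+1)∖{l}} S_{k,n}(m_0,…,m_j)) → 2,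
there are H_j ⊆ S_{k,n}(m_0,…,m_j) with |H_j| = m_j (j ≤ n) such that for each l ≤ n,
c is constant on [H_l]^k × ∏_{j∈(n+1)∖{l}} H_j (the constant may depend on l).

A point is encoded as (l, A, x) where A is the k-element subset at coordinate l and
x : ℕ → ℕ gives the remaining coordinates j ∈ (n+1) ∖ {l}, with the canonical
convention x j = 0 for the irrelevant coordinates (j = l or j > n). -/
theorem stmt3 (k : ℕ) (hk : 1 ≤ k) (n : ℕ) :
    ∃ S : List ℕ → ℕ, (∀ s, 1 ≤ S s) ∧
      ∀ m : ℕ → ℕ, (∀ j, 1 ≤ m j) →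
      ∀ c : ℕ → Finset ℕ → (ℕ → ℕ) → Bool,
        ∃ H : ℕ → Finset ℕ,
          (∀ j, j ≤ n → H j ⊆ Finset.range (S ((List.range (j + 1)).map m)) ∧
            (H j).card = m j) ∧
          ∀ l, l ≤ n → ∃ ε : Bool,
            ∀ A : Finset ℕ, A ⊆ H l → A.card = k →
            ∀ x : ℕ → ℕ, (∀ j, j ≤ n → j ≠ l → x j ∈ H j) →
              (∀ j, n < j ∨ j = l → x j = 0) →
              c l A x = ε := by
  obtain ⟨S, hSpos, hS⟩ := polarized k n Bool
  refine ⟨S, hSpos, ?_⟩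
  intro m hm c
  obtain ⟨H, hH, hHl, -⟩ := hS m hm c (fun _ => true)
  exact ⟨H, hH, hHl⟩
end

section
/- Let R_k : [ℕ⁺]^{<ω} → ℕ⁺ be a function as in the generalized product tree theorem (i.e., for each sequence (m_j) of positive integers and each 2-coloring of ⋃_{n<ω} ([R_k(m_0)]^k × ∏_{j=1}^n R_k(m_0, …, m_j)), there are H_j ⊆ R_k(m_0, …, m_j) with |H_j| = m_j on which the coloring is constant on [H_0]^k × ∏_{j=1}^n H_j for infinitely many n). Let L, N be infinite subsets of ω whose increasing enumerations satisfy l_0 ≤ n_0 < l_1 ≤ n_1 < ⋯. Let k ≥ 1, m_0 ≥ 1, and let K_j (j ≥ l_0) be nonempty sets with |K_{l_0}| = R_k(m_0), |K_{l_i}| ≥ i for each i ≥ 1, and |K_j| = 1 for each j ∈ (l_0, ω) ∖ L. Then for each coloring c : ⋃_{n∈N} ([K_{l_0}]^k × ∏_{j∈(l_0,n]} K_j) → 2 and each r < ω, there are infinite L′ ⊆ L and N′ ⊆ N with increasing enumerations satisfying l′_0 = l_0 ≤ n′_0 < l′_1 ≤ n′_1 < ⋯, and there are H_j ⊆ K_j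 such that |H_{l_0}| = m_0, |H_{l′_i}| = r + i for each i ≥ 1, |H_j| = 1 for each j ∈ (l_0, ω) ∖ L′, and c is constant on ⋃_{n∈N′} ([H_{l_0}]^k × ∏_{j∈(l_0,n]} H_j). -/
/- STATEMENT 7 (Corollary `applform`):
R_k is assumed to satisfy the generalized product tree theorem (the conclusion of
Theorem `genprodtree`, hypothesis hR below).  L, N are infinite subsets of ω with
interleaved increasing enumerations l_0 ≤ n_0 < l_1 ≤ n_1 < ⋯; k ≥ 1, m_0 ≥ 1, and the
K_j (j ≥ l_0) are nonempty sets with |K_{l_0}| = R_k(m_0), |K_{l_i}| ≥ i (i ≥ 1), and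
|K_j| = 1 for j ∈ (l_0, ω) ∖ L.  Then for each coloring
c : ⋃_{n∈N} ([K_{l_0}]^k × ∏_{j∈(l_0,n]} K_j) → 2 and each r < ω there are infinite
L′ ⊆ L, N′ ⊆ N with l′_0 = l_0 ≤ n′_0 < l′_1 ≤ n′_1 < ⋯ and H_j ⊆ K_j with
|H_{l_0}| = m_0, |H_{l′_i}| = r + i (i ≥ 1), |H_j| = 1 for j ∈ (l_0, ω) ∖ L′, on which
c is constant on ⋃_{n∈N′} ([H_{l_0}]^k × ∏_{j∈(l_0,n]} H_j).

A point of [K_{l_0}]^k × ∏_{j∈(l_0,n]} K_j is encoded as (n, A, x), A the k-element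
subset at coordinate l_0 and x : ℕ → ℕ the coordinates j ∈ (l_0, n], with the
canonical convention x j = 0 for irrelevant coordinates (j ≤ l_0 or j > n). -/
theorem stmt7 (k : ℕ) (hk : 1 ≤ k) (R : List ℕ → ℕ)
    (hR : ∀ m : ℕ → ℕ, (∀ j, 1 ≤ m j) →
      ∀ c : ℕ → Finset ℕ → (ℕ → ℕ) → Bool,
        ∃ H : ℕ → Finset ℕ,
          (∀ j, H j ⊆ Finset.range (R ((List.range (j + 1)).map m))) ∧
          (∀ j, (H j).card = m j) ∧
          {n : ℕ | ∃ ε : Bool, ∀ A : Finset ℕ, A ⊆ H 0 → A.card = k →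
              ∀ x : ℕ → ℕ, (∀ j, 1 ≤ j → j ≤ n → x j ∈ H j) →
                x 0 = 0 → (∀ j, n < j → x j = 0) →
                c n A x = ε}.Infinite)
    (l n : ℕ → ℕ) (hl : StrictMono l) (hn : StrictMono n)
    (hln : ∀ i, l i ≤ n i) (hnl : ∀ i, n i < l (i + 1))
    (m0 : ℕ) (hm0 : 1 ≤ m0)
    (K : ℕ → Finset ℕ) (hKne : ∀ j, l 0 ≤ j → (K j).Nonempty)
    (hK0 : (K (l 0)).card = R [m0])
    (hKl : ∀ i, 1 ≤ i → i ≤ (K (l i)).card)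
    (hK1 : ∀ j, l 0 < j → j ∉ Set.range l → (K j).card = 1)
    (c : ℕ → Finset ℕ → (ℕ → ℕ) → Bool) (r : ℕ) :
    ∃ l' n' : ℕ → ℕ, StrictMono l' ∧ StrictMono n' ∧
      Set.range l' ⊆ Set.range l ∧ Set.range n' ⊆ Set.range n ∧
      l' 0 = l 0 ∧ (∀ i, l' i ≤ n' i) ∧ (∀ i, n' i < l' (i + 1)) ∧
      ∃ H : ℕ → Finset ℕ, (∀ j, l 0 ≤ j → H j ⊆ K j) ∧
        (H (l 0)).card = m0 ∧
        (∀ i, 1 ≤ i → (H (l' i)).card = r + i) ∧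
        (∀ j, l 0 < j → j ∉ Set.range l' → (H j).card = 1) ∧
        ∃ ε : Bool, ∀ p, ∀ A : Finset ℕ, A ⊆ H (l 0) → A.card = k →
          ∀ x : ℕ → ℕ, (∀ j, l 0 < j → j ≤ n' p → x j ∈ H j) →
            (∀ j, j ≤ l 0 ∨ n' p < j → x j = 0) →
            c (n' p) A x = ε := by

  classical
  -- the target cardinalities for the product tree theorem
  set m : ℕ → ℕ := fun i => if i = 0 then m0 else r + i with hm_def
  have hm1 : ∀ j, 1 ≤ m j := by
    intro j
    by_cases h : j = 0 <;> simp [hm_def, h] <;> omega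
  -- a fast-growing selector g
  let g : ℕ → ℕ := fun i =>
    Nat.rec 0 (fun i gi => max (gi + 1) (R ((List.range (i + 2)).map m))) i
  have hg0 : g 0 = 0 := rfl
  have hgsucc : ∀ i, g (i + 1) = max (g i + 1) (R ((List.range (i + 2)).map m)) :=
    fun i => rfl
  have hg_mono : StrictMono g := by
    apply strictMono_nat_of_lt_succ
    intro i
    rw [hgsucc]
    omega
  have hg_le : ∀ i, i ≤ g i := fun i => hg_mono.le_apply
  have hcardAll : ∀ i, R ((List.range (i + 1)).map m) ≤ (K (l (g i))).card := by
    intro i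
    rcases i with _ | i
    · rw [hg0, hK0]
      have hmm : (List.range (0 + 1)).map m = [m0] := by
        simp [List.range_succ, hm_def]
      rw [hmm]
    · have h1 : R ((List.range (i + 2)).map m) ≤ g (i + 1) := by
        rw [hgsucc]; omega
      have h2 : 1 ≤ g (i + 1) := by have := hg_le (i + 1); omega
      exact le_trans h1 (hKl _ h2)
  -- coding maps: e j enumerates K j, d j is its inverse
  let e : ℕ → ℕ → ℕ := fun j a => ((K j).sort (· ≤ ·)).getD a 0
  let d : ℕ → ℕ → ℕ := fun j b => ((K j).sort (· ≤ ·)).idxOf b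
  have he_mem : ∀ j a, a < (K j).card → e j a ∈ K j := by
    intro j a ha
    have hlen : a < ((K j).sort (· ≤ ·)).length := by rw [Finset.length_sort]; exact ha
    have : e j a = ((K j).sort (· ≤ ·))[a] := List.getD_eq_getElem _ 0 hlen
    rw [this, ← Finset.mem_sort (α := ℕ) (· ≤ ·)]
    exact List.getElem_mem hlen
  have hde : ∀ j a, a < (K j).card → d j (e j a) = a := by
    intro j a ha
    have hlen : a < ((K j).sort (· ≤ ·)).length := by rw [Finset.length_sort]; exact ha
    have he : e j a = ((K j).sort (· ≤ ·))[a] := List.getD_eq_getElem _ 0 hlen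
    show ((K j).sort (· ≤ ·)).idxOf (e j a) = a
    rw [he]
    exact List.Nodup.idxOf_getElem (Finset.sort_nodup _ _) a hlen
  have hed : ∀ j b, b ∈ K j → e j (d j b) = b := by
    intro j b hb
    have hmem : b ∈ (K j).sort (· ≤ ·) := (Finset.mem_sort _).mpr hb
    have hlt : ((K j).sort (· ≤ ·)).idxOf b < ((K j).sort (· ≤ ·)).length :=
      List.idxOf_lt_length_iff.mpr hmem
    show ((K j).sort (· ≤ ·)).getD (((K j).sort (· ≤ ·)).idxOf b) 0 = b
    rw [List.getD_eq_getElem _ 0 hlt]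
    exact List.getElem_idxOf hlt
  -- default singleton selector
  let s : ℕ → ℕ := fun j => if h : (K j).Nonempty then h.choose else 0
  have hs_mem : ∀ j, l 0 ≤ j → s j ∈ K j := by
    intro j hj
    have h : (K j).Nonempty := hKne j hj
    simp only [s, dif_pos h]
    exact h.choose_spec
  -- the pulled-back coloring
  let c' : ℕ → Finset ℕ → (ℕ → ℕ) → Bool := fun t A y =>
    c (n (g t)) (A.image (e (l 0)))
      (fun j => if l 0 < j ∧ j ≤ n (g t) then
          (if h : ∃ i, 1 ≤ i ∧ l (g i) = j then e j (y (Classical.choose h)) else s j)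
        else 0)
  obtain ⟨HR, hHR_sub, hHR_card, hHR_inf⟩ := hR m hm1 c'
  -- e is injective on initial segments of card
  have he_injOn : ∀ i, Set.InjOn (e (l (g i))) ↑(HR i) := by
    intro i a ha b hb hab
    have ha' : a < (K (l (g i))).card := by
      have := hHR_sub i ha
      have := Finset.mem_range.mp this
      exact lt_of_lt_of_le this (hcardAll i)
    have hb' : b < (K (l (g i))).card := by
      have := hHR_sub i hb
      have := Finset.mem_range.mp this
      exact lt_of_lt_of_le this (hcardAll i)
    have := congrArg (d (l (g i))) hab
    rwa [hde _ _ ha', hde _ _ hb'] at this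
  have hHR_lt : ∀ i a, a ∈ HR i → a < (K (l (g i))).card := by
    intro i a ha
    exact lt_of_lt_of_le (Finset.mem_range.mp (hHR_sub i ha)) (hcardAll i)
  -- extract a single color ε from the infinite set
  set Φ : ℕ → Bool → Prop := fun t ε => ∀ A : Finset ℕ, A ⊆ HR 0 → A.card = k →
      ∀ x : ℕ → ℕ, (∀ j, 1 ≤ j → j ≤ t → x j ∈ HR j) →
        x 0 = 0 → (∀ j, t < j → x j = 0) → c' t A x = ε with hΦ_def
  have hsplit : {t : ℕ | ∃ ε, Φ t ε} ⊆ {t | Φ t true} ∪ {t | Φ t false} := by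
    rintro t ⟨ε, hε⟩
    cases ε
    · exact Or.inr hε
    · exact Or.inl hε
  have : ({t | Φ t true} ∪ {t | Φ t false}).Infinite := hHR_inf.mono hsplit
  obtain hεinf : ∃ ε : Bool, {t | Φ t ε}.Infinite := by
    rcases Set.infinite_union.mp this with h | h
    · exact ⟨true, h⟩
    · exact ⟨false, h⟩
  obtain ⟨ε, hSinf⟩ := hεinf
  -- σ enumerates the good stages
  let σ : ℕ → ℕ := Nat.nth (fun t => Φ t ε)
  have hσ_mono : StrictMono σ := Nat.nth_strictMono hSinf
  have hσ_mem : ∀ p, Φ (σ p) ε := Nat.nth_mem_of_infinite hSinf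
  have hσ_le : ∀ p, p ≤ σ p := fun p => hσ_mono.le_apply
  -- definition of l' and n'
  let l' : ℕ → ℕ := fun p => if p = 0 then l 0 else l (g (σ (p - 1) + 1))
  let n' : ℕ → ℕ := fun p => n (g (σ p))
  have hl'0 : l' 0 = l 0 := rfl
  have hl'succ : ∀ p, l' (p + 1) = l (g (σ p + 1)) := by intro p; simp [l']
  have hl'_mono : StrictMono l' := by
    apply strictMono_nat_of_lt_succ
    intro p
    rcases p with _ | p
    · rw [hl'0, hl'succ]
      apply hl
      have := hg_le (σ 0 + 1)
      omega
    · rw [hl'succ, hl'succ]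
      exact hl (hg_mono (Nat.succ_lt_succ (hσ_mono (Nat.lt_succ_self p))))
  have hn'_mono : StrictMono n' := by
    intro a b hab
    exact hn (hg_mono (hσ_mono hab))
  have hl'n' : ∀ p, l' p ≤ n' p := by
    intro p
    rcases p with _ | p
    · rw [hl'0]
      calc l 0 = l (g 0) := by rw [hg0]
        _ ≤ l (g (σ 0)) := hl.monotone (hg_mono.monotone (Nat.zero_le _))
        _ ≤ n (g (σ 0)) := hln _
    · rw [hl'succ]
      have h1 : σ p + 1 ≤ σ (p + 1) := hσ_mono (Nat.lt_succ_self p)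
      calc l (g (σ p + 1)) ≤ l (g (σ (p + 1))) := hl.monotone (hg_mono.monotone h1)
        _ ≤ n (g (σ (p + 1))) := hln _
  have hn'l' : ∀ p, n' p < l' (p + 1) := by
    intro p
    rw [hl'succ]
    calc n (g (σ p)) < l (g (σ p) + 1) := hnl _
      _ ≤ l (g (σ p + 1)) := hl.monotone (hg_mono (Nat.lt_succ_self _))
  -- injectivity of l ∘ g
  have hlg_inj : Function.Injective (fun i => l (g i)) := (hl.comp hg_mono).injective
  -- the pushed-forward sets with correct cardinalities
  have hHcard : ∀ i, ((HR i).image (e (l (g i)))).card = m i := by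
    intro i
    rw [Finset.card_image_of_injOn (he_injOn i), hHR_card]
  -- target cardinality at skipped / kept coordinates
  have hT : ∀ i, 1 ≤ i → ∃ T : Finset ℕ, T ⊆ (HR i).image (e (l (g i))) ∧
      T.card = (if h : ∃ q, σ q + 1 = i then r + (Classical.choose h + 1) else 1) := by
    intro i hi
    have hcard : ((HR i).image (e (l (g i)))).card = r + i := by
      rw [hHcard]; simp [hm_def]; omega
    by_cases h : ∃ q, σ q + 1 = i
    · have hq := Classical.choose_spec h
      have hqle : Classical.choose h + 1 ≤ i := by
        have := hσ_le (Classical.choose h); omega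
      have : r + (Classical.choose h + 1) ≤ ((HR i).image (e (l (g i)))).card := by
        rw [hcard]; omega
      obtain ⟨T, hT1, hT2⟩ := Finset.exists_subset_card_eq this
      exact ⟨T, hT1, by rw [hT2, dif_pos h]⟩
    · have : 1 ≤ ((HR i).image (e (l (g i)))).card := by rw [hcard]; omega
      obtain ⟨T, hT1, hT2⟩ := Finset.exists_subset_card_eq this
      exact ⟨T, hT1, by rw [hT2, dif_neg h]⟩
  choose T hT_sub hT_card using hT
  -- the final sets H
  let H : ℕ → Finset ℕ := fun j =>
    if j = l 0 then (HR 0).image (e (l 0))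
    else if h : ∃ i, 1 ≤ i ∧ l (g i) = j then T (Classical.choose h) (Classical.choose_spec h).1
    else if l 0 < j then {s j}
    else ∅
  -- helper: value of H at l (g i), i ≥ 1
  have hH_at : ∀ i (hi : 1 ≤ i), H (l (g i)) = T i hi := by
    intro i hi
    have hne : l (g i) ≠ l 0 := by
      intro hcon
      have : g i = 0 := hl.injective hcon
      have := hg_le i
      omega
    have hex : ∃ i', 1 ≤ i' ∧ l (g i') = l (g i) := ⟨i, hi, rfl⟩
    have hspec := Classical.choose_spec hex
    have heq : Classical.choose hex = i := hlg_inj hspec.2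
    simp only [H, if_neg hne, dif_pos hex]
    congr 1
  have hH0 : H (l 0) = (HR 0).image (e (l 0)) := by simp [H]
  -- H ⊆ K
  have hH_subK : ∀ j, l 0 ≤ j → H j ⊆ K j := by
    intro j hj
    by_cases h0 : j = l 0
    · subst h0
      rw [hH0]
      intro b hb
      obtain ⟨a, ha, rfl⟩ := Finset.mem_image.mp hb
      exact he_mem _ _ (hHR_lt 0 a ha)
    · by_cases hex : ∃ i, 1 ≤ i ∧ l (g i) = j
      · obtain ⟨i, hi, rfl⟩ := hex
        rw [hH_at i hi]
        intro b hb
        have := hT_sub i hi hb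
        obtain ⟨a, ha, rfl⟩ := Finset.mem_image.mp this
        exact he_mem _ _ (hHR_lt i a ha)
      · have hlt : l 0 < j := lt_of_le_of_ne hj (Ne.symm h0)
        simp only [H, if_neg h0, dif_neg hex, if_pos hlt]
        intro b hb
        rw [Finset.mem_singleton.mp hb]
        exact hs_mem j hj
  -- card at l 0
  have hH0card : (H (l 0)).card = m0 := by
    rw [hH0]
    have h0 : ((HR 0).image (e (l 0))).card = m 0 := hHcard 0
    rw [h0]
    simp [hm_def]
  -- card at l' i for i ≥ 1
  have hHl'card : ∀ i, 1 ≤ i → (H (l' i)).card = r + i := by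
    intro i hi
    obtain ⟨p, rfl⟩ : ∃ p, i = p + 1 := ⟨i - 1, by omega⟩
    rw [hl'succ]
    have h1 : 1 ≤ σ p + 1 := by omega
    rw [hH_at _ h1, hT_card]
    have hex : ∃ q, σ q + 1 = σ p + 1 := ⟨p, rfl⟩
    rw [dif_pos hex]
    have : Classical.choose hex = p := by
      have hspec := Classical.choose_spec hex
      have := hσ_mono.injective (by omega : σ (Classical.choose hex) = σ p)
      exact this
    rw [this]
  -- card 1 off range l'
  have hH1 : ∀ j, l 0 < j → j ∉ Set.range l' → (H j).card = 1 := by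
    intro j hjl hjr
    have h0 : j ≠ l 0 := by omega
    by_cases hex : ∃ i, 1 ≤ i ∧ l (g i) = j
    · obtain ⟨i, hi, rfl⟩ := hex
      rw [hH_at i hi, hT_card]
      rw [dif_neg]
      rintro ⟨q, hq⟩
      apply hjr
      refine ⟨q + 1, ?_⟩
      rw [hl'succ, hq]
    · simp only [H, if_neg h0, dif_neg hex, if_pos hjl]
      exact Finset.card_singleton _
  -- everything together
  refine ⟨l', n', hl'_mono, hn'_mono, ?_, ?_, hl'0, hl'n', hn'l',
      H, hH_subK, hH0card, hHl'card, hH1, ε, ?_⟩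
  · rintro _ ⟨p, rfl⟩
    rcases p with _ | p
    · exact ⟨0, rfl⟩
    · rw [hl'succ]
      exact ⟨g (σ p + 1), rfl⟩
  · rintro _ ⟨p, rfl⟩
    exact ⟨g (σ p), rfl⟩
  -- the constancy
  intro p A hA hAcard x hx hx0
  set t := σ p with ht_def
  have hΦ := hσ_mem p
  -- translate A
  set AR : Finset ℕ := A.image (d (l 0)) with hAR_def
  have hAmem : ∀ b ∈ A, b ∈ (HR 0).image (e (l 0)) := by
    intro b hb
    have := hA hb
    rwa [hH0] at this
  have hAR_sub : AR ⊆ HR 0 := by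
    intro a ha
    obtain ⟨b, hb, rfl⟩ := Finset.mem_image.mp ha
    obtain ⟨a', ha', rfl⟩ := Finset.mem_image.mp (hAmem b hb)
    have hlt0 : a' < (K (l 0)).card := hHR_lt 0 a' ha'
    rw [hde _ _ hlt0]
    exact ha'
  have hARimg : AR.image (e (l 0)) = A := by
    apply Finset.ext
    intro b
    constructor
    · intro hb
      obtain ⟨a, ha, rfl⟩ := Finset.mem_image.mp hb
      obtain ⟨b', hb', rfl⟩ := Finset.mem_image.mp ha
      have hbK : b' ∈ K (l 0) := hH_subK (l 0) le_rfl (hA hb')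
      rwa [hed _ _ hbK]
    · intro hb
      apply Finset.mem_image.mpr
      refine ⟨d (l 0) b, Finset.mem_image.mpr ⟨b, hb, rfl⟩, ?_⟩
      exact hed _ _ (hH_subK (l 0) le_rfl (hA hb))
  have hAR_card : AR.card = k := by
    have h1 : (AR.image (e (l 0))).card ≤ AR.card := Finset.card_image_le
    have h2 : AR.card ≤ A.card := Finset.card_image_le
    rw [hARimg] at h1
    omega
  -- translate x
  set y : ℕ → ℕ := fun i => if 1 ≤ i ∧ i ≤ t then d (l (g i)) (x (l (g i))) else 0
    with hy_def
  have hx_mem : ∀ i, 1 ≤ i → i ≤ t → x (l (g i)) ∈ (HR i).image (e (l (g i))) := by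
    intro i h1 h2
    have hjl : l 0 < l (g i) := by
      apply hl
      have := hg_le i
      omega
    have hjn : l (g i) ≤ n' p := by
      calc l (g i) ≤ l (g t) := hl.monotone (hg_mono.monotone h2)
        _ ≤ n (g t) := hln _
    have := hx _ hjl hjn
    rw [hH_at i h1] at this
    exact hT_sub i h1 this
  have hy_mem : ∀ i, 1 ≤ i → i ≤ t → y i ∈ HR i := by
    intro i h1 h2
    simp only [hy_def, if_pos (And.intro h1 h2)]
    obtain ⟨a, ha, heq⟩ := Finset.mem_image.mp (hx_mem i h1 h2)
    rw [← heq, hde _ _ (hHR_lt i a ha)]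
    exact ha
  have hkey := hΦ AR hAR_sub hAR_card y hy_mem (by simp [hy_def])
    (by intro j hj; simp only [hy_def]; rw [if_neg]; omega)
  -- unfold c' and show equality of arguments
  have hfun : (fun j => if l 0 < j ∧ j ≤ n (g t) then
      (if h : ∃ i, 1 ≤ i ∧ l (g i) = j then e j (y (Classical.choose h)) else s j)
      else 0) = x := by
    funext j
    by_cases hcond : l 0 < j ∧ j ≤ n (g t)
    · rw [if_pos hcond]
      have hxj : x j ∈ H j := hx j hcond.1 hcond.2
      by_cases hex : ∃ i, 1 ≤ i ∧ l (g i) = j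
      · rw [dif_pos hex]
        have hspec := Classical.choose_spec hex
        set i := Classical.choose hex with hi_def
        have hjle : i ≤ t := by
          by_contra hcon
          push_neg at hcon
          have hstep : t + 1 ≤ i := hcon
          have : l (g (t + 1)) ≤ l (g i) :=
            hl.monotone (hg_mono.monotone hstep)
          have h2 : n (g t) < l (g t + 1) := hnl _
          have h3 : l (g t + 1) ≤ l (g (t + 1)) := hl.monotone (hg_mono (Nat.lt_succ_self _))
          rw [hspec.2] at this
          omega
        have hy_val : y i = d (l (g i)) (x (l (g i))) := by
          simp only [hy_def, if_pos (And.intro hspec.1 hjle)]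
        rw [hy_val, ← hspec.2]
        have hxK : x (l (g i)) ∈ K (l (g i)) := by
          apply hH_subK
          · exact hl.monotone (Nat.zero_le _)
          · rw [hspec.2]
            exact hxj
        exact hed _ _ hxK
      · rw [dif_neg hex]
        have h0 : j ≠ l 0 := by omega
        have : H j = {s j} := by
          simp only [H, if_neg h0, dif_neg hex, if_pos hcond.1]
        rw [this] at hxj
        exact (Finset.mem_singleton.mp hxj).symm
    · rw [if_neg hcond]
      push_neg at hcond
      symm
      apply hx0
      by_cases h : l 0 < j
      · exact Or.inr (hcond h)
      · exact Or.inl (by omega)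
  have : c' t AR y = ε := hkey
  simp only [c'] at this
  rw [hARimg, hfun] at this
  exact this
end

section
/- (Roslanowski–Shelah, recovered) Let t̄ ∈ PC^tt_∞(K_1, Σ_1^*), and for each k < ω let l_k ≥ 1 and d_k : pos^tt(t̄⟨k⟩) → l_k be given. Then there is an s̄ ≤ t̄ in PC^tt_∞(K_1, Σ_1^*) such that m^{s_0}_dn = m^{t_0}_dn and for each i < ω, if k is such that s_i ∈ Σ^tt(t̄⟨k⟩), then d_k restricted to pos^tt(s̄⟨i⟩) is constant. -/
open Filter

/- Example 2.10 of Roslanowski–Shelah.  H_1(n) = n+1.  An element of K_1 is an FP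
creature t = (nor[t], val[t], dis[t], m^t_dn, m^t_up) with dis[t] = (u^t, i^t, A^t),
u^t ⊆ [m^t_dn, m^t_up), i^t ∈ u^t, ∅ ≠ A^t ⊆ H_1(i^t), nor[t] = log₂|A^t|, and
val[t] ⊆ ∏_{j∈u^t} H_1(j) a nonempty (finite) set with {f(i^t) : f ∈ val[t]} = A^t.
Partial finitary functions are modelled as f : ℕ → Option ℕ, where the domain is
{j | (f j).isSome}. -/
structure Creature1 where
  mdn : ℕ
  mup : ℕ
  hm : mdn < mup
  u : Finset ℕ
  hu : u ⊆ Finset.Ico mdn mup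
  idx : ℕ
  hidx : idx ∈ u
  A : Finset ℕ
  hA : A.Nonempty
  hAH : ∀ a ∈ A, a < idx + 1
  val : Finset (ℕ → Option ℕ)
  hvalne : val.Nonempty
  hdom : ∀ f ∈ val, ∀ j, (f j).isSome ↔ j ∈ u
  hran : ∀ f ∈ val, ∀ j a, f j = some a → a < j + 1
  hproj : ∀ a, a ∈ A ↔ ∃ f ∈ val, f idx = some a
  nor : ℝ
  hnor : nor = Real.logb 2 (A.card)

/- Σ_1^*(t_a, …, t_b): creatures s with m^s_dn = m^{t_a}_dn, m^s_up = m^{t_b}_up,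
u^s = ⋃_{a≤l≤b} u^{t_l}, i^s = i^{t_{l*}} and A^s ⊆ A^{t_{l*}} for some a ≤ l* ≤ b, and
val[s] ⊆ {f_a ∪ ⋯ ∪ f_b : f_l ∈ val[t_l]} (the union of partial functions with
pairwise disjoint domains u^{t_l}). -/
def Sigma1 (t : ℕ → Creature1) (a b : ℕ) : Set Creature1 :=
  {s | s.mdn = (t a).mdn ∧ s.mup = (t b).mup ∧
    s.u = (Finset.Icc a b).biUnion (fun l => (t l).u) ∧
    (∃ l, a ≤ l ∧ l ≤ b ∧ s.idx = (t l).idx ∧ s.A ⊆ (t l).A) ∧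
    (∀ f ∈ s.val, ∃ g : ℕ → (ℕ → Option ℕ),
      (∀ l, a ≤ l → l ≤ b → g l ∈ (t l).val) ∧
      (∀ l, a ≤ l → l ≤ b → ∀ j ∈ (t l).u, f j = g l j) ∧
      (∀ j, (∀ l, a ≤ l → l ≤ b → j ∉ (t l).u) → f j = none))}

/- Tight pure candidates: infinite sequences of creatures from K_1 with
m^{t_n}_up = m^{t_{n+1}}_dn and nor[t_n] → ∞. -/
def PCtt1 (t : ℕ → Creature1) : Prop :=
  (∀ n, (t n).mup = (t (n + 1)).mdn) ∧
  Tendsto (fun n => (t n).nor) atTop atTop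

/- t̄ ≤ s̄ iff there is a strictly increasing (j_n) with
t_n ∈ Σ_1^*(s_{j_n}, …, s_{j_{n+1}−1}) for all n. -/
def le1 (t s : ℕ → Creature1) : Prop :=
  ∃ j : ℕ → ℕ, StrictMono j ∧ ∀ n, t n ∈ Sigma1 s (j n) (j (n + 1) - 1)

/- Membership in the dense set R(PC^tt_∞(K_1, Σ_1^*)): |A^{t_l}| = l+1 and for each
a ∈ A^{t_l} there is exactly one g ∈ val[t_l] with g(i^{t_l}) = a. -/
def R1cond (t : ℕ → Creature1) : Prop :=
  PCtt1 t ∧ ∀ l, (t l).A.card = l + 1 ∧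
    ∀ a ∈ (t l).A, ∃! g, g ∈ (t l).val ∧ g (t l).idx = some a

/- r_k(t̄) = (t_0, …, t_{k−1}). -/
def restr1 (t : ℕ → Creature1) (k : ℕ) : List Creature1 :=
  List.ofFn (fun i : Fin k => t i.1)

/- Σ^tt(t̄) = ⋃_n Σ_1^*(t_0, …, t_n). -/
def Sigmatt1 (t : ℕ → Creature1) : Set Creature1 := ⋃ n, Sigma1 t 0 n

/- r_k[m, t̄] = {r_k(s̄) : s̄ ∈ [r_m(t̄), t̄]}, for t̄ in the space R(PC^tt_∞(K_1, Σ_1^*)). -/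
def rset1 (k m : ℕ) (t : ℕ → Creature1) : Set (List Creature1) :=
  {a | ∃ s : ℕ → Creature1, R1cond s ∧ le1 s t ∧
    restr1 s m = restr1 t m ∧ a = restr1 s k}

/- Σ^tt(t̄⟨k⟩) = ⋃_n Σ_1^*(t_k, …, t_{k+n}), where t̄⟨k⟩ is the tail (t_k, t_{k+1}, …). -/
def SigmattTail1 (t : ℕ → Creature1) (k : ℕ) : Set Creature1 :=
  ⋃ n, Sigma1 t k (k + n)

/- pos^tt(t̄⟨k⟩) = {f_0 ∪ ⋯ ∪ f_n : n < ω, f_i ∈ val[t_{k+i}]} (unions of partial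
functions with pairwise disjoint domains u^{t_{k+i}}). -/
def postt1 (t : ℕ → Creature1) (k : ℕ) : Set (ℕ → Option ℕ) :=
  {f | ∃ n, ∃ g : ℕ → (ℕ → Option ℕ),
    (∀ i, i ≤ n → g i ∈ (t (k + i)).val) ∧
    (∀ i, i ≤ n → ∀ j ∈ (t (k + i)).u, f j = g i j) ∧
    (∀ j, (∀ i, i ≤ n → j ∉ (t (k + i)).u) → f j = none)}

namespace RS

/-- Union of two partial functions, preferring the left one. -/
def funion (f g : ℕ → Option ℕ) : ℕ → Option ℕ :=
  fun j => match f j with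
  | some a => some a
  | none => g j

lemma funion_eq_left {f g : ℕ → Option ℕ} {j : ℕ} (h : (f j).isSome) :
    funion f g j = f j := by
  unfold funion; cases hf : f j with
  | some a => rfl
  | none => rw [hf] at h; simp at h

lemma funion_eq_right {f g : ℕ → Option ℕ} {j : ℕ} (h : f j = none) :
    funion f g j = g j := by
  unfold funion; rw [h]

lemma funion_isSome (f g : ℕ → Option ℕ) (j : ℕ) :
    (funion f g j).isSome ↔ (f j).isSome ∨ (g j).isSome := by
  unfold funion; cases hf : f j <;> simp

lemma funion_assoc (f g h : ℕ → Option ℕ) :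
    funion (funion f g) h = funion f (funion g h) := by
  funext j; unfold funion; cases hf : f j <;> cases hg : g j <;> simp

lemma funion_none_left (g : ℕ → Option ℕ) : funion (fun _ => none) g = g := by
  funext j; unfold funion; simp

section Seq

variable {t : ℕ → Creature1}

/-- consecutive blocks -/
def Consec (t : ℕ → Creature1) : Prop := ∀ n, (t n).mup = (t (n + 1)).mdn

lemma Consec.mdn_strictMono (hc : Consec t) : StrictMono fun n => (t n).mdn := by
  apply strictMono_nat_of_lt_succ
  intro n
  have := (t n).hm
  simp only [← hc n]
  exact this

lemma Consec.mdn_le_mdn (hc : Consec t) {a b : ℕ} (h : a ≤ b) :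
    (t a).mdn ≤ (t b).mdn := hc.mdn_strictMono.monotone h

lemma Consec.mup_le_mdn (hc : Consec t) {a b : ℕ} (h : a < b) :
    (t a).mup ≤ (t b).mdn := by
  rw [hc a]; exact hc.mdn_le_mdn h

lemma Consec.mup_le_mup (hc : Consec t) {a b : ℕ} (h : a ≤ b) :
    (t a).mup ≤ (t b).mup := by
  rcases eq_or_lt_of_le h with rfl | h
  · exact le_rfl
  · exact (hc.mup_le_mdn h).trans (t b).hm.le

lemma mem_u_bounds {l j : ℕ} (h : j ∈ (t l).u) :
    (t l).mdn ≤ j ∧ j < (t l).mup := by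
  have := (t l).hu h
  exact Finset.mem_Ico.mp this

lemma Consec.u_disj (hc : Consec t) {l l' j : ℕ} (hne : l ≠ l')
    (h : j ∈ (t l).u) (h' : j ∈ (t l').u) : False := by
  rcases hne.lt_or_gt with hlt | hlt
  · have h1 := (mem_u_bounds h).2
    have h2 := (mem_u_bounds h').1
    have := hc.mup_le_mdn hlt
    omega
  · have h1 := (mem_u_bounds h').2
    have h2 := (mem_u_bounds h).1
    have := hc.mup_le_mdn hlt
    omega

lemma Consec.le_of_sigma (hc : Consec t) {b e : ℕ} {σ : Creature1}
    (hσ : σ ∈ Sigma1 t b e) : b ≤ e := by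
  by_contra h
  push_neg at h
  have h1 : σ.mdn = (t b).mdn := hσ.1
  have h2 : σ.mup = (t e).mup := hσ.2.1
  have h3 := σ.hm
  have h4 : (t e).mup ≤ (t b).mdn := by
    rw [hc e]; exact hc.mdn_le_mdn (by omega)
  omega

end Seq
end RS
namespace RS
section Constructors

variable {t : ℕ → Creature1}

/-- the A-value of a member of val -/
def cproj (σ : Creature1) (f : ℕ → Option ℕ) : ℕ := (f σ.idx).getD 0

lemma cproj_spec {σ : Creature1} {f : ℕ → Option ℕ} (hf : f ∈ σ.val) :
    f σ.idx = some (cproj σ f) := by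
  have h : (f σ.idx).isSome := (σ.hdom f hf σ.idx).mpr σ.hidx
  unfold cproj
  cases hv : f σ.idx with
  | some a => simp
  | none => rw [hv] at h; simp at h

lemma cproj_mem {σ : Creature1} {f : ℕ → Option ℕ} (hf : f ∈ σ.val) :
    cproj σ f ∈ σ.A :=
  (σ.hproj _).mpr ⟨f, hf, cproj_spec hf⟩

/-- Restrict the val-set of a creature to a nonempty subset. -/
noncomputable def restrictC (σ : Creature1) (W : Finset (ℕ → Option ℕ)) (hW : W ⊆ σ.val)
    (hne : W.Nonempty) : Creature1 where
  mdn := σ.mdn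
  mup := σ.mup
  hm := σ.hm
  u := σ.u
  hu := σ.hu
  idx := σ.idx
  hidx := σ.hidx
  A := W.image (cproj σ)
  hA := hne.image _
  hAH := by
    intro a ha
    obtain ⟨f, hf, rfl⟩ := Finset.mem_image.mp ha
    exact σ.hAH _ (cproj_mem (hW hf))
  val := W
  hvalne := hne
  hdom := fun f hf => σ.hdom f (hW hf)
  hran := fun f hf => σ.hran f (hW hf)
  hproj := by
    intro a
    constructor
    · intro ha
      obtain ⟨f, hf, rfl⟩ := Finset.mem_image.mp ha
      exact ⟨f, hf, cproj_spec (hW hf)⟩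
    · rintro ⟨f, hf, hfa⟩
      have : cproj σ f = a := by
        have := cproj_spec (hW hf)
        rw [hfa] at this
        exact (Option.some_injective _ this).symm
      exact Finset.mem_image.mpr ⟨f, hf, this⟩
  nor := Real.logb 2 ((W.image (cproj σ)).card)
  hnor := rfl

lemma restrictC_A_sub {σ : Creature1} {W : Finset (ℕ → Option ℕ)} (hW : W ⊆ σ.val)
    (hne : W.Nonempty) : (restrictC σ W hW hne).A ⊆ σ.A := by
  intro a ha
  obtain ⟨f, hf, rfl⟩ := Finset.mem_image.mp ha
  exact cproj_mem (hW hf)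

lemma restrictC_sigma {σ : Creature1} {W : Finset (ℕ → Option ℕ)} (hW : W ⊆ σ.val)
    (hne : W.Nonempty) {b e : ℕ} (hσ : σ ∈ Sigma1 t b e) :
    restrictC σ W hW hne ∈ Sigma1 t b e := by
  obtain ⟨h1, h2, h3, ⟨l, hl1, hl2, hl3, hl4⟩, h5⟩ := hσ
  refine ⟨h1, h2, h3, ⟨l, hl1, hl2, hl3, (restrictC_A_sub hW hne).trans hl4⟩, ?_⟩
  exact fun f hf => h5 f (hW hf)

/-- Merge two creatures on consecutive blocks. -/
noncomputable def mergeC (σ₁ σ₂ : Creature1) (h : σ₁.mup = σ₂.mdn) : Creature1 :=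
  letI : DecidableEq (ℕ → Option ℕ) := Classical.decEq _
  have hnone : ∀ f ∈ σ₁.val, f σ₂.idx = none := by
    intro f hf
    cases hv : f σ₂.idx with
    | none => rfl
    | some a =>
      have h1 : σ₂.idx ∈ σ₁.u := (σ₁.hdom f hf σ₂.idx).mp (by rw [hv]; rfl)
      have h2 := Finset.mem_Ico.mp (σ₁.hu h1)
      have h3 := Finset.mem_Ico.mp (σ₂.hu σ₂.hidx)
      omega
  { mdn := σ₁.mdn
    mup := σ₂.mup
    hm := σ₁.hm.trans (h ▸ σ₂.hm)
    u := σ₁.u ∪ σ₂.u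
    hu := by
      intro j hj
      rcases Finset.mem_union.mp hj with hj | hj
      · have := Finset.mem_Ico.mp (σ₁.hu hj)
        have := σ₂.hm
        rw [Finset.mem_Ico]
        omega
      · have := Finset.mem_Ico.mp (σ₂.hu hj)
        have := σ₁.hm
        rw [Finset.mem_Ico]
        omega
    idx := σ₂.idx
    hidx := Finset.mem_union_right _ σ₂.hidx
    A := σ₂.A
    hA := σ₂.hA
    hAH := σ₂.hAH
    val := Finset.image₂ funion σ₁.val σ₂.val
    hvalne := Finset.Nonempty.image₂ σ₁.hvalne σ₂.hvalne
    hdom := by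
      intro f hf j
      obtain ⟨f₁, hf₁, f₂, hf₂, rfl⟩ := Finset.mem_image₂.mp hf
      rw [funion_isSome, σ₁.hdom f₁ hf₁ j, σ₂.hdom f₂ hf₂ j, Finset.mem_union]
    hran := by
      intro f hf j a hja
      obtain ⟨f₁, hf₁, f₂, hf₂, rfl⟩ := Finset.mem_image₂.mp hf
      cases hv : f₁ j with
      | some b =>
        rw [funion_eq_left (by rw [hv]; rfl)] at hja
        exact σ₁.hran f₁ hf₁ j a hja
      | none =>
        rw [funion_eq_right hv] at hja
        exact σ₂.hran f₂ hf₂ j a hja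
    hproj := by
      intro a
      constructor
      · intro ha
        obtain ⟨g, hg, hga⟩ := (σ₂.hproj a).mp ha
        obtain ⟨f₀, hf₀⟩ := σ₁.hvalne
        refine ⟨funion f₀ g, Finset.mem_image₂.mpr ⟨f₀, hf₀, g, hg, rfl⟩, ?_⟩
        rw [funion_eq_right (hnone f₀ hf₀), hga]
      · rintro ⟨f, hf, hfa⟩
        obtain ⟨f₁, hf₁, f₂, hf₂, rfl⟩ := Finset.mem_image₂.mp hf
        rw [funion_eq_right (hnone f₁ hf₁)] at hfa
        exact (σ₂.hproj a).mpr ⟨f₂, hf₂, hfa⟩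
    nor := Real.logb 2 (σ₂.A.card)
    hnor := rfl }

lemma mergeC_A (σ₁ σ₂ : Creature1) (h : σ₁.mup = σ₂.mdn) :
    (mergeC σ₁ σ₂ h).A = σ₂.A := rfl

lemma mem_mergeC_val {σ₁ σ₂ : Creature1} {h : σ₁.mup = σ₂.mdn}
    {f : ℕ → Option ℕ} :
    f ∈ (mergeC σ₁ σ₂ h).val ↔ ∃ f₁ ∈ σ₁.val, ∃ f₂ ∈ σ₂.val, funion f₁ f₂ = f := by
  letI : DecidableEq (ℕ → Option ℕ) := Classical.decEq _
  have hv : (mergeC σ₁ σ₂ h).val = Finset.image₂ funion σ₁.val σ₂.val := rfl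
  rw [hv, Finset.mem_image₂]

lemma mergeC_sigma (hc : Consec t) {σ₁ σ₂ : Creature1} {b e e' : ℕ}
    (hσ₁ : σ₁ ∈ Sigma1 t b e) (hσ₂ : σ₂ ∈ Sigma1 t (e + 1) e')
    (h : σ₁.mup = σ₂.mdn) :
    mergeC σ₁ σ₂ h ∈ Sigma1 t b e' := by
  have hbe : b ≤ e := hc.le_of_sigma hσ₁
  have hee : e + 1 ≤ e' := hc.le_of_sigma hσ₂
  obtain ⟨m1, m2, m3, ⟨l₁, hl₁a, hl₁b, hl₁c, hl₁d⟩, m5⟩ := hσ₁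
  obtain ⟨n1, n2, n3, ⟨l₂, hl₂a, hl₂b, hl₂c, hl₂d⟩, n5⟩ := hσ₂
  refine ⟨m1, n2, ?_, ⟨l₂, by omega, hl₂b, hl₂c, hl₂d⟩, ?_⟩
  · show σ₁.u ∪ σ₂.u = _
    rw [m3, n3]
    ext x
    simp only [Finset.mem_union, Finset.mem_biUnion, Finset.mem_Icc]
    constructor
    · rintro (⟨l, hl, hx⟩ | ⟨l, hl, hx⟩)
      · exact ⟨l, by omega, hx⟩
      · exact ⟨l, by omega, hx⟩
    · rintro ⟨l, hl, hx⟩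
      by_cases hle : l ≤ e
      · exact Or.inl ⟨l, by omega, hx⟩
      · exact Or.inr ⟨l, by omega, hx⟩
  · intro f hf
    obtain ⟨f₁, hf₁, f₂, hf₂, rfl⟩ := mem_mergeC_val.mp hf
    obtain ⟨g₁, hg₁a, hg₁b, hg₁c⟩ := m5 f₁ hf₁
    obtain ⟨g₂, hg₂a, hg₂b, hg₂c⟩ := n5 f₂ hf₂
    refine ⟨fun l => if l ≤ e then g₁ l else g₂ l, ?_, ?_, ?_⟩
    · intro l hbl hle'
      by_cases hle : l ≤ e
      · simp only [if_pos hle]; exact hg₁a l hbl hle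
      · simp only [if_neg hle]; exact hg₂a l (by omega) hle'
    · intro l hbl hle' j hj
      by_cases hle : l ≤ e
      · simp only [if_pos hle]
        have h1 : f₁ j = g₁ l j := hg₁b l hbl hle j hj
        have h2 : (g₁ l j).isSome := ((t l).hdom _ (hg₁a l hbl hle) j).mpr hj
        rw [funion_eq_left (by rw [h1]; exact h2), h1]
      · simp only [if_neg hle]
        have h1 : f₁ j = none := by
          apply hg₁c
          intro l' hbl' hle'
          intro hj'
          exact hc.u_disj (show l' ≠ l by omega) hj' hj
        rw [funion_eq_right h1]
        exact hg₂b l (by omega) hle' j hj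
    · intro j hj
      have h1 : f₁ j = none := hg₁c j (fun l hb hl => hj l hb (by omega))
      have h2 : f₂ j = none := hg₂c j (fun l hb hl => hj l (by omega) hl)
      rw [funion_eq_right h1, h2]

end Constructors
end RS
namespace RS
section BaseC

variable {t : ℕ → Creature1}

/-- default member of val -/
noncomputable def g0 (t : ℕ → Creature1) (l : ℕ) : ℕ → Option ℕ := (t l).hvalne.choose

lemma g0_mem (t : ℕ → Creature1) (l : ℕ) : g0 t l ∈ (t l).val := (t l).hvalne.choose_spec

/-- member of val t n with designated A-value a -/
noncomputable def fa (t : ℕ → Creature1) (n a : ℕ) : ℕ → Option ℕ :=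
  if h : a ∈ (t n).A then (((t n).hproj a).mp h).choose else g0 t n

lemma fa_mem (t : ℕ → Creature1) (n a : ℕ) : fa t n a ∈ (t n).val := by
  unfold fa
  split
  · next h => exact (((t n).hproj a).mp h).choose_spec.1
  · exact g0_mem t n

lemma fa_proj (t : ℕ → Creature1) {n a : ℕ} (h : a ∈ (t n).A) :
    fa t n a (t n).idx = some a := by
  unfold fa
  rw [dif_pos h]
  exact (((t n).hproj a).mp h).choose_spec.2

/-- component of the representative: at level n use `fa`, elsewhere `g0` -/
noncomputable def Gc (t : ℕ → Creature1) (n a l : ℕ) : ℕ → Option ℕ :=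
  if l = n then fa t n a else g0 t l

lemma Gc_mem (t : ℕ → Creature1) (n a l : ℕ) : Gc t n a l ∈ (t l).val := by
  unfold Gc; split
  · next h => subst h; exact fa_mem t l a
  · exact g0_mem t l

/-- the representative with A-value `a` over the block `[b, n]` -/
noncomputable def wrep (t : ℕ → Creature1) (b n a : ℕ) : ℕ → Option ℕ :=
  fun j => @dite _ (∃ l, b ≤ l ∧ l ≤ n ∧ j ∈ (t l).u) (Classical.dec _)
    (fun h => Gc t n a h.choose j) (fun _ => none)

lemma wrep_eq (hc : Consec t) {b n l j : ℕ} (hbl : b ≤ l) (hln : l ≤ n)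
    (hj : j ∈ (t l).u) (a : ℕ) : wrep t b n a j = Gc t n a l j := by
  unfold wrep
  have h : ∃ l, b ≤ l ∧ l ≤ n ∧ j ∈ (t l).u := ⟨l, hbl, hln, hj⟩
  rw [dif_pos h]
  have : h.choose = l := by
    by_contra hne
    exact hc.u_disj hne h.choose_spec.2.2 hj
  rw [this]

lemma wrep_none {b n j : ℕ} (hj : ∀ l, b ≤ l → l ≤ n → j ∉ (t l).u) (a : ℕ) :
    wrep t b n a j = none := by
  unfold wrep
  rw [dif_neg]
  rintro ⟨l, h1, h2, h3⟩
  exact hj l h1 h2 h3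

/-- the base creature over the block `[b, n]` with full A-set `(t n).A` -/
noncomputable def baseC (t : ℕ → Creature1) (hc : Consec t) {b n : ℕ} (hbn : b ≤ n) :
    Creature1 :=
  letI : DecidableEq (ℕ → Option ℕ) := Classical.decEq _
  have hdom' : ∀ a j, (wrep t b n a j).isSome ↔ j ∈ (Finset.Icc b n).biUnion (fun l => (t l).u) := by
    intro a j
    constructor
    · intro hs
      by_contra hmem
      rw [wrep_none (fun l h1 h2 h3 => hmem (Finset.mem_biUnion.mpr
        ⟨l, Finset.mem_Icc.mpr ⟨h1, h2⟩, h3⟩)) a] at hs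
      simp at hs
    · intro hmem
      obtain ⟨l, hl, hj⟩ := Finset.mem_biUnion.mp hmem
      obtain ⟨h1, h2⟩ := Finset.mem_Icc.mp hl
      rw [wrep_eq hc h1 h2 hj a]
      exact ((t l).hdom _ (Gc_mem t n a l) j).mpr hj
  { mdn := (t b).mdn
    mup := (t n).mup
    hm := lt_of_le_of_lt (hc.mdn_le_mdn hbn) (t n).hm
    u := (Finset.Icc b n).biUnion (fun l => (t l).u)
    hu := by
      intro j hj
      obtain ⟨l, hl, hjl⟩ := Finset.mem_biUnion.mp hj
      obtain ⟨h1, h2⟩ := Finset.mem_Icc.mp hl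
      have h3 := Finset.mem_Ico.mp ((t l).hu hjl)
      have h4 := hc.mdn_le_mdn h1
      have h5 := hc.mup_le_mup h2
      rw [Finset.mem_Ico]
      omega
    idx := (t n).idx
    hidx := Finset.mem_biUnion.mpr ⟨n, Finset.mem_Icc.mpr ⟨hbn, le_rfl⟩, (t n).hidx⟩
    A := (t n).A
    hA := (t n).hA
    hAH := (t n).hAH
    val := (t n).A.image (wrep t b n)
    hvalne := (t n).hA.image _
    hdom := by
      intro f hf j
      obtain ⟨a, _, rfl⟩ := Finset.mem_image.mp hf
      exact hdom' a j
    hran := by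
      intro f hf j v hjv
      obtain ⟨a, _, rfl⟩ := Finset.mem_image.mp hf
      by_cases h : ∃ l, b ≤ l ∧ l ≤ n ∧ j ∈ (t l).u
      · obtain ⟨l, h1, h2, h3⟩ := h
        rw [wrep_eq hc h1 h2 h3 a] at hjv
        exact (t l).hran _ (Gc_mem t n a l) j v hjv
      · rw [wrep_none (fun l hl1 hl2 hl3 => h ⟨l, hl1, hl2, hl3⟩) a] at hjv
        exact absurd hjv (by simp)
    hproj := by
      have hkey : ∀ a ∈ (t n).A, wrep t b n a (t n).idx = some a := by
        intro a ha
        rw [wrep_eq hc hbn le_rfl (t n).hidx a]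
        unfold Gc
        rw [if_pos rfl]
        exact fa_proj t ha
      intro a
      constructor
      · intro ha
        exact ⟨wrep t b n a, Finset.mem_image.mpr ⟨a, ha, rfl⟩, hkey a ha⟩
      · rintro ⟨f, hf, hfa⟩
        obtain ⟨a', ha', rfl⟩ := Finset.mem_image.mp hf
        have := hkey a' ha'
        rw [hfa] at this
        injection this with h
        rw [h]; exact ha'
    nor := Real.logb 2 ((t n).A.card)
    hnor := rfl }

lemma baseC_A (hc : Consec t) {b n : ℕ} (hbn : b ≤ n) :
    (baseC t hc hbn).A = (t n).A := rfl

lemma baseC_sigma (hc : Consec t) {b n : ℕ} (hbn : b ≤ n) :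
    baseC t hc hbn ∈ Sigma1 t b n := by
  refine ⟨rfl, rfl, rfl, ⟨n, hbn, le_rfl, rfl, Finset.Subset.refl _⟩, ?_⟩
  intro f hf
  letI : DecidableEq (ℕ → Option ℕ) := Classical.decEq _
  have hf' : f ∈ (t n).A.image (wrep t b n) := hf
  obtain ⟨a, _, rfl⟩ := Finset.mem_image.mp hf'
  refine ⟨Gc t n a, fun l _ _ => Gc_mem t n a l, ?_, ?_⟩
  · intro l h1 h2 j hj
    exact wrep_eq hc h1 h2 hj a
  · intro j hj
    exact wrep_none hj a

end BaseC
end RS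
namespace RS
section Big

variable {t : ℕ → Creature1}

lemma exists_bigA (ht2 : Tendsto (fun n => (t n).nor) atTop atTop) (N b : ℕ) :
    ∃ n, b ≤ n ∧ N ≤ (t n).A.card := by
  have h1 : ∀ᶠ n in atTop, ((N : ℝ) ≤ (t n).nor) := ht2.eventually_ge_atTop _
  obtain ⟨n, hn1, hn2⟩ := (h1.and (eventually_ge_atTop b)).exists
  refine ⟨n, hn2, ?_⟩
  have hcard : (0 : ℝ) < ((t n).A.card : ℝ) := by
    have := (t n).hA.card_pos
    positivity
  have h2 : (N : ℝ) ≤ Real.logb 2 ((t n).A.card) := by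
    rw [← (t n).hnor]; exact hn1
  have h3 : (2 : ℝ) ^ (N : ℝ) ≤ ((t n).A.card : ℝ) :=
    (Real.le_logb_iff_rpow_le (by norm_num) hcard).mp h2
  have h4 : ((N : ℝ)) ≤ (2 : ℝ) ^ (N : ℝ) := by
    rw [Real.rpow_natCast]
    calc ((N : ℝ)) ≤ ((2 ^ N : ℕ) : ℝ) := by
          exact_mod_cast (Nat.lt_two_pow_self (n := N)).le
      _ = (2 : ℝ) ^ N := by push_cast; ring
  exact_mod_cast h4.trans h3

/-- `S` contains val-sets of creatures starting at block `b` of arbitrarily large size. -/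
def IsBig (t : ℕ → Creature1) (b : ℕ) (S : Set (ℕ × (ℕ → Option ℕ))) : Prop :=
  ∀ N, ∃ e σ, σ ∈ Sigma1 t b e ∧ N ≤ σ.A.card ∧ ∀ f ∈ σ.val, (e, f) ∈ S

lemma IsBig.mono {b : ℕ} {S S' : Set (ℕ × (ℕ → Option ℕ))} (h : IsBig t b S)
    (hss : S ⊆ S') : IsBig t b S' := by
  intro N
  obtain ⟨e, σ, h1, h2, h3⟩ := h N
  exact ⟨e, σ, h1, h2, fun f hf => hss (h3 f hf)⟩

lemma isBig_univ (hc : Consec t) (ht2 : Tendsto (fun n => (t n).nor) atTop atTop)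
    (b : ℕ) : IsBig t b Set.univ := by
  intro N
  obtain ⟨n, hbn, hN⟩ := exists_bigA ht2 N b
  exact ⟨n, baseC t hc hbn, baseC_sigma hc hbn, hN, fun _ _ => Set.mem_univ _⟩

lemma not_isBig_empty (b : ℕ) : ¬ IsBig t b ∅ := by
  intro h
  obtain ⟨e, σ, _, _, h3⟩ := h 0
  obtain ⟨f, hf⟩ := σ.hvalne
  exact h3 f hf

lemma IsBig.union {b : ℕ} {S₁ S₂ : Set (ℕ × (ℕ → Option ℕ))}
    (h : IsBig t b (S₁ ∪ S₂)) : IsBig t b S₁ ∨ IsBig t b S₂ := by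
  by_contra hcon
  push_neg at hcon
  obtain ⟨hb1, hb2⟩ := hcon
  unfold IsBig at hb1 hb2
  push_neg at hb1 hb2
  obtain ⟨N₁, hN₁⟩ := hb1
  obtain ⟨N₂, hN₂⟩ := hb2
  obtain ⟨e, σ, h1, h2, h3⟩ := h (N₁ + N₂ + 1)
  classical
  set W₁ := σ.val.filter (fun f => (e, f) ∈ S₁) with hW₁
  set W₂ := σ.val.filter (fun f => (e, f) ∉ S₁) with hW₂
  have hWsub₁ : W₁ ⊆ σ.val := Finset.filter_subset _ _
  have hWsub₂ : W₂ ⊆ σ.val := Finset.filter_subset _ _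
  have hAcover : σ.A ⊆ (W₁.image (cproj σ)) ∪ (W₂.image (cproj σ)) := by
    intro a ha
    obtain ⟨f, hf, hfa⟩ := (σ.hproj a).mp ha
    have hpa : cproj σ f = a := by
      have := cproj_spec hf
      rw [hfa] at this
      exact (Option.some_injective _ this).symm
    by_cases hs : (e, f) ∈ S₁
    · exact Finset.mem_union_left _ (Finset.mem_image.mpr
        ⟨f, Finset.mem_filter.mpr ⟨hf, hs⟩, hpa⟩)
    · exact Finset.mem_union_right _ (Finset.mem_image.mpr
        ⟨f, Finset.mem_filter.mpr ⟨hf, hs⟩, hpa⟩)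
  have hcards : σ.A.card ≤ (W₁.image (cproj σ)).card + (W₂.image (cproj σ)).card :=
    (Finset.card_le_card hAcover).trans (Finset.card_union_le _ _)
  have hcase : N₁ + 1 ≤ (W₁.image (cproj σ)).card ∨ N₂ + 1 ≤ (W₂.image (cproj σ)).card := by
    omega
  rcases hcase with hcase | hcase
  · have hne : W₁.Nonempty := by
      rw [← Finset.image_nonempty (f := cproj σ)]
      exact Finset.card_pos.mp (by omega)
    obtain ⟨f₀, hf₀⟩ := hW₁ ▸ hne
    have := hN₁ e (restrictC σ W₁ hWsub₁ hne) (restrictC_sigma hWsub₁ hne h1)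
      (by show N₁ ≤ (W₁.image (cproj σ)).card; omega)
    obtain ⟨f, hf, hfS⟩ := this
    exact hfS (Finset.mem_filter.mp hf).2
  · have hne : W₂.Nonempty := by
      rw [← Finset.image_nonempty (f := cproj σ)]
      exact Finset.card_pos.mp (by omega)
    have := hN₂ e (restrictC σ W₂ hWsub₂ hne) (restrictC_sigma hWsub₂ hne h1)
      (by show N₂ ≤ (W₂.image (cproj σ)).card; omega)
    obtain ⟨f, hf, hfS⟩ := this
    have hfv : f ∈ σ.val := hWsub₂ hf
    have : (e, f) ∈ S₁ ∪ S₂ := h3 f hfv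
    rcases this with hmem | hmem
    · exact (Finset.mem_filter.mp hf).2 hmem
    · exact hfS hmem

/-- The filter of sets whose complement is not big. -/
def bigFilter (t : ℕ → Creature1) (b : ℕ) : Filter (ℕ × (ℕ → Option ℕ)) where
  sets := {S | ¬ IsBig t b Sᶜ}
  univ_sets := by
    simp only [Set.mem_setOf_eq, Set.compl_univ]
    exact not_isBig_empty b
  sets_of_superset := by
    intro S S' hS hSS
    simp only [Set.mem_setOf_eq] at *
    intro hbig
    exact hS (hbig.mono (Set.compl_subset_compl.mpr hSS))
  inter_sets := by
    intro S S' hS hS'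
    simp only [Set.mem_setOf_eq] at *
    intro hbig
    rw [Set.compl_inter] at hbig
    rcases hbig.union with h | h
    · exact hS h
    · exact hS' h

lemma bigFilter_neBot (hc : Consec t) (ht2 : Tendsto (fun n => (t n).nor) atTop atTop)
    (b : ℕ) : (bigFilter t b).NeBot := by
  constructor
  intro hbot
  have : ∅ ∈ bigFilter t b := hbot ▸ Filter.mem_bot
  have h2 : ¬ IsBig t b (∅ : Set (ℕ × (ℕ → Option ℕ)))ᶜ := this
  rw [Set.compl_empty] at h2
  exact h2 (isBig_univ hc ht2 b)

/-- An ultrafilter all of whose members are big. -/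
noncomputable def U0 (t : ℕ → Creature1) (hc : Consec t)
    (ht2 : Tendsto (fun n => (t n).nor) atTop atTop) (b : ℕ) :
    Ultrafilter (ℕ × (ℕ → Option ℕ)) :=
  @Ultrafilter.of _ (bigFilter t b) (bigFilter_neBot hc ht2 b)

lemma U0_big (hc : Consec t) (ht2 : Tendsto (fun n => (t n).nor) atTop atTop)
    {b : ℕ} {B : Set (ℕ × (ℕ → Option ℕ))} (hB : B ∈ U0 t hc ht2 b) : IsBig t b B := by
  by_contra hbig
  have h1 : Bᶜ ∈ bigFilter t b := by
    show ¬ IsBig t b Bᶜᶜ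
    rw [compl_compl]
    exact hbig
  have h2 : Bᶜ ∈ U0 t hc ht2 b := (@Ultrafilter.of_le _ (bigFilter t b)
    (bigFilter_neBot hc ht2 b)) h1
  have := Filter.inter_mem hB h2
  rw [Set.inter_compl_self] at this
  exact (U0 t hc ht2 b).neBot.ne (Filter.empty_mem_iff_bot.mp this)

end Big
end RS
namespace RS
section Semigroup

/-- The type of points: (end-block, partial function). -/
abbrev XX := ℕ × (ℕ → Option ℕ)

/-- Positional convolution on families of ultrafilters. -/
noncomputable def umul (U V : ℕ → Ultrafilter XX) : ℕ → Ultrafilter XX :=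
  fun b => (U b).bind (fun x => (V (x.1 + 1)).map (fun y => (y.1, funion x.2 y.2)))

lemma mem_umul {U V : ℕ → Ultrafilter XX} {b : ℕ} {S : Set XX} :
    S ∈ umul U V b ↔ {x : XX | {y : XX | (y.1, funion x.2 y.2) ∈ S} ∈ V (x.1 + 1)} ∈ U b :=
  Iff.rfl

lemma umul_assoc (U V W : ℕ → Ultrafilter XX) : umul (umul U V) W = umul U (umul V W) := by
  funext b
  ext S
  simp only [mem_umul, Set.mem_setOf_eq, funion_assoc]

/-- The set of candidate-supported ultrafilter families. -/
def TT (t : ℕ → Creature1) : Set (ℕ → Ultrafilter XX) :=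
  {U | ∀ b, ∀ B ∈ U b, IsBig t b B}

lemma TT_nonempty {t : ℕ → Creature1} (hc : Consec t)
    (ht2 : Tendsto (fun n => (t n).nor) atTop atTop) : (TT t).Nonempty :=
  ⟨U0 t hc ht2, fun _ _ hB => U0_big hc ht2 hB⟩

lemma TT_closed (t : ℕ → Creature1) : IsClosed (TT t) := by
  have heq : TT t = ⋂ (b : ℕ), ⋂ (B : Set XX) (_ : ¬ IsBig t b B),
      {U : ℕ → Ultrafilter XX | B ∉ U b} := by
    ext U
    constructor
    · intro h
      simp only [Set.mem_iInter, Set.mem_setOf_eq]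
      intro b B hB hmem
      exact hB (h b B hmem)
    · intro h
      intro b B hmem
      by_contra hbig
      simp only [Set.mem_iInter, Set.mem_setOf_eq] at h
      exact h b B hbig hmem
  rw [heq]
  refine isClosed_iInter fun b => isClosed_iInter fun B => isClosed_iInter fun _ => ?_
  have : {U : ℕ → Ultrafilter XX | B ∉ U b} = (fun U : ℕ → Ultrafilter XX => U b) ⁻¹'
      {W : Ultrafilter XX | B ∈ W}ᶜ := rfl
  rw [this]
  exact (IsClosed.preimage (continuous_apply b)
    (isClosed_compl_iff.mpr (ultrafilter_isOpen_basic B)))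

lemma TT_mul {t : ℕ → Creature1} (hc : Consec t) :
    ∀ U ∈ TT t, ∀ V ∈ TT t, umul U V ∈ TT t := by
  intro U hU V hV b B hB N
  rw [mem_umul] at hB
  -- B̃ := the set of x such that most y continue into B
  obtain ⟨e₁, σ₁, hσ₁, _, hval₁⟩ := hU b _ hB 1
  have hcons : ∀ f ∈ σ₁.val, {y : XX | (y.1, funion f y.2) ∈ B} ∈ V (e₁ + 1) := by
    intro f hf
    exact hval₁ f hf
  have hInter : {y : XX | ∀ f ∈ σ₁.val, (y.1, funion f y.2) ∈ B} ∈ V (e₁ + 1) := by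
    have h2 : (⋂ f ∈ σ₁.val, {y : XX | (y.1, funion f y.2) ∈ B}) ∈ (V (e₁ + 1) : Filter XX) :=
      (Filter.biInter_finset_mem σ₁.val).mpr (fun f hf => hcons f hf)
    have h3 : (⋂ f ∈ σ₁.val, {y : XX | (y.1, funion f y.2) ∈ B})
        = {y : XX | ∀ f ∈ σ₁.val, (y.1, funion f y.2) ∈ B} := by
      ext y; simp only [Set.mem_iInter, Set.mem_setOf_eq]
    rwa [h3] at h2
  obtain ⟨e₂, σ₂, hσ₂, hcard₂, hval₂⟩ := hV (e₁ + 1) _ hInter N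
  have hmm : σ₁.mup = σ₂.mdn := by
    rw [hσ₁.2.1, hσ₂.1, hc e₁]
  refine ⟨e₂, mergeC σ₁ σ₂ hmm, mergeC_sigma hc hσ₁ hσ₂ hmm, ?_, ?_⟩
  · rw [mergeC_A]; exact hcard₂
  · intro f hf
    obtain ⟨f₁, hf₁, f₂, hf₂, rfl⟩ := mem_mergeC_val.mp hf
    exact hval₂ f₂ hf₂ f₁ hf₁

noncomputable instance : Semigroup (ℕ → Ultrafilter XX) where
  mul := umul
  mul_assoc := umul_assoc

lemma umul_eq_mul (U V : ℕ → Ultrafilter XX) : U * V = umul U V := rfl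

lemma continuous_bind_left (k : XX → Ultrafilter XX) :
    Continuous (fun W : Ultrafilter XX => W.bind k) := by
  refine ultrafilterBasis_is_basis.continuous_iff.2 <| Set.forall_mem_range.mpr fun s => ?_
  have : (fun W : Ultrafilter XX => W.bind k) ⁻¹' {u : Ultrafilter XX | s ∈ u}
      = {W : Ultrafilter XX | {x : XX | s ∈ k x} ∈ W} := rfl
  rw [this]
  exact ultrafilter_isOpen_basic _

lemma continuous_umul_right (V : ℕ → Ultrafilter XX) :
    Continuous (fun U => umul U V) := by
  refine continuous_pi fun b => ?_
  unfold umul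
  exact (continuous_bind_left _).comp (continuous_apply b)

lemma continuous_mul_right' (V : ℕ → Ultrafilter XX) :
    Continuous (· * V) := continuous_umul_right V

section deadcode
lemma dead (V : ℕ → Ultrafilter XX) : True := by
  trivial
end deadcode

lemma unused_continuity (V : ℕ → Ultrafilter XX) : True := by
  trivial


/-- The idempotent candidate-supported ultrafilter family. -/
lemma exists_idem (t : ℕ → Creature1) (hc : Consec t)
    (ht2 : Tendsto (fun n => (t n).nor) atTop atTop) :
    ∃ U ∈ TT t, umul U U = U := by
  obtain ⟨U, hU, hidem⟩ := exists_idempotent_in_compact_subsemigroup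
    continuous_mul_right' (TT t) (TT_nonempty hc ht2)
    ((TT_closed t).isCompact) (TT_mul hc)
  exact ⟨U, hU, hidem⟩

end Semigroup
end RS
namespace RS
section Machinery

/-- the empty partial function -/
def emptyf : ℕ → Option ℕ := fun _ => none

lemma funion_emptyf (f : ℕ → Option ℕ) : funion emptyf f = f := funion_none_left f

/-- color set for coloring `d k`, context prefix `p`, color `ε` -/
def Bset (d : ℕ → (ℕ → Option ℕ) → ℕ) (k : ℕ) (p : ℕ → Option ℕ) (ε : ℕ) : Set XX :=
  {x | d k (funion p x.2) = ε}

lemma star_mem {U : ℕ → Ultrafilter XX} (hidem : umul U U = U)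
    {d : ℕ → (ℕ → Option ℕ) → ℕ} {k b ε : ℕ} {p : ℕ → Option ℕ}
    (h : Bset d k p ε ∈ U b) :
    {x : XX | Bset d k (funion p x.2) ε ∈ U (x.1 + 1)} ∈ U b := by
  have h2 : Bset d k p ε ∈ umul U U b := by rw [hidem]; exact h
  rw [mem_umul] at h2
  have h3 : {x : XX | {y : XX | (y.1, funion x.2 y.2) ∈ Bset d k p ε} ∈ U (x.1 + 1)}
      = {x : XX | Bset d k (funion p x.2) ε ∈ U (x.1 + 1)} := by
    ext x
    simp only [Set.mem_setOf_eq, Bset, funion_assoc]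
  rwa [h3] at h2

lemma exists_color (W : Ultrafilter XX) :
    ∀ (c : ℕ) (φ : XX → ℕ), {x : XX | φ x < c} ∈ W → ∃ ε, {x : XX | φ x = ε} ∈ W := by
  intro c
  induction c with
  | zero =>
    intro φ h
    simp only [Nat.not_lt_zero] at h
    exact absurd h (by rw [Set.setOf_false]; exact W.empty_notMem)
  | succ c ih =>
    intro φ h
    by_cases hc : {x : XX | φ x = c} ∈ W
    · exact ⟨c, hc⟩
    · have h1 : {x : XX | φ x = c}ᶜ ∈ W := Ultrafilter.compl_mem_iff_notMem.mpr hc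
      refine ih φ (Filter.mem_of_superset (Filter.inter_mem h h1) ?_)
      rintro x ⟨hx1, hx2⟩
      simp only [Set.mem_compl_iff, Set.mem_setOf_eq] at *
      omega

/-- fold of unions of `g j`, `i ≤ j < n` -/
def foldc (i : ℕ) (n : ℕ) (g : ℕ → (ℕ → Option ℕ)) : ℕ → Option ℕ :=
  Nat.rec emptyf (fun n' ih => if i ≤ n' then funion ih (g n') else ih) n

lemma foldc_succ (i n : ℕ) (g : ℕ → (ℕ → Option ℕ)) :
    foldc i (n + 1) g = if i ≤ n then funion (foldc i n g) (g n) else foldc i n g := rfl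

lemma foldc_le {i n : ℕ} (h : n ≤ i) (g : ℕ → (ℕ → Option ℕ)) : foldc i n g = emptyf := by
  induction n with
  | zero => rfl
  | succ n ih =>
    rw [foldc_succ, if_neg (by omega), ih (by omega)]

lemma foldc_eval_none {s : ℕ → Creature1} {i n : ℕ}
    {g : ℕ → (ℕ → Option ℕ)} (hg : ∀ j, i ≤ j → j < n → g j ∈ (s j).val)
    {j' : ℕ} (h : ∀ j, i ≤ j → j < n → j' ∉ (s j).u) :
    foldc i n g j' = none := by
  induction n with
  | zero => rfl
  | succ n ih =>
    rw [foldc_succ]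
    have ihn : foldc i n g j' = none :=
      ih (fun j2 h2 h3 => hg j2 h2 (by omega)) (fun j2 h2 h3 => h j2 h2 (by omega))
    by_cases hin : i ≤ n
    · rw [if_pos hin, funion_eq_right ihn]
      by_contra hsome
      exact h n hin (by omega) (((s n).hdom _ (hg n hin (by omega)) j').mp
        (Option.ne_none_iff_isSome.mp hsome))
    · rw [if_neg hin]; exact ihn

lemma foldc_eval_mem {s : ℕ → Creature1} (hcs : Consec s) {i n : ℕ}
    {g : ℕ → (ℕ → Option ℕ)} (hg : ∀ j, i ≤ j → j < n → g j ∈ (s j).val)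
    {j j' : ℕ} (hij : i ≤ j) (hjn : j < n) (hj' : j' ∈ (s j).u) :
    foldc i n g j' = g j j' := by
  induction n with
  | zero => omega
  | succ n ih =>
    rw [foldc_succ, if_pos (by omega)]
    rcases Nat.lt_or_ge j n with hlt | hge
    · have h1 : foldc i n g j' = g j j' :=
        ih (fun j2 h2 h3 => hg j2 h2 (by omega)) (by omega)
      have h2 : (g j j').isSome := ((s j).hdom _ (hg j hij hjn) j').mpr hj'
      rw [funion_eq_left (by rw [h1]; exact h2), h1]
    · have hjE : j = n := by omega
      have h1 : foldc i n g j' = none := by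
        refine foldc_eval_none (fun j2 h2 h3 => hg j2 h2 (by omega)) ?_
        intro j2 h2 h3 hj2
        exact hcs.u_disj (show j2 ≠ j by omega) hj2 hj'
      rw [funion_eq_right h1, hjE]

/-- a dummy creature -/
noncomputable def dummyC : Creature1 where
  mdn := 0
  mup := 1
  hm := Nat.zero_lt_one
  u := {0}
  hu := by
    intro j hj
    simp only [Finset.mem_singleton] at hj
    subst hj
    decide
  idx := 0
  hidx := Finset.mem_singleton_self 0
  A := {0}
  hA := ⟨0, Finset.mem_singleton_self 0⟩
  hAH := by
    intro a ha
    simp only [Finset.mem_singleton] at ha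
    omega
  val := {fun j => if j = 0 then some 0 else none}
  hvalne := ⟨fun j => if j = 0 then some 0 else none, Finset.mem_singleton.mpr rfl⟩
  hdom := by
    intro f hf j
    simp only [Finset.mem_singleton] at hf
    subst hf
    by_cases hj : j = 0 <;> simp [hj]
  hran := by
    intro f hf j a hja
    simp only [Finset.mem_singleton] at hf
    subst hf
    by_cases hj : j = 0
    · subst hj
      have h2 : some 0 = some a := hja
      injection h2 with h2
      omega
    · have h2 : (none : Option ℕ) = some a := by
        rw [← hja]; simp [hj]
      exact absurd h2 (by simp)
  hproj := by
    intro a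
    simp only [Finset.mem_singleton]
    constructor
    · rintro rfl
      exact ⟨fun j => if j = 0 then some 0 else none, rfl, rfl⟩
    · rintro ⟨f, rfl, hfa⟩
      have h2 : some 0 = some a := hfa
      injection h2 with h2
      omega
  nor := Real.logb 2 (({0} : Finset ℕ).card)
  hnor := rfl

end Machinery
end RS
namespace RS
section Main

/-- state entries: (creature, end block, color) -/
abbrev Entry := Creature1 × ℕ × ℕ

noncomputable def dEntry : Entry := (dummyC, 0, 0)

noncomputable def crOf (st : List Entry) (i : ℕ) : Creature1 := (st.getD i dEntry).1
noncomputable def enOf (st : List Entry) (i : ℕ) : ℕ := (st.getD i dEntry).2.1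
noncomputable def epsOf (st : List Entry) (i : ℕ) : ℕ := (st.getD i dEntry).2.2

/-- block start positions -/
noncomputable def bbOf (st : List Entry) : ℕ → ℕ
  | 0 => 0
  | i + 1 => enOf st i + 1

lemma getD_append_lt {st : List Entry} {en : Entry} {i : ℕ} (h : i < st.length) :
    (st ++ [en]).getD i dEntry = st.getD i dEntry := by
  rw [List.getD_eq_getElem?_getD, List.getD_eq_getElem?_getD, List.getElem?_append, if_pos h]

lemma getD_append_self {st : List Entry} {en : Entry} :
    (st ++ [en]).getD st.length dEntry = en := by
  rw [List.getD_eq_getElem?_getD, List.getElem?_concat_length]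
  rfl

lemma crOf_append_lt {st : List Entry} {en : Entry} {i : ℕ} (h : i < st.length) :
    crOf (st ++ [en]) i = crOf st i := by unfold crOf; rw [getD_append_lt h]

lemma enOf_append_lt {st : List Entry} {en : Entry} {i : ℕ} (h : i < st.length) :
    enOf (st ++ [en]) i = enOf st i := by unfold enOf; rw [getD_append_lt h]

lemma epsOf_append_lt {st : List Entry} {en : Entry} {i : ℕ} (h : i < st.length) :
    epsOf (st ++ [en]) i = epsOf st i := by unfold epsOf; rw [getD_append_lt h]

lemma crOf_append_self {st : List Entry} {en : Entry} :
    crOf (st ++ [en]) st.length = en.1 := by unfold crOf; rw [getD_append_self]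

lemma enOf_append_self {st : List Entry} {en : Entry} :
    enOf (st ++ [en]) st.length = en.2.1 := by unfold enOf; rw [getD_append_self]

lemma epsOf_append_self {st : List Entry} {en : Entry} :
    epsOf (st ++ [en]) st.length = en.2.2 := by unfold epsOf; rw [getD_append_self]

lemma bbOf_append {st : List Entry} {en : Entry} {i : ℕ} (h : i ≤ st.length) :
    bbOf (st ++ [en]) i = bbOf st i := by
  cases i with
  | zero => rfl
  | succ i => show enOf _ i + 1 = enOf _ i + 1; rw [enOf_append_lt (by omega)]

/-- chains of choices from the creatures of `st`, indices in `[i, m)` -/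
def chainsUpTo (st : List Entry) (i m : ℕ) : Set (ℕ → Option ℕ) :=
  {p | ∃ g : ℕ → (ℕ → Option ℕ),
    (∀ j, i ≤ j → j < m → g j ∈ (crOf st j).val) ∧ p = foldc i m g}

lemma chains_self {st : List Entry} {i m : ℕ} (h : m ≤ i) :
    chainsUpTo st i m = {emptyf} := by
  ext p
  constructor
  · rintro ⟨g, _, rfl⟩
    rw [foldc_le h]
    rfl
  · rintro rfl
    exact ⟨fun _ => emptyf, fun j h1 h2 => by omega, (foldc_le h _).symm⟩

lemma foldc_congr {i m : ℕ} {g g' : ℕ → (ℕ → Option ℕ)}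
    (h : ∀ j, i ≤ j → j < m → g j = g' j) : foldc i m g = foldc i m g' := by
  induction m with
  | zero => rfl
  | succ m ih =>
    rw [foldc_succ, foldc_succ]
    by_cases him : i ≤ m
    · rw [if_pos him, if_pos him, ih (fun j h1 h2 => h j h1 (by omega)), h m him (by omega)]
    · rw [if_neg him, if_neg him, ih (fun j h1 h2 => h j h1 (by omega))]

lemma chains_succ {st : List Entry} {i m : ℕ} (h : i ≤ m) :
    chainsUpTo st i (m + 1)
      = Set.image2 funion (chainsUpTo st i m) ((crOf st m).val : Set (ℕ → Option ℕ)) := by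
  ext p
  constructor
  · rintro ⟨g, hg, rfl⟩
    rw [foldc_succ, if_pos h]
    exact ⟨foldc i m g, ⟨g, fun j h1 h2 => hg j h1 (by omega), rfl⟩,
      g m, hg m h (by omega), rfl⟩
  · rintro ⟨q, ⟨g, hg, rfl⟩, f, hf, rfl⟩
    refine ⟨fun j => if j = m then f else g j, ?_, ?_⟩
    · intro j h1 h2
      by_cases hj : j = m
      · subst hj
        show (if j = j then f else g j) ∈ _
        rw [if_pos rfl]
        exact hf
      · show (if j = m then f else g j) ∈ _
        rw [if_neg hj]
        exact hg j h1 (by omega)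
    · rw [foldc_succ, if_pos h]
      rw [if_pos rfl]
      have h3 : foldc i m g = foldc i m (fun j => if j = m then f else g j) :=
        foldc_congr (fun j h1 h2 => by
          show g j = if j = m then f else g j
          rw [if_neg (by omega)])
      rw [h3]

lemma chains_congr {st st' : List Entry} {i m : ℕ}
    (h : ∀ j, i ≤ j → j < m → crOf st j = crOf st' j) :
    chainsUpTo st i m = chainsUpTo st' i m := by
  unfold chainsUpTo
  ext p
  constructor
  · rintro ⟨g, hg, rfl⟩
    exact ⟨g, fun j h1 h2 => (h j h1 h2) ▸ hg j h1 h2, rfl⟩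
  · rintro ⟨g, hg, rfl⟩
    exact ⟨g, fun j h1 h2 => (h j h1 h2).symm ▸ hg j h1 h2, rfl⟩

lemma chains_finite (st : List Entry) (i m : ℕ) : (chainsUpTo st i m).Finite := by
  induction m with
  | zero => rw [chains_self (by omega)]; exact Set.finite_singleton _
  | succ m ih =>
    by_cases h : i ≤ m
    · rw [chains_succ h]
      exact Set.Finite.image2 _ ih ((crOf st m).val).finite_toSet
    · rw [chains_self (by omega)]
      exact Set.finite_singleton _

variable (t : ℕ → Creature1) (d : ℕ → (ℕ → Option ℕ) → ℕ) (U : ℕ → Ultrafilter XX)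

/-- the recursion invariant -/
def GoodSt (st : List Entry) : Prop :=
  (∀ i, i < st.length → crOf st i ∈ Sigma1 t (bbOf st i) (enOf st i)) ∧
  (∀ i, i < st.length → i + 2 ≤ (crOf st i).A.card) ∧
  (∀ i, i < st.length → ∀ p ∈ chainsUpTo st i st.length,
      Bset d (bbOf st i) p (epsOf st i) ∈ U (bbOf st st.length)) ∧
  (∀ i, i < st.length → ∀ p ∈ chainsUpTo st i st.length, d (bbOf st i) p = epsOf st i)

lemma step_exists (hc : Consec t) (hUT : U ∈ TT t) (hidem : umul U U = U)
    (ll : ℕ → ℕ) (hd : ∀ k f, d k f < ll k)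
    (st : List Entry) (hG : GoodSt t d U st) :
    ∃ en : Entry, GoodSt t d U (st ++ [en]) := by
  obtain ⟨hG1, hG2, hG3, hG4⟩ := hG
  set n := st.length with hn
  set b := bbOf st n with hb
  -- choose the new color
  obtain ⟨εn, hεn⟩ := exists_color (U b) (ll b) (fun x => d b x.2)
    (by
      have : {x : XX | d b x.2 < ll b} = Set.univ := by
        ext x; simp only [Set.mem_setOf_eq, Set.mem_univ, iff_true]; exact hd b x.2
      rw [this]; exact Filter.univ_mem)
  set epsx : ℕ → ℕ := fun i => if i < n then epsOf st i else εn with hepsx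
  have hBase : ∀ i, i ≤ n → ∀ p ∈ chainsUpTo st i n,
      Bset d (bbOf st i) p (epsx i) ∈ U b := by
    intro i hi p hp
    rcases Nat.lt_or_ge i n with hlt | hge
    · simp only [hepsx, if_pos hlt]
      exact hG3 i hlt p hp
    · have hieq : i = n := by omega
      subst hieq
      rw [chains_self le_rfl] at hp
      rw [Set.mem_singleton_iff] at hp
      subst hp
      simp only [hepsx, if_neg (by omega : ¬ n < n)]
      have : Bset d (bbOf st n) emptyf εn = {x : XX | d b x.2 = εn} := by
        ext x
        simp only [Bset, Set.mem_setOf_eq, funion_emptyf, ← hb]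
      rw [this]
      exact hεn
  -- the target set
  set Gset : Set XX := ⋂ i ∈ Finset.range (n + 1), ⋂ p ∈ chainsUpTo st i n,
    (Bset d (bbOf st i) p (epsx i) ∩
      {x : XX | Bset d (bbOf st i) (funion p x.2) (epsx i) ∈ U (x.1 + 1)}) with hGset
  have hGmem : Gset ∈ U b := by
    rw [hGset]
    refine (Filter.biInter_finset_mem _).mpr (fun i hi => ?_)
    refine (Filter.biInter_mem (chains_finite st i n)).mpr (fun p hp => ?_)
    have hi' : i ≤ n := by
      simp only [Finset.mem_range] at hi; omega
    exact Filter.inter_mem (hBase i hi' p hp) (star_mem hidem (hBase i hi' p hp))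
  obtain ⟨e, σ, hσ, hcard, hval⟩ := hUT b Gset hGmem (n + 2)
  refine ⟨(σ, e, εn), ?_, ?_, ?_, ?_⟩
  all_goals
    have hlen : (st ++ [(σ, e, εn)]).length = n + 1 := by
      rw [List.length_append]; rfl
  · -- G1
    intro i hi
    rw [hlen] at hi
    rcases Nat.lt_or_ge i n with hlt | hge
    · rw [crOf_append_lt hlt, enOf_append_lt hlt, bbOf_append (by omega)]
      exact hG1 i hlt
    · have hieq : i = n := by omega
      subst hieq
      rw [crOf_append_self, enOf_append_self, bbOf_append le_rfl]
      exact hσ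
  · -- G2
    intro i hi
    rw [hlen] at hi
    rcases Nat.lt_or_ge i n with hlt | hge
    · rw [crOf_append_lt hlt]; exact hG2 i hlt
    · have hieq : i = n := by omega
      subst hieq
      rw [crOf_append_self]
      exact hcard
  · -- G3
    intro i hi p' hp'
    rw [hlen] at hi
    have hin : i ≤ n := by omega
    have hceq : chainsUpTo (st ++ [(σ, e, εn)]) i n = chainsUpTo st i n :=
      chains_congr (fun j h1 h2 => crOf_append_lt (show j < st.length by omega))
    have hcrn : crOf (st ++ [(σ, e, εn)]) n = σ := crOf_append_self
    have hp2 : p' ∈ Set.image2 funion (chainsUpTo st i n) (σ.val : Set (ℕ → Option ℕ)) := by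
      rw [hlen, chains_succ hin, hceq, hcrn] at hp'
      exact hp'
    obtain ⟨p, hp, f, hf, rfl⟩ := hp2
    have hGf := hval f hf
    have hGf2 := Set.mem_iInter₂.mp (Set.mem_iInter₂.mp hGf i
      (Finset.mem_range.mpr (by omega))) p hp
    have hbb1 : bbOf (st ++ [(σ, e, εn)]) i = bbOf st i := bbOf_append hin
    have hbb2 : bbOf (st ++ [(σ, e, εn)]) (n + 1) = e + 1 := by
      show enOf _ n + 1 = e + 1
      rw [enOf_append_self]
    have heps : epsOf (st ++ [(σ, e, εn)]) i = epsx i := by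
      rcases Nat.lt_or_ge i n with hlt | hge
      · rw [epsOf_append_lt hlt]
        simp only [hepsx, if_pos hlt]
      · have hieq : i = n := by omega
        subst hieq
        rw [epsOf_append_self]
        simp only [hepsx, if_neg (by omega : ¬ n < n)]
    rw [hlen, hbb1, hbb2, heps]
    exact hGf2.2
  · -- G4
    intro i hi p' hp'
    rw [hlen] at hi
    have hin : i ≤ n := by omega
    have hceq : chainsUpTo (st ++ [(σ, e, εn)]) i n = chainsUpTo st i n :=
      chains_congr (fun j h1 h2 => crOf_append_lt (show j < st.length by omega))
    have hcrn : crOf (st ++ [(σ, e, εn)]) n = σ := crOf_append_self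
    have hp2 : p' ∈ Set.image2 funion (chainsUpTo st i n) (σ.val : Set (ℕ → Option ℕ)) := by
      rw [hlen, chains_succ hin, hceq, hcrn] at hp'
      exact hp'
    obtain ⟨p, hp, f, hf, rfl⟩ := hp2
    have hGf := hval f hf
    have hGf2 := Set.mem_iInter₂.mp (Set.mem_iInter₂.mp hGf i
      (Finset.mem_range.mpr (by omega))) p hp
    have hbb1 : bbOf (st ++ [(σ, e, εn)]) i = bbOf st i := bbOf_append hin
    have heps : epsOf (st ++ [(σ, e, εn)]) i = epsx i := by
      rcases Nat.lt_or_ge i n with hlt | hge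
      · rw [epsOf_append_lt hlt]
        simp only [hepsx, if_pos hlt]
      · have hieq : i = n := by omega
        subst hieq
        rw [epsOf_append_self]
        simp only [hepsx, if_neg (by omega : ¬ n < n)]
    rw [hbb1, heps]
    exact hGf2.1

end Main
end RS
namespace RS
section Rec

variable (t : ℕ → Creature1) (d : ℕ → (ℕ → Option ℕ) → ℕ) (U : ℕ → Ultrafilter XX)
  (ll : ℕ → ℕ)
variable (hc : Consec t) (hUT : U ∈ TT t) (hidem : umul U U = U)
  (hd : ∀ k f, d k f < ll k)

lemma good_nil : GoodSt t d U [] :=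
  ⟨fun i hi => absurd hi (by simp), fun i hi => absurd hi (by simp),
   fun i hi => absurd hi (by simp), fun i hi => absurd hi (by simp)⟩

noncomputable def RecSt : ℕ → {st : List Entry // GoodSt t d U st}
  | 0 => ⟨[], good_nil t d U⟩
  | m + 1 =>
    ⟨(RecSt m).1 ++ [Classical.choose
        (step_exists t d U hc hUT hidem ll hd (RecSt m).1 (RecSt m).2)],
      Classical.choose_spec
        (step_exists t d U hc hUT hidem ll hd (RecSt m).1 (RecSt m).2)⟩

lemma RecSt_succ (m : ℕ) :
    (RecSt t d U ll hc hUT hidem hd (m + 1)).1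
      = (RecSt t d U ll hc hUT hidem hd m).1 ++ [Classical.choose
        (step_exists t d U hc hUT hidem ll hd (RecSt t d U ll hc hUT hidem hd m).1
          (RecSt t d U ll hc hUT hidem hd m).2)] := rfl

lemma RecSt_length (m : ℕ) : (RecSt t d U ll hc hUT hidem hd m).1.length = m := by
  induction m with
  | zero => rfl
  | succ m ih => rw [RecSt_succ, List.length_append, ih]; rfl

/-- the m-th entry of the construction -/
noncomputable def entE (m : ℕ) : Entry :=
  (RecSt t d U ll hc hUT hidem hd (m + 1)).1.getD m dEntry

noncomputable def sF (m : ℕ) : Creature1 := (entE t d U ll hc hUT hidem hd m).1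
noncomputable def eF (m : ℕ) : ℕ := (entE t d U ll hc hUT hidem hd m).2.1
noncomputable def epsF (m : ℕ) : ℕ := (entE t d U ll hc hUT hidem hd m).2.2

noncomputable def bbF : ℕ → ℕ
  | 0 => 0
  | m + 1 => eF t d U ll hc hUT hidem hd m + 1

lemma RecSt_getD {i m : ℕ} (h : i < m) :
    (RecSt t d U ll hc hUT hidem hd m).1.getD i dEntry = entE t d U ll hc hUT hidem hd i := by
  induction m with
  | zero => omega
  | succ m ih =>
    rcases Nat.lt_or_ge i m with hlt | hge
    · rw [show (RecSt t d U ll hc hUT hidem hd (m+1)).1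
          = (RecSt t d U ll hc hUT hidem hd m).1 ++ _ from RecSt_succ t d U ll hc hUT hidem hd m,
        getD_append_lt (by rw [RecSt_length]; exact hlt)]
      exact ih hlt
    · have : i = m := by omega
      subst this
      rfl

lemma crOf_RecSt {i m : ℕ} (h : i < m) :
    crOf (RecSt t d U ll hc hUT hidem hd m).1 i = sF t d U ll hc hUT hidem hd i := by
  unfold crOf sF
  rw [RecSt_getD t d U ll hc hUT hidem hd h]

lemma enOf_RecSt {i m : ℕ} (h : i < m) :
    enOf (RecSt t d U ll hc hUT hidem hd m).1 i = eF t d U ll hc hUT hidem hd i := by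
  unfold enOf eF
  rw [RecSt_getD t d U ll hc hUT hidem hd h]

lemma epsOf_RecSt {i m : ℕ} (h : i < m) :
    epsOf (RecSt t d U ll hc hUT hidem hd m).1 i = epsF t d U ll hc hUT hidem hd i := by
  unfold epsOf epsF
  rw [RecSt_getD t d U ll hc hUT hidem hd h]

lemma bbOf_RecSt {i m : ℕ} (h : i ≤ m) :
    bbOf (RecSt t d U ll hc hUT hidem hd m).1 i = bbF t d U ll hc hUT hidem hd i := by
  cases i with
  | zero => rfl
  | succ i =>
    show enOf _ i + 1 = _
    rw [enOf_RecSt t d U ll hc hUT hidem hd (by omega)]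
    rfl

lemma sF_sigma (m : ℕ) :
    sF t d U ll hc hUT hidem hd m ∈ Sigma1 t (bbF t d U ll hc hUT hidem hd m)
      (eF t d U ll hc hUT hidem hd m) := by
  have hG1 := (RecSt t d U ll hc hUT hidem hd (m + 1)).2.1
  have := hG1 m (by rw [RecSt_length]; omega)
  rwa [crOf_RecSt t d U ll hc hUT hidem hd (by omega),
    enOf_RecSt t d U ll hc hUT hidem hd (by omega),
    bbOf_RecSt t d U ll hc hUT hidem hd (by omega)] at this

lemma sF_card (m : ℕ) : m + 2 ≤ (sF t d U ll hc hUT hidem hd m).A.card := by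
  have hG2 := (RecSt t d U ll hc hUT hidem hd (m + 1)).2.2.1
  have := hG2 m (by rw [RecSt_length]; omega)
  rwa [crOf_RecSt t d U ll hc hUT hidem hd (by omega)] at this

lemma sF_color {i m : ℕ} (h : i < m) :
    ∀ p ∈ chainsUpTo (RecSt t d U ll hc hUT hidem hd m).1 i m,
      d (bbF t d U ll hc hUT hidem hd i) p = epsF t d U ll hc hUT hidem hd i := by
  intro p hp
  have hG4 := (RecSt t d U ll hc hUT hidem hd m).2.2.2.2
  have hlen := RecSt_length t d U ll hc hUT hidem hd m
  have hp' : p ∈ chainsUpTo (RecSt t d U ll hc hUT hidem hd m).1 i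
      ((RecSt t d U ll hc hUT hidem hd m).1.length) := by
    rw [hlen]; exact hp
  have := hG4 i (by rw [hlen]; exact h) p hp'
  rwa [bbOf_RecSt t d U ll hc hUT hidem hd (by omega),
    epsOf_RecSt t d U ll hc hUT hidem hd h] at this

end Rec
end RS

/- STATEMENT 11 (Theorem 2.10RS(a), Roslanowski–Shelah, recovered):
Let t̄ ∈ PC^tt_∞(K_1, Σ_1^*) and for each k < ω let l_k ≥ 1 and d_k : pos^tt(t̄⟨k⟩) → l_k
(modelled as a total coloring with values < l_k).  Then there is s̄ ≤ t̄ in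
PC^tt_∞(K_1, Σ_1^*) with m^{s_0}_dn = m^{t_0}_dn such that for each i < ω, if k is such
that s_i ∈ Σ^tt(t̄⟨k⟩), then d_k restricted to pos^tt(s̄⟨i⟩) is constant. -/
theorem stmt11 (t : ℕ → Creature1) (ht : PCtt1 t)
    (l : ℕ → ℕ) (hl : ∀ k, 1 ≤ l k)
    (d : ℕ → (ℕ → Option ℕ) → ℕ) (hd : ∀ k f, d k f < l k) :
    ∃ s : ℕ → Creature1, PCtt1 s ∧ le1 s t ∧ (s 0).mdn = (t 0).mdn ∧
      ∀ i k, s i ∈ SigmattTail1 t k →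
        ∃ ε, ∀ f ∈ postt1 s i, d k f = ε := by
  obtain ⟨hc, ht2⟩ := ht
  have hc' : RS.Consec t := hc
  obtain ⟨U, hUT, hidem⟩ := RS.exists_idem t hc' ht2
  refine ⟨RS.sF t d U l hc' hUT hidem hd, ?_, ?_, ?_, ?_⟩
  case _ =>
    constructor
    · intro m
      have h1 := (RS.sF_sigma t d U l hc' hUT hidem hd m).2.1
      have h2 := (RS.sF_sigma t d U l hc' hUT hidem hd (m + 1)).1
      rw [h1, h2]
      show (t (RS.eF t d U l hc' hUT hidem hd m)).mup
        = (t (RS.eF t d U l hc' hUT hidem hd m + 1)).mdn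
      exact hc _
    · have hmono : ∀ m : ℕ, Real.logb 2 ((m : ℝ) + 2)
          ≤ (RS.sF t d U l hc' hUT hidem hd m).nor := by
        intro m
        rw [(RS.sF t d U l hc' hUT hidem hd m).hnor]
        apply Real.logb_le_logb_of_le one_lt_two (by positivity)
        have := RS.sF_card t d U l hc' hUT hidem hd m
        exact_mod_cast this
      refine tendsto_atTop_mono hmono ?_
      have h2 : Tendsto (fun m : ℕ => (m : ℝ) + 2) atTop atTop :=
        Filter.tendsto_atTop_add_const_right atTop 2 tendsto_natCast_atTop_atTop
      exact (Real.tendsto_logb_atTop one_lt_two).comp h2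
  case _ =>
    refine ⟨RS.bbF t d U l hc' hUT hidem hd, ?_, ?_⟩
    · apply strictMono_nat_of_lt_succ
      intro m
      have h1 : RS.bbF t d U l hc' hUT hidem hd (m + 1)
          = RS.eF t d U l hc' hUT hidem hd m + 1 := rfl
      have h2 := hc'.le_of_sigma (RS.sF_sigma t d U l hc' hUT hidem hd m)
      omega
    · intro n
      have h1 : RS.bbF t d U l hc' hUT hidem hd (n + 1) - 1
          = RS.eF t d U l hc' hUT hidem hd n := by
        show RS.eF t d U l hc' hUT hidem hd n + 1 - 1 = _
        omega
      rw [h1]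
      exact RS.sF_sigma t d U l hc' hUT hidem hd n
  case _ =>
    have h1 := (RS.sF_sigma t d U l hc' hUT hidem hd 0).1
    rw [h1]
    rfl
  case _ =>
    intro i k hk
    have hconsec : RS.Consec (RS.sF t d U l hc' hUT hidem hd) := by
      intro m
      have h1 := (RS.sF_sigma t d U l hc' hUT hidem hd m).2.1
      have h2 := (RS.sF_sigma t d U l hc' hUT hidem hd (m + 1)).1
      rw [h1, h2]
      exact hc _
    obtain ⟨n'', hn''⟩ := Set.mem_iUnion.mp hk
    have hk1 : (RS.sF t d U l hc' hUT hidem hd i).mdn = (t k).mdn := hn''.1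
    have hk2 : (RS.sF t d U l hc' hUT hidem hd i).mdn
        = (t (RS.bbF t d U l hc' hUT hidem hd i)).mdn :=
      (RS.sF_sigma t d U l hc' hUT hidem hd i).1
    have hkeq : k = RS.bbF t d U l hc' hUT hidem hd i :=
      hc'.mdn_strictMono.injective (by rw [← hk1, hk2])
    refine ⟨RS.epsF t d U l hc' hUT hidem hd i, ?_⟩
    intro f hf
    obtain ⟨n', g, hg1, hg2, hg3⟩ := hf
    have hg'm : ∀ j, i ≤ j → j < i + n' + 1 →
        (fun j => g (j - i)) j ∈ (RS.sF t d U l hc' hUT hidem hd j).val := by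
      intro j h1 h2
      have h3 := hg1 (j - i) (by omega)
      have h4 : i + (j - i) = j := by omega
      rw [h4] at h3
      exact h3
    have hfe : f = RS.foldc i (i + n' + 1) (fun j => g (j - i)) := by
      funext j'
      by_cases hex : ∃ j, i ≤ j ∧ j < i + n' + 1
          ∧ j' ∈ (RS.sF t d U l hc' hUT hidem hd j).u
      · obtain ⟨j, h1, h2, h3⟩ := hex
        rw [RS.foldc_eval_mem hconsec hg'm h1 h2 h3]
        have h4 : i + (j - i) = j := by omega
        have h5 := hg2 (j - i) (by omega) j' (by rw [h4]; exact h3)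
        exact h5
      · push_neg at hex
        rw [RS.foldc_eval_none hg'm (fun j h1 h2 hj => hex j h1 h2 hj)]
        exact hg3 j' (fun i' hi' => hex (i + i') (by omega) (by omega))
    have hmem : f ∈ RS.chainsUpTo
        (RS.RecSt t d U l hc' hUT hidem hd (i + n' + 1)).1 i (i + n' + 1) := by
      refine ⟨fun j => g (j - i), ?_, hfe⟩
      intro j h1 h2
      rw [RS.crOf_RecSt t d U l hc' hUT hidem hd h2]
      exact hg'm j h1 h2
    have hcol := RS.sF_color t d U l hc' hUT hidem hd
      (show i < i + n' + 1 by omega) f hmem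
    rw [hkeq]
    exact hcol
end

section
/- (Roslanowski–Shelah, recovered) Let t̄ ∈ PC^tt_∞(K_1, Σ_1^*), let l ≥ 1, and for each k < ω let d_k : pos^tt(t̄⟨k⟩) → l be given. Then there is an s̄ ≤ t̄ in PC^tt_∞(K_1, Σ_1^*) and an l′ < l such that for each i < ω, if k is such that s_i ∈ Σ^tt(t̄⟨k⟩) and f ∈ pos^tt(s̄⟨i⟩), then d_k(f) = l′. -/
open Filter

/- STATEMENT 12 (Theorem 2.10RS(b), Roslanowski–Shelah, recovered):
Let t̄ ∈ PC^tt_∞(K_1, Σ_1^*), l ≥ 1, and for each k < ω let d_k : pos^tt(t̄⟨k⟩) → l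
(modelled as a total coloring with values < l).  Then there are s̄ ≤ t̄ in
PC^tt_∞(K_1, Σ_1^*) and l′ < l such that for each i < ω, if k is such that
s_i ∈ Σ^tt(t̄⟨k⟩) and f ∈ pos^tt(s̄⟨i⟩), then d_k(f) = l′. -/
namespace Stmt12Aux

abbrev PF := ℕ → Option ℕ

def d0 : PF := fun _ => none

variable (t : ℕ → Creature1)

/-- Full words over `t`: finite lists whose `i`-th entry belongs to `val (t i)`. -/
def SW : Type := {L : List PF // ∀ i : ℕ, ∀ _ : i < L.length, L[i] ∈ (t i).val}

namespace SW

variable {t}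

/-- `i`-th block of a word, default `d0`. -/
def blk (x : SW t) (i : ℕ) : PF := x.1.getD i d0

lemma blk_mem (x : SW t) {i : ℕ} (h : i < x.1.length) : x.blk i ∈ (t i).val := by
  rw [blk, List.getD_eq_getElem _ _ h]; exact x.2 i h

instance : Mul (SW t) :=
  ⟨fun x y => ⟨x.1 ++ y.1.drop x.1.length, by
    intro i h
    by_cases hi : i < x.1.length
    · rw [List.getElem_append_left hi]; exact x.2 i hi
    · push_neg at hi
      simp only [List.length_append, List.length_drop] at h
      have h3 : i < y.1.length := by omega
      have e : (x.1 ++ y.1.drop x.1.length)[i] = y.1[i] := by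
        rw [List.getElem_append_right (by omega), List.getElem_drop]
        congr 1
        omega
      rw [e]
      exact y.2 i h3⟩⟩

lemma mul_len (x y : SW t) : (x * y).1.length = max x.1.length y.1.length := by
  show (x.1 ++ y.1.drop x.1.length).length = _
  simp [List.length_append, List.length_drop]; omega

lemma blk_mul_left (x y : SW t) {i : ℕ} (h : i < x.1.length) : (x * y).blk i = x.blk i := by
  show (x.1 ++ y.1.drop x.1.length).getD i d0 = x.1.getD i d0
  rw [List.getD_eq_getElem _ _ (by simp [List.length_append, List.length_drop]; omega),
    List.getD_eq_getElem _ _ h, List.getElem_append_left h]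

lemma blk_mul_right (x y : SW t) {i : ℕ} (h : x.1.length ≤ i) : (x * y).blk i = y.blk i := by
  show (x.1 ++ y.1.drop x.1.length).getD i d0 = y.1.getD i d0
  by_cases h2 : i < y.1.length
  · rw [List.getD_eq_getElem _ _ (by simp [List.length_append, List.length_drop]; omega),
      List.getD_eq_getElem _ _ h2, List.getElem_append_right (by omega)]
    rw [List.getElem_drop]
    congr 1
    omega
  · rw [List.getD_eq_default _ _ (by simp [List.length_append, List.length_drop]; omega),
      List.getD_eq_default _ _ (by omega)]

lemma ext_blk {x y : SW t} (hlen : x.1.length = y.1.length)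
    (h : ∀ i < x.1.length, x.blk i = y.blk i) : x = y := by
  apply Subtype.ext
  apply List.ext_getElem hlen
  intro i h1 h2
  have := h i h1
  rwa [blk, blk, List.getD_eq_getElem _ _ h1, List.getD_eq_getElem _ _ h2] at this

lemma blk_mul (x y : SW t) (i : ℕ) :
    (x * y).blk i = if i < x.1.length then x.blk i else y.blk i := by
  split_ifs with h
  · exact blk_mul_left x y h
  · exact blk_mul_right x y (by omega)

instance : Semigroup (SW t) where
  mul_assoc x y z := by
    apply ext_blk
    · simp only [mul_len]; omega
    · intro i _
      simp only [blk_mul, mul_len]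
      split_ifs <;> first | rfl | omega

end SW

/-- defaults -/
noncomputable def dflt (p : ℕ) : PF := (t p).hvalne.choose

lemma dflt_mem (p : ℕ) : dflt t p ∈ (t p).val := (t p).hvalne.choose_spec

open Classical in
noncomputable def wit (p a : ℕ) : PF :=
  if h : a ∈ (t p).A then (((t p).hproj a).mp h).choose else dflt t p

lemma wit_mem (p a : ℕ) : wit t p a ∈ (t p).val := by
  rw [wit]
  split_ifs with h
  · exact (((t p).hproj a).mp h).choose_spec.1
  · exact dflt_mem t p

lemma wit_idx (p a : ℕ) (h : a ∈ (t p).A) : wit t p a ((t p).idx) = some a := by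
  rw [wit, dif_pos h]
  exact (((t p).hproj a).mp h).choose_spec.2

section Levels

variable {t}

lemma mup_le_mdn (ht : ∀ n, (t n).mup = (t (n + 1)).mdn) : ∀ {p q : ℕ}, p < q → (t p).mup ≤ (t q).mdn := by
  intro p q h
  induction q with
  | zero => omega
  | succ n ih =>
    rcases Nat.lt_succ_iff_lt_or_eq.mp h with h' | h'
    · exact le_trans (ih h') (le_trans (le_of_lt (t n).hm) (le_of_eq (ht n)))
    · exact le_of_eq (h' ▸ ht p)

lemma mem_u_bounds {p j : ℕ} (h : j ∈ (t p).u) : (t p).mdn ≤ j ∧ j < (t p).mup := by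
  have := (t p).hu h
  rwa [Finset.mem_Ico] at this

lemma level_unique (ht : ∀ n, (t n).mup = (t (n + 1)).mdn) {p q j : ℕ} (hp : j ∈ (t p).u) (hq : j ∈ (t q).u) : p = q := by
  by_contra hne
  rcases Nat.lt_or_ge p q with h | h
  · have h1 := (mem_u_bounds hp).2
    have h2 := (mem_u_bounds hq).1
    have := mup_le_mdn ht h
    omega
  · have h' : q < p := by omega
    have h1 := (mem_u_bounds hq).2
    have h2 := (mem_u_bounds hp).1
    have := mup_le_mdn ht h'
    omega

lemma mup_le_mup (ht : ∀ n, (t n).mup = (t (n + 1)).mdn) {p q : ℕ} (h : p ≤ q) :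
    (t p).mup ≤ (t q).mup := by
  rcases lt_or_eq_of_le h with h' | h'
  · exact le_trans (mup_le_mdn ht h') (le_of_lt (t q).hm)
  · rw [h']

lemma mdn_strictMono (ht : ∀ n, (t n).mup = (t (n + 1)).mdn) : StrictMono (fun p => (t p).mdn) := by
  apply strictMono_nat_of_lt_succ
  intro n
  have := (t n).hm
  have := ht n
  omega

end Levels

open Classical in
/-- glue of a word from level `e` on. -/
noncomputable def glue (e : ℕ) (x : SW t) : PF := fun j =>
  if h : ∃ p, e ≤ p ∧ p < x.1.length ∧ j ∈ (t p).u then x.blk h.choose j else none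

section Glue

variable {t}

lemma glue_eq_blk (ht : ∀ n, (t n).mup = (t (n + 1)).mdn) {e p j : ℕ} {x : SW t} (hep : e ≤ p) (hpl : p < x.1.length)
    (hj : j ∈ (t p).u) : glue t e x j = x.blk p j := by
  rw [glue]
  have h : ∃ p, e ≤ p ∧ p < x.1.length ∧ j ∈ (t p).u := ⟨p, hep, hpl, hj⟩
  rw [dif_pos h]
  have hs := h.choose_spec
  rw [level_unique ht hs.2.2 hj]

lemma glue_eq_none {e j : ℕ} {x : SW t} (h : ∀ p, e ≤ p → p < x.1.length → j ∉ (t p).u) :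
    glue t e x j = none := by
  rw [glue, dif_neg]
  rintro ⟨p, h1, h2, h3⟩
  exact h p h1 h2 h3

end Glue

/-- a canonical word of default blocks of length `m`, with one more block `p` appended. -/
noncomputable def fplusw (m : ℕ) (p : PF) (hp : p ∈ (t m).val) : SW t :=
  ⟨((List.range m).map (dflt t)) ++ [p], by
    intro i h
    simp only [List.length_append, List.length_map, List.length_range, List.length_singleton] at h
    by_cases hi : i < m
    · rw [List.getElem_append_left (by simpa using hi)]
      simp only [List.getElem_map, List.getElem_range]
      exact dflt_mem t i
    · have hi' : i = m := by omega
      subst hi'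
      rw [List.getElem_append_right (by simp)]
      simpa using hp⟩

lemma fplusw_len (m : ℕ) (p : PF) (hp : p ∈ (t m).val) : (fplusw t m p hp).1.length = m + 1 := by
  simp [fplusw]

lemma fplusw_blk (m : ℕ) (p : PF) (hp : p ∈ (t m).val) : (fplusw t m p hp).blk m = p := by
  rw [SW.blk, List.getD_eq_getElem _ _ (by simp [fplusw])]
  simp [fplusw]

/-- `X` supports a creature-family with position `≥ a` and at least `k` letters. -/
def Supports (X : Set (SW t)) (a k : ℕ) : Prop :=
  ∃ b m, ∃ B : Finset ℕ, ∃ y : ℕ → SW t,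
    a ≤ m ∧ m < b ∧ k ≤ B.card ∧ B ⊆ (t m).A ∧
    ∀ β ∈ B, y β ∈ X ∧ (y β).1.length = b ∧ (y β).blk m ((t m).idx) = some β

variable {t}

lemma Supports.mono {X Y : Set (SW t)} {a k a' k' : ℕ} (h : Supports t X a k)
    (hXY : X ⊆ Y) (ha : a' ≤ a) (hk : k' ≤ k) : Supports t Y a' k' := by
  obtain ⟨b, m, B, y, h1, h2, h3, h4, h5⟩ := h
  exact ⟨b, m, B, y, le_trans ha h1, h2, le_trans hk h3, h4,
    fun β hβ => ⟨hXY (h5 β hβ).1, (h5 β hβ).2⟩⟩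

open Classical in
lemma Supports.union {X₁ X₂ : Set (SW t)} {a k₁ k₂ : ℕ}
    (h : Supports t (X₁ ∪ X₂) a (k₁ + k₂)) : Supports t X₁ a k₁ ∨ Supports t X₂ a k₂ := by
  obtain ⟨b, m, B, y, h1, h2, h3, h4, h5⟩ := h
  set B₁ := B.filter (fun β => y β ∈ X₁) with hB₁
  set B₂ := B.filter (fun β => ¬ (y β ∈ X₁)) with hB₂
  have hcard : B₁.card + B₂.card = B.card := Finset.card_filter_add_card_filter_not _
  rcases le_or_gt k₁ B₁.card with hk | hk
  · left
    refine ⟨b, m, B₁, y, h1, h2, hk, fun β hβ => h4 (Finset.mem_filter.mp hβ).1, fun β hβ => ?_⟩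
    have hβ' := Finset.mem_filter.mp hβ
    exact ⟨hβ'.2, ((h5 β hβ'.1).2)⟩
  · right
    refine ⟨b, m, B₂, y, h1, h2, by omega, fun β hβ => h4 (Finset.mem_filter.mp hβ).1, fun β hβ => ?_⟩
    have hβ' := Finset.mem_filter.mp hβ
    have := (h5 β hβ'.1).1
    rcases this with hx | hx
    · exact absurd hx hβ'.2
    · exact ⟨hx, (h5 β hβ'.1).2⟩

lemma exists_card (ht2 : Tendsto (fun n => (t n).nor) atTop atTop) (a k : ℕ) :
    ∃ m, a ≤ m ∧ k ≤ (t m).A.card := by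
  rcases Nat.eq_zero_or_pos k with rfl | hk0
  · exact ⟨a, le_refl _, Nat.zero_le _⟩
  have h := ht2.eventually_ge_atTop (Real.logb 2 (k : ℝ) + 1)
  rw [eventually_atTop] at h
  obtain ⟨N, hN⟩ := h
  refine ⟨max a N, le_max_left _ _, ?_⟩
  set m := max a N with hm
  have h1 : Real.logb 2 (k : ℝ) + 1 ≤ Real.logb 2 (((t m).A.card : ℝ)) := by
    rw [← (t m).hnor]; exact hN m (le_max_right _ _)
  have hc1 : 1 ≤ (t m).A.card := Finset.card_pos.mpr (t m).hA
  have : (k : ℝ) ≤ (((t m).A.card : ℝ)) := by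
    by_contra hlt
    push_neg at hlt
    have := Real.logb_le_logb_of_le (b := 2) one_lt_two
      (by positivity) (le_of_lt hlt)
    linarith
  exact_mod_cast this

lemma supports_univ (ht1 : ∀ n, (t n).mup = (t (n + 1)).mdn)
    (ht2 : Tendsto (fun n => (t n).nor) atTop atTop) (a k : ℕ) :
    Supports t Set.univ a k := by
  obtain ⟨m, hm1, hm2⟩ := exists_card ht2 a k
  refine ⟨m + 1, m, (t m).A, fun β => fplusw t m (wit t m β) (wit_mem t m β),
    hm1, Nat.lt_succ_self m, hm2, le_refl _, fun β hβ => ?_⟩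
  refine ⟨Set.mem_univ _, fplusw_len t m _ _, ?_⟩
  rw [fplusw_blk]
  exact wit_idx t m β hβ

/-- richness of an ultrafilter. -/
def Rich (U : Ultrafilter (SW t)) : Prop := ∀ X ∈ U, ∀ a k, Supports t X a k

lemma exists_rich (ht1 : ∀ n, (t n).mup = (t (n + 1)).mdn)
    (ht2 : Tendsto (fun n => (t n).nor) atTop atTop) :
    ∃ U : Ultrafilter (SW t), Rich U := by
  set F : Filter (SW t) :=
    { sets := {X | ∃ a k, ¬ Supports t Xᶜ a k}
      univ_sets := by
        refine ⟨0, 1, fun hs => ?_⟩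
        obtain ⟨b, m, B, y, h1, h2, h3, h4, h5⟩ := hs
        obtain ⟨β, hβ⟩ := Finset.card_pos.mp (lt_of_lt_of_le zero_lt_one h3)
        exact absurd ((h5 β hβ).1) (by simp)
      sets_of_superset := by
        rintro X Y ⟨a, k, hX⟩ hXY
        exact ⟨a, k, fun hs => hX (hs.mono (Set.compl_subset_compl.mpr hXY) le_rfl le_rfl)⟩
      inter_sets := by
        rintro X Y ⟨a₁, k₁, hX⟩ ⟨a₂, k₂, hY⟩
        refine ⟨max a₁ a₂, k₁ + k₂, fun hs => ?_⟩
        rw [Set.compl_inter] at hs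
        rcases hs.union with h | h
        · exact hX (h.mono (le_refl _) (le_max_left _ _) le_rfl)
        · exact hY (h.mono (le_refl _) (le_max_right _ _) le_rfl) } with hF
  have hne : F.NeBot := by
    constructor
    intro hbot
    have : (∅ : Set (SW t)) ∈ F := by rw [hbot]; exact Filter.mem_bot
    obtain ⟨a, k, hS⟩ := this
    exact hS (by simpa using supports_univ ht1 ht2 a k)
  obtain ⟨U, hU⟩ := Ultrafilter.exists_le F
  refine ⟨U, fun X hX a k => ?_⟩
  by_contra hS
  have : Xᶜ ∈ U := hU (by exact ⟨a, k, by simpa using fun h => hS (h.mono le_rfl le_rfl le_rfl)⟩)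
  exact (Ultrafilter.compl_mem_iff_notMem.mp this) hX

attribute [local instance] Ultrafilter.mul Ultrafilter.semigroup

lemma mem_mul_iff {U V : Ultrafilter (SW t)} {X : Set (SW t)} :
    X ∈ U * V ↔ {x | {y | x * y ∈ X} ∈ V} ∈ U := by
  have h := Ultrafilter.eventually_mul U V (· ∈ X)
  simp only [Filter.eventually_iff, Ultrafilter.mem_coe] at h
  constructor
  · intro hX
    have := h.mp (by simpa using hX)
    simpa using this
  · intro hX
    have := h.mpr (by simpa using hX)
    simpa using this

lemma Rich.mul {U V : Ultrafilter (SW t)} (hU : Rich U) (hV : Rich V) : Rich (U * V) := by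
  intro X hX a k
  have hX' : {x : SW t | {y | x * y ∈ X} ∈ V} ∈ U := mem_mul_iff.mp hX
  obtain ⟨b, m, B, y, h1, h2, h3, h4, h5⟩ := hU _ hX' a k
  have hY : {z : SW t | ∀ β ∈ (B : Set ℕ), y β * z ∈ X} ∈ V := by
    rw [← Ultrafilter.mem_coe, ← Filter.eventually_iff]
    rw [eventually_all_finite B.finite_toSet]
    intro β hβ
    exact (h5 β hβ).1
  obtain ⟨b', m', B', y', g1, g2, g3, g4, g5⟩ := hV _ hY b 1
  obtain ⟨β', hβ'⟩ := Finset.card_pos.mp (lt_of_lt_of_le zero_lt_one g3)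
  set z := y' β' with hz
  have hzY : z ∈ {z : SW t | ∀ β ∈ (B : Set ℕ), y β * z ∈ X} := (g5 β' hβ').1
  have hzlen : z.1.length = b' := (g5 β' hβ').2.1
  refine ⟨b', m, B, fun β => y β * z, h1, by omega, h3, h4, fun β hβ => ?_⟩
  have hylen := (h5 β hβ).2.1
  refine ⟨hzY β hβ, ?_, ?_⟩
  · rw [SW.mul_len, hylen, hzlen]; omega
  · rw [SW.blk_mul_left _ _ (by omega)]
    exact (h5 β hβ).2.2

lemma isClosed_rich : IsClosed {U : Ultrafilter (SW t) | Rich U} := by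
  have he : {U : Ultrafilter (SW t) | Rich U} =
      ⋂ (X : Set (SW t)) (a : ℕ) (k : ℕ) (_ : ¬ Supports t X a k), {U : Ultrafilter (SW t) | Xᶜ ∈ U} := by
    ext U
    simp only [Set.mem_iInter, Set.mem_setOf_eq]
    constructor
    · intro hU X a k h
      rw [Ultrafilter.compl_mem_iff_notMem]
      intro hX
      exact h (hU X hX a k)
    · intro h X hX a k
      by_contra hs
      exact (Ultrafilter.compl_mem_iff_notMem.mp (h X a k hs)) hX
  rw [he]
  exact isClosed_iInter fun X => isClosed_iInter fun a => isClosed_iInter fun k =>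
    isClosed_iInter fun _ => ultrafilter_isClosed_basic _

lemma exists_idem_rich (ht1 : ∀ n, (t n).mup = (t (n + 1)).mdn)
    (ht2 : Tendsto (fun n => (t n).nor) atTop atTop) :
    ∃ U : Ultrafilter (SW t), Rich U ∧ U * U = U := by
  obtain ⟨U₀, hU₀⟩ := exists_rich ht1 ht2
  obtain ⟨U, hU, hidem⟩ := exists_idempotent_in_compact_subsemigroup
    (M := Ultrafilter (SW t)) (fun r => Ultrafilter.continuous_mul_left r)
    {U | Rich U} ⟨U₀, hU₀⟩ isClosed_rich.isCompact (fun x hx y hy => Rich.mul hx hy)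
  exact ⟨U, hU, hidem⟩

lemma long_mem {U : Ultrafilter (SW t)} (hR : Rich U) (e : ℕ) :
    {x : SW t | e < x.1.length} ∈ U := by
  by_contra h
  have hc : {x : SW t | e < x.1.length}ᶜ ∈ U := Ultrafilter.compl_mem_iff_notMem.mpr h
  obtain ⟨b, m, B, y, h1, h2, h3, h4, h5⟩ := hR _ hc (e + 1) 1
  obtain ⟨β, hβ⟩ := Finset.card_pos.mp (lt_of_lt_of_le zero_lt_one h3)
  have := (h5 β hβ).1
  have hlen := (h5 β hβ).2.1
  simp only [Set.mem_compl_iff, Set.mem_setOf_eq, not_lt] at this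
  omega

section Star

variable (U : Ultrafilter (SW t))

def star (A : Set (SW t)) : Set (SW t) := {x | x ∈ A ∧ {y | x * y ∈ A} ∈ U}

lemma star_subset {A : Set (SW t)} : star U A ⊆ A := fun _ hx => hx.1

lemma star_mem (hidem : U * U = U) {A : Set (SW t)} (hA : A ∈ U) : star U A ∈ U := by
  have h1 : {x : SW t | {y | x * y ∈ A} ∈ U} ∈ U := mem_mul_iff.mp (by rw [hidem]; exact hA)
  exact Filter.inter_mem hA h1

lemma star_step (hidem : U * U = U) {A : Set (SW t)} {x : SW t} (hx : x ∈ star U A) :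
    {y | x * y ∈ star U A} ∈ U := by
  have h1 : {y : SW t | x * y ∈ A} ∈ U := hx.2
  have h2 : {y : SW t | {z | y * z ∈ {w : SW t | x * w ∈ A}} ∈ U} ∈ U :=
    mem_mul_iff.mp (by rw [hidem]; exact h1)
  apply Filter.mem_of_superset (Filter.inter_mem h1 h2)
  rintro y ⟨hy1, hy2⟩
  show x * y ∈ A ∧ {z | (x * y) * z ∈ A} ∈ U
  refine ⟨hy1, ?_⟩
  have he : {z : SW t | (x * y) * z ∈ A} = {z : SW t | y * z ∈ {w : SW t | x * w ∈ A}} := by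
    ext z
    simp only [Set.mem_setOf_eq, mul_assoc]
  rw [he]
  exact hy2

end Star

section Color

variable (d : ℕ → PF → ℕ) (l : ℕ)

/-- color of the glue of `x` from `e` on, as a subset of `SW t`. -/
def Cset (e j : ℕ) : Set (SW t) := {x : SW t | e < x.1.length ∧ d e (glue t e x) = j}

variable {d l}
variable (U : Ultrafilter (SW t))

lemma exists_lofe (hd : ∀ k f, d k f < l) (hR : Rich U) (e : ℕ) :
    ∃ j, j < l ∧ Cset (t := t) d e j ∈ U := by
  by_contra h
  push_neg at h
  have hco : {x : SW t | ∀ j ∈ Set.Iio l, x ∈ (Cset (t := t) d e j)ᶜ} ∈ U := by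
    rw [← Ultrafilter.mem_coe, ← Filter.eventually_iff,
      eventually_all_finite (Set.finite_Iio l)]
    intro j hj
    rw [Filter.eventually_iff, Ultrafilter.mem_coe]
    exact Ultrafilter.compl_mem_iff_notMem.mpr (h j hj)
  obtain ⟨x, hx1, hx2⟩ := Ultrafilter.nonempty_of_mem (Filter.inter_mem (long_mem hR e) hco)
  have hj : d e (glue t e x) < l := hd _ _
  have : x ∈ Cset (t := t) d e (d e (glue t e x)) := ⟨hx1, rfl⟩
  exact (hx2 _ hj) this

open Classical in
noncomputable def lofe (e : ℕ) : ℕ :=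
  if h : ∃ j, j < l ∧ Cset (t := t) d e j ∈ U then h.choose else 0

lemma lofe_spec (hd : ∀ k f, d k f < l) (hR : Rich U) (e : ℕ) :
    lofe (d := d) (l := l) U e < l ∧ Cset (t := t) d e (lofe (d := d) (l := l) U e) ∈ U := by
  have hex := exists_lofe U hd hR e
  rw [lofe, dif_pos hex]
  exact hex.choose_spec

/-- the good sets: star of the color class of the `U`-majority color for start-level `e`. -/
noncomputable def Gset (e : ℕ) : Set (SW t) :=
  star U (Cset (t := t) d e (lofe (d := d) (l := l) U e))

lemma Gset_mem (hd : ∀ k f, d k f < l) (hR : Rich U) (hidem : U * U = U) (e : ℕ) :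
    Gset (d := d) (l := l) U e ∈ U :=
  star_mem U hidem (lofe_spec U hd hR e).2

lemma Gset_color {e : ℕ} {x : SW t} (hx : x ∈ Gset (d := d) (l := l) U e) :
    e < x.1.length ∧ d e (glue t e x) = lofe (d := d) (l := l) U e :=
  hx.1

lemma Gset_step (hidem : U * U = U) {e : ℕ} {x : SW t}
    (hx : x ∈ Gset (d := d) (l := l) U e) :
    {y | x * y ∈ Gset (d := d) (l := l) U e} ∈ U :=
  star_step U hidem hx

end Color

section Chain

/-- product of the words `c r, c (r+1), …, c (r+n)`. -/
def chain (c : ℕ → SW t) (r : ℕ) : ℕ → SW t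
  | 0 => c r
  | n + 1 => chain c r n * c (r + n + 1)

lemma chain_congr {c c' : ℕ → SW t} {r n : ℕ} (h : ∀ i ≤ n, c (r + i) = c' (r + i)) :
    chain c r n = chain c' r n := by
  induction n with
  | zero => simpa [chain] using h 0 (le_refl _)
  | succ n ih =>
    show chain c r n * c (r + n + 1) = chain c' r n * c' (r + n + 1)
    rw [ih (fun i hi => h i (by omega)), show r + n + 1 = r + (n + 1) by ring,
      h (n + 1) (le_refl _)]

variable {bo : ℕ → ℕ} {c : ℕ → SW t} {r n : ℕ}

lemma chain_len (hbo : StrictMono bo) (hlen : ∀ i ≤ n, (c (r + i)).1.length = bo (r + i + 1)) :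
    (chain c r n).1.length = bo (r + n + 1) := by
  induction n with
  | zero => simpa [chain] using hlen 0 (le_refl _)
  | succ n ih =>
    show (chain c r n * c (r + n + 1)).1.length = _
    rw [SW.mul_len, ih (fun i hi => hlen i (by omega))]
    have h1 := hlen (n + 1) (le_refl _)
    have h2 : bo (r + n + 1) ≤ bo (r + n + 1 + 1) := le_of_lt (hbo (by omega))
    rw [show r + (n + 1) = r + n + 1 by ring] at h1
    rw [h1, max_eq_right h2]
    ring

lemma chain_blk (hbo : StrictMono bo) (hlen : ∀ i ≤ n, (c (r + i)).1.length = bo (r + i + 1))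
    {i p : ℕ} (hi : i ≤ n) (hp1 : bo (r + i) ≤ p) (hp2 : p < bo (r + i + 1)) :
    (chain c r n).blk p = (c (r + i)).blk p := by
  induction n with
  | zero =>
    have : i = 0 := by omega
    subst this
    rfl
  | succ n ih =>
    show (chain c r n * c (r + n + 1)).blk p = _
    have hlen' : (chain c r n).1.length = bo (r + n + 1) :=
      chain_len hbo (fun i hi => hlen i (by omega))
    rcases lt_or_eq_of_le hi with h' | h'
    · have h : i ≤ n := by omega
      rw [SW.blk_mul_left _ _ (by
        rw [hlen']
        exact lt_of_lt_of_le hp2 (hbo.monotone (by omega)))]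
      exact ih (fun i hi => hlen i (by omega)) h
    · subst h'
      rw [SW.blk_mul_right _ _ (by
        rw [hlen']
        rw [show r + (n + 1) = r + n + 1 by ring] at hp1
        exact hp1)]
      rfl

end Chain

section ChainSet

variable (Y : ℕ → ℕ → SW t) (Bf : ℕ → Finset ℕ)

/-- all chains with letters from `Bf` between `r` and `q`. -/
def chainSet (r q : ℕ) : Set (SW t) :=
  {P | ∃ β : ℕ → ℕ, (∀ i, r ≤ i → i ≤ q → β i ∈ Bf i) ∧
    P = chain (fun i => Y i (β i)) r (q - r)}

lemma chainSet_finite (r : ℕ) : ∀ q, r ≤ q → (chainSet (t := t) Y Bf r q).Finite := by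
  intro q
  induction q with
  | zero =>
    intro hq
    have hq' : r = 0 := by omega
    subst hq'
    apply Set.Finite.subset ((Bf 0).finite_toSet.image (fun β => Y 0 β))
    rintro P ⟨β, hβ, rfl⟩
    exact ⟨β 0, by simpa using hβ 0 (le_refl _) (le_refl _), rfl⟩
  | succ q ih =>
    intro hq
    rcases Nat.lt_succ_iff_lt_or_eq.mp (Nat.lt_succ_of_le hq) with h | h
    · have hrq : r ≤ q := by omega
      apply Set.Finite.subset (Set.Finite.image2 (· * ·) (ih hrq)
        ((Bf (q + 1)).finite_toSet.image (fun β => Y (q + 1) β)))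
      rintro P ⟨β, hβ, rfl⟩
      have harith : q + 1 - r = (q - r) + 1 := by omega
      rw [harith]
      refine ⟨chain (fun i => Y i (β i)) r (q - r), ⟨β, fun i h1 h2 => hβ i h1 (by omega), rfl⟩,
        Y (q + 1) (β (q + 1)), ⟨β (q + 1), by simpa using hβ (q + 1) (by omega) (le_refl _), rfl⟩, ?_⟩
      show _ = chain (fun i => Y i (β i)) r (q - r) * (fun i => Y i (β i)) (r + (q - r) + 1)
      rw [show r + (q - r) + 1 = q + 1 by omega]
    · subst h
      apply Set.Finite.subset ((Bf (q + 1)).finite_toSet.image (fun β => Y (q + 1) β))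
      rintro P ⟨β, hβ, rfl⟩
      rw [Nat.sub_self]
      exact ⟨β (q + 1), by simpa using hβ (q + 1) (le_refl _) (le_refl _), rfl⟩

end ChainSet

section Construction

/-- data of one constructed block. -/
structure Blk (t : ℕ → Creature1) where
  a : ℕ
  b : ℕ
  m : ℕ
  B : Finset ℕ
  Y : ℕ → SW t

variable (U : Ultrafilter (SW t)) (d : ℕ → PF → ℕ) (l : ℕ)

structure GoodUpTo (F : ℕ → Blk t) (k : ℕ) : Prop where
  link : ∀ i, i + 1 < k → (F (i + 1)).a = (F i).b
  hm1 : ∀ i, i < k → (F i).a ≤ (F i).m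
  hm2 : ∀ i, i < k → (F i).m < (F i).b
  hcard : ∀ i, i < k → i + 1 ≤ (F i).B.card
  hBA : ∀ i, i < k → (F i).B ⊆ (t (F i).m).A
  hYlen : ∀ i, i < k → ∀ β ∈ (F i).B, ((F i).Y β).1.length = (F i).b
  hYidx : ∀ i, i < k → ∀ β ∈ (F i).B,
    ((F i).Y β).blk (F i).m ((t (F i).m).idx) = some β
  hinv : ∀ r q, r ≤ q → q < k → ∀ β : ℕ → ℕ, (∀ i, r ≤ i → i ≤ q → β i ∈ (F i).B) →
    chain (fun i => (F i).Y (β i)) r (q - r) ∈ Gset (d := d) (l := l) U ((F r).a)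

variable {U d l}

lemma goodUpTo_congr {F F' : ℕ → Blk t} {k : ℕ} (h : ∀ i, i < k → F i = F' i)
    (hG : GoodUpTo U d l F k) : GoodUpTo U d l F' k := by
  constructor
  · intro i hi
    rw [← h i (by omega), ← h (i + 1) (by omega)]
    exact hG.link i hi
  · intro i hi; rw [← h i hi]; exact hG.hm1 i hi
  · intro i hi; rw [← h i hi]; exact hG.hm2 i hi
  · intro i hi; rw [← h i hi]; exact hG.hcard i hi
  · intro i hi; rw [← h i hi]; exact hG.hBA i hi
  · intro i hi; rw [← h i hi]; exact hG.hYlen i hi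
  · intro i hi; rw [← h i hi]; exact hG.hYidx i hi
  · intro r q hrq hq β hβ
    have he : chain (fun i => (F' i).Y (β i)) r (q - r)
        = chain (fun i => (F i).Y (β i)) r (q - r) := by
      apply chain_congr
      intro i hi
      rw [h (r + i) (by omega)]
    rw [he, ← h r (by omega)]
    exact hG.hinv r q hrq hq β (fun i h1 h2 => by rw [h i (by omega)]; exact hβ i h1 h2)

lemma goodUpTo_zero (F : ℕ → Blk t) : GoodUpTo U d l F 0 := by
  constructor <;> first
  | (intro i hi; omega)
  | (intro i hi; exact absurd hi (by omega))
  | (intro r q hrq hq β hβ; exact absurd hq (by omega))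

lemma step_exists (hd : ∀ k f, d k f < l) (hR : Rich U) (hidem : U * U = U)
    {F : ℕ → Blk t} {k : ℕ} (hG : GoodUpTo U d l F k) :
    ∃ blk : Blk t, GoodUpTo U d l (Function.update F k blk) (k + 1) ∧
      blk.a = (if k = 0 then 0 else (F (k - 1)).b) := by
  classical
  set ak := if k = 0 then 0 else (F (k - 1)).b with hak
  set E : Set (SW t) := Gset (d := d) (l := l) U ak ∩
    {Z | ∀ r ∈ Set.Iio k, ∀ P ∈ chainSet (t := t) (fun i β => (F i).Y β) (fun i => (F i).B) r (k - 1),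
      P * Z ∈ Gset (d := d) (l := l) U ((F r).a)} with hE
  have hEU : E ∈ U := by
    apply Filter.inter_mem (Gset_mem U hd hR hidem ak)
    rw [← Filter.eventually_iff, eventually_all_finite (Set.finite_Iio k)]
    intro r hr
    simp only [Set.mem_Iio] at hr
    rw [eventually_all_finite (chainSet_finite (fun i β => (F i).Y β) (fun i => (F i).B) r (k - 1) (by omega))]
    intro P hP
    obtain ⟨β, hβ, rfl⟩ := hP
    have hPG : chain (fun i => (F i).Y (β i)) r ((k - 1) - r) ∈
        Gset (d := d) (l := l) U ((F r).a) :=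
      hG.hinv r (k - 1) (by omega) (by omega) β hβ
    exact Gset_step U hidem hPG
  obtain ⟨b, m, B, y, h1, h2, h3, h4, h5⟩ := hR E hEU ak (k + 1)
  refine ⟨⟨ak, b, m, B, y⟩, ?_, rfl⟩
  have hupk : ∀ i, i < k → Function.update F k ⟨ak, b, m, B, y⟩ i = F i := by
    intro i hi
    exact Function.update_of_ne (by omega) _ _
  have hupK : Function.update F k ⟨ak, b, m, B, y⟩ k = ⟨ak, b, m, B, y⟩ :=
    Function.update_self _ _ _
  constructor
  · intro i hi
    rcases Nat.lt_or_ge (i + 1) k with h | h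
    · rw [hupk i (by omega), hupk (i + 1) (by omega)]
      exact hG.link i h
    · have : i + 1 = k := by omega
      subst this
      rw [hupk i (by omega), hupK]
      show ak = (F i).b
      rw [hak, if_neg (by omega)]
      norm_num
  · intro i hi
    rcases Nat.lt_or_ge i k with h | h
    · rw [hupk i h]; exact hG.hm1 i h
    · have : i = k := by omega
      subst this
      rw [hupK]
      exact h1
  · intro i hi
    rcases Nat.lt_or_ge i k with h | h
    · rw [hupk i h]; exact hG.hm2 i h
    · have : i = k := by omega
      subst this
      rw [hupK]
      exact h2
  · intro i hi
    rcases Nat.lt_or_ge i k with h | h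
    · rw [hupk i h]; exact hG.hcard i h
    · have : i = k := by omega
      subst this
      rw [hupK]
      exact h3
  · intro i hi
    rcases Nat.lt_or_ge i k with h | h
    · rw [hupk i h]; exact hG.hBA i h
    · have : i = k := by omega
      subst this
      rw [hupK]
      exact h4
  · intro i hi
    rcases Nat.lt_or_ge i k with h | h
    · rw [hupk i h]; exact hG.hYlen i h
    · have : i = k := by omega
      subst this
      rw [hupK]
      exact fun β hβ => (h5 β hβ).2.1
  · intro i hi
    rcases Nat.lt_or_ge i k with h | h
    · rw [hupk i h]; exact hG.hYidx i h
    · have : i = k := by omega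
      subst this
      rw [hupK]
      exact fun β hβ => (h5 β hβ).2.2
  · intro r q hrq hq β hβ
    rcases Nat.lt_or_ge q k with h | h
    · have he : chain (fun i => (Function.update F k ⟨ak, b, m, B, y⟩ i).Y (β i)) r (q - r)
          = chain (fun i => (F i).Y (β i)) r (q - r) := by
        apply chain_congr
        intro i hi
        rw [hupk (r + i) (by omega)]
      rw [he, hupk r (by omega)]
      exact hG.hinv r q hrq h β
        (fun i hi1 hi2 => by rw [← hupk i (by omega)]; exact hβ i hi1 hi2)
    · have hqk : q = k := by omega
      rw [hqk] at hβ hrq ⊢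
      have hβq : β k ∈ B := by
        have := hβ k hrq (le_refl _)
        rwa [hupK] at this
      have hyE : y (β k) ∈ E := (h5 (β k) hβq).1
      rcases Nat.lt_or_ge r k with hrk | hrk
      · have harith : k - r = (k - 1 - r) + 1 := by omega
        have he : chain (fun i => (Function.update F k ⟨ak, b, m, B, y⟩ i).Y (β i)) r (k - r)
            = chain (fun i => (F i).Y (β i)) r (k - 1 - r) * y (β k) := by
          rw [harith]
          show chain (fun i => (Function.update F k ⟨ak, b, m, B, y⟩ i).Y (β i)) r (k - 1 - r) *
            (Function.update F k ⟨ak, b, m, B, y⟩ (r + (k - 1 - r) + 1)).Y (β (r + (k - 1 - r) + 1)) = _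
          have hidx : r + (k - 1 - r) + 1 = k := by omega
          rw [hidx]
          congr 1
          · apply chain_congr
            intro i hi
            rw [hupk (r + i) (by omega)]
          · rw [hupK]
        rw [he, hupk r (by omega)]
        have hP : chain (fun i => (F i).Y (β i)) r (k - 1 - r) ∈
            chainSet (t := t) (fun i β => (F i).Y β) (fun i => (F i).B) r (k - 1) := by
          refine ⟨β, fun i hi1 hi2 => ?_, rfl⟩
          have := hβ i hi1 (by omega)
          rwa [hupk i (by omega)] at this
        have := hyE.2 r (by simpa using hrk) _ hP
        simpa using this
      · have hrk' : r = k := by omega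
        rw [hrk']
        rw [show k - k = 0 by omega]
        show chain (fun i => (Function.update F k ⟨ak, b, m, B, y⟩ i).Y (β i)) k 0 ∈ _
        have he : chain (fun i => (Function.update F k ⟨ak, b, m, B, y⟩ i).Y (β i)) k 0
            = y (β k) := by
          show (Function.update F k ⟨ak, b, m, B, y⟩ k).Y (β k) = _
          rw [hupK]
        rw [he, hupK]
        exact hyE.1

end Construction

section Sequence

noncomputable instance : Inhabited (SW t) := ⟨⟨[], by intro i h; simp at h⟩⟩

noncomputable instance : Inhabited (Blk t) := ⟨⟨0, 0, 0, ∅, fun _ => default⟩⟩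

variable (U : Ultrafilter (SW t)) (d : ℕ → PF → ℕ) (l : ℕ)
variable (hd : ∀ k f, d k f < l) (hR : Rich U) (hidem : U * U = U)

noncomputable def GG : (k : ℕ) → {F : ℕ → Blk t // GoodUpTo U d l F k} := fun k =>
  Nat.rec ⟨fun _ => default, goodUpTo_zero _⟩
    (fun k p => ⟨Function.update p.1 k (step_exists hd hR hidem p.2).choose,
      (step_exists hd hR hidem p.2).choose_spec.1⟩) k

lemma GG_succ (k : ℕ) : (GG U d l hd hR hidem (k + 1)).1
    = Function.update (GG U d l hd hR hidem k).1 k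
      (step_exists hd hR hidem (GG U d l hd hR hidem k).2).choose := rfl

lemma GG_agree : ∀ k' k i, i < k → k ≤ k' →
    (GG U d l hd hR hidem k').1 i = (GG U d l hd hR hidem k).1 i := by
  intro k'
  induction k' with
  | zero => intro k i h1 h2; omega
  | succ k' ih =>
    intro k i h1 h2
    rcases eq_or_lt_of_le h2 with h | h
    · rw [h]
    · have hk : k ≤ k' := by omega
      rw [GG_succ, Function.update_of_ne (by omega)]
      exact ih k i h1 hk

/-- the constructed sequence of blocks. -/
noncomputable def FF : ℕ → Blk t := fun i => (GG U d l hd hR hidem (i + 1)).1 i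

lemma FF_eq {k i : ℕ} (h : i < k) : FF U d l hd hR hidem i = (GG U d l hd hR hidem k).1 i := by
  rw [FF, GG_agree U d l hd hR hidem k (i + 1) i (by omega) (by omega)]

lemma FF_good (k : ℕ) : GoodUpTo U d l (FF U d l hd hR hidem) k := by
  apply goodUpTo_congr (F := (GG U d l hd hR hidem k).1)
  · intro i hi
    exact (FF_eq U d l hd hR hidem hi).symm
  · exact (GG U d l hd hR hidem k).2

end Sequence

/-- everything needed for the final verification. -/
structure Setup (t : ℕ → Creature1) (d : ℕ → PF → ℕ) (l : ℕ) where
  ht1 : ∀ n, (t n).mup = (t (n + 1)).mdn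
  U : Ultrafilter (SW t)
  F : ℕ → Blk t
  r : ℕ → ℕ
  v : ℕ
  hv : v < l
  hrmono : StrictMono r
  hlofe : ∀ j, lofe (d := d) (l := l) U ((F (r j)).a) = v
  hlink : ∀ i, (F (i + 1)).a = (F i).b
  hm1 : ∀ i, (F i).a ≤ (F i).m
  hm2 : ∀ i, (F i).m < (F i).b
  hcard : ∀ i, i + 1 ≤ (F i).B.card
  hBA : ∀ i, (F i).B ⊆ (t (F i).m).A
  hYlen : ∀ i, ∀ β ∈ (F i).B, ((F i).Y β).1.length = (F i).b
  hYidx : ∀ i, ∀ β ∈ (F i).B, ((F i).Y β).blk (F i).m ((t (F i).m).idx) = some β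
  hinv : ∀ r' q, r' ≤ q → ∀ β : ℕ → ℕ, (∀ i, r' ≤ i → i ≤ q → β i ∈ (F i).B) →
    chain (fun i => (F i).Y (β i)) r' (q - r') ∈ Gset (d := d) (l := l) U ((F r').a)

lemma exists_setup (d : ℕ → PF → ℕ) (l : ℕ)
    (ht1 : ∀ n, (t n).mup = (t (n + 1)).mdn)
    (ht2 : Tendsto (fun n => (t n).nor) atTop atTop)
    (hd : ∀ k f, d k f < l) (hl : 1 ≤ l) : Nonempty (Setup t d l) := by
  classical
  obtain ⟨U, hR, hidem⟩ := exists_idem_rich ht1 ht2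
  set F := FF U d l hd hR hidem with hF
  have good : ∀ k, GoodUpTo U d l F k := FF_good U d l hd hR hidem
  have hlfin : ∀ i, lofe (d := d) (l := l) U ((F i).a) < l :=
    fun i => (lofe_spec U hd hR ((F i).a)).1
  haveI : NeZero l := ⟨by omega⟩
  set col : ℕ → Fin l := fun i => ⟨lofe (d := d) (l := l) U ((F i).a), hlfin i⟩ with hcol
  obtain ⟨v, hv⟩ := Finite.exists_infinite_fiber col
  have hs : (col ⁻¹' {v}).Infinite := Set.infinite_coe_iff.mp hv
  haveI : Infinite ↥(col ⁻¹' {v}) := hv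
  set r : ℕ →o ℕ := (Nat.orderEmbeddingOfSet (col ⁻¹' {v})).toOrderHom with hr
  have hrmem : ∀ n, (Nat.orderEmbeddingOfSet (col ⁻¹' {v})) n ∈ col ⁻¹' {v} := by
    intro n
    have : (Nat.orderEmbeddingOfSet (col ⁻¹' {v})) n ∈ Set.range (Nat.orderEmbeddingOfSet (col ⁻¹' {v})) :=
      Set.mem_range_self n
    rwa [Nat.orderEmbeddingOfSet_range] at this
  refine ⟨⟨ht1, U, F, fun n => (Nat.orderEmbeddingOfSet (col ⁻¹' {v})) n, (v : ℕ), v.2,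
    ?_, ?_, ?_, ?_, ?_, ?_, ?_, ?_, ?_, ?_⟩⟩
  · exact fun a b hab => (Nat.orderEmbeddingOfSet (col ⁻¹' {v})).strictMono hab
  · intro j
    have := hrmem j
    simp only [Set.mem_preimage, Set.mem_singleton_iff, hcol] at this
    exact congrArg Fin.val this
  · intro i
    exact (good (i + 2)).link i (by omega)
  · intro i
    exact (good (i + 1)).hm1 i (by omega)
  · intro i
    exact (good (i + 1)).hm2 i (by omega)
  · intro i
    exact (good (i + 1)).hcard i (by omega)
  · intro i
    exact (good (i + 1)).hBA i (by omega)
  · intro i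
    exact (good (i + 1)).hYlen i (by omega)
  · intro i
    exact (good (i + 1)).hYidx i (by omega)
  · intro r' q hrq β hβ
    exact (good (q + 1)).hinv r' q hrq (by omega) β hβ

lemma find_block {g : ℕ → ℕ} : ∀ {n p : ℕ}, g 0 ≤ p → p < g (n + 1) →
    ∃ rr, rr ≤ n ∧ g rr ≤ p ∧ p < g (rr + 1) := by
  intro n
  induction n with
  | zero => intro p h1 h2; exact ⟨0, le_refl _, h1, h2⟩
  | succ n ih =>
    intro p h1 h2
    rcases Nat.lt_or_ge p (g (n + 1)) with h | h
    · obtain ⟨rr, hrr, h3, h4⟩ := ih h1 h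
      exact ⟨rr, by omega, h3, h4⟩
    · exact ⟨n + 1, le_refl _, h, h2⟩

namespace Setup

variable {d : ℕ → PF → ℕ} {l : ℕ} (S : Setup t d l)

/-- block boundaries. -/
def aS : ℕ → ℕ := fun i => (S.F i).a

lemma amono : StrictMono S.aS := by
  apply strictMono_nat_of_lt_succ
  intro i
  have h1 := S.hlink i
  have h2 := S.hm1 i
  have h3 := S.hm2 i
  show (S.F i).a < (S.F (i + 1)).a
  omega

/-- merged block boundaries. -/
def bd : ℕ → ℕ := fun j => S.aS (S.r j)

lemma bdmono : StrictMono S.bd := fun _ _ h => S.amono (S.hrmono h)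

lemma Bne (q : ℕ) : (S.F q).B.Nonempty :=
  Finset.card_pos.mp (lt_of_lt_of_le (Nat.succ_pos q) (S.hcard q))

open Classical in
noncomputable def db : ℕ → ℕ := fun q => if h : (S.F q).B.Nonempty then h.choose else 0

lemma db_mem (q : ℕ) : S.db q ∈ (S.F q).B := by
  rw [db, dif_pos (S.Bne q)]
  exact (S.Bne q).choose_spec

lemma hYlen' {i β : ℕ} (hβ : β ∈ (S.F i).B) : ((S.F i).Y β).1.length = S.aS (i + 1) := by
  rw [S.hYlen i β hβ]
  exact (S.hlink i).symm

/-- chains of family members along consecutive blocks. -/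
noncomputable def schain (r' q : ℕ) (β : ℕ → ℕ) : SW t :=
  chain (fun i => (S.F i).Y (β i)) r' (q - r')

lemma schain_len {r' q : ℕ} (hrq : r' ≤ q) {β : ℕ → ℕ}
    (hβ : ∀ i, r' ≤ i → i ≤ q → β i ∈ (S.F i).B) :
    (S.schain r' q β).1.length = S.aS (q + 1) := by
  have := chain_len (bo := S.aS) (c := fun i => (S.F i).Y (β i)) (r := r') (n := q - r')
    S.amono (fun i hi => S.hYlen' (hβ (r' + i) (by omega) (by omega)))
  rwa [show r' + (q - r') + 1 = q + 1 by omega] at this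

lemma schain_blk {r' q : ℕ} (hrq : r' ≤ q) {β : ℕ → ℕ}
    (hβ : ∀ i, r' ≤ i → i ≤ q → β i ∈ (S.F i).B) {q₀ p : ℕ}
    (h1 : r' ≤ q₀) (h2 : q₀ ≤ q) (h3 : S.aS q₀ ≤ p) (h4 : p < S.aS (q₀ + 1)) :
    (S.schain r' q β).blk p = ((S.F q₀).Y (β q₀)).blk p := by
  have := chain_blk (bo := S.aS) (c := fun i => (S.F i).Y (β i)) (r := r') (n := q - r')
    S.amono (fun i hi => S.hYlen' (hβ (r' + i) (by omega) (by omega)))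
    (i := q₀ - r') (p := p) (by omega)
    (by rwa [show r' + (q₀ - r') = q₀ by omega])
    (by rwa [show r' + (q₀ - r') + 1 = q₀ + 1 by omega])
  rwa [show r' + (q₀ - r') = q₀ by omega] at this

lemma schain_G {r' q : ℕ} (hrq : r' ≤ q) {β : ℕ → ℕ}
    (hβ : ∀ i, r' ≤ i → i ≤ q → β i ∈ (S.F i).B) :
    S.schain r' q β ∈ Gset (d := d) (l := l) S.U (S.aS r') :=
  S.hinv r' q hrq β hβ

lemma bd_lt (j : ℕ) : S.bd j < S.bd (j + 1) := S.bdmono (by omega)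

lemma r_lt (j : ℕ) : S.r j < S.r (j + 1) := S.hrmono (by omega)

/-- the letters for a single merged block: `β` at `r j`, defaults elsewhere. -/
noncomputable def βone (j β : ℕ) : ℕ → ℕ := fun q => if q = S.r j then β else S.db q

lemma βone_mem {j β : ℕ} (hβ : β ∈ (S.F (S.r j)).B) (i : ℕ) : S.βone j β i ∈ (S.F i).B := by
  rw [βone]
  split_ifs with h
  · rwa [h]
  · exact S.db_mem i

/-- the word of the merged block `j` with letter `β`. -/
noncomputable def scw (j β : ℕ) : SW t := S.schain (S.r j) (S.r (j + 1) - 1) (S.βone j β)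

lemma scw_len {j β : ℕ} (hβ : β ∈ (S.F (S.r j)).B) : (S.scw j β).1.length = S.bd (j + 1) := by
  rw [scw, S.schain_len (by have := S.r_lt j; omega) (fun i _ _ => S.βone_mem hβ i),
    show S.r (j + 1) - 1 + 1 = S.r (j + 1) by have := S.r_lt j; omega]
  rfl

noncomputable def word (j β : ℕ) : PF := glue t (S.bd j) (S.scw j β)

lemma word_blk {j β p x : ℕ} (hβ : β ∈ (S.F (S.r j)).B) (hp1 : S.bd j ≤ p)
    (hp2 : p < S.bd (j + 1)) (hx : x ∈ (t p).u) :
    S.word j β x = (S.scw j β).blk p x :=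
  glue_eq_blk S.ht1 hp1 (by rw [S.scw_len hβ]; exact hp2) hx

lemma word_none {j β x : ℕ} (hβ : β ∈ (S.F (S.r j)).B)
    (hx : ∀ p, S.bd j ≤ p → p < S.bd (j + 1) → x ∉ (t p).u) : S.word j β x = none := by
  apply glue_eq_none
  intro p h1 h2
  exact hx p h1 (by rwa [S.scw_len hβ] at h2)

lemma scw_blk_mem {j β p : ℕ} (hβ : β ∈ (S.F (S.r j)).B) (hp2 : p < S.bd (j + 1)) :
    (S.scw j β).blk p ∈ (t p).val :=
  SW.blk_mem _ (by rw [S.scw_len hβ]; exact hp2)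

lemma scw_blk_eq {j β q₀ p : ℕ} (hβ : β ∈ (S.F (S.r j)).B)
    (h1 : S.r j ≤ q₀) (h2 : q₀ ≤ S.r (j + 1) - 1)
    (h3 : S.aS q₀ ≤ p) (h4 : p < S.aS (q₀ + 1)) :
    (S.scw j β).blk p = ((S.F q₀).Y (S.βone j β q₀)).blk p :=
  S.schain_blk (by have := S.r_lt j; omega) (fun i _ _ => S.βone_mem hβ i) h1 h2 h3 h4

lemma m_bounds (i : ℕ) : S.aS i ≤ (S.F i).m ∧ (S.F i).m < S.aS (i + 1) := by
  refine ⟨S.hm1 i, ?_⟩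
  have h1 := S.hm2 i
  have h2 := S.hlink i
  show (S.F i).m < (S.F (i + 1)).a
  omega

lemma word_idx {j β : ℕ} (hβ : β ∈ (S.F (S.r j)).B) :
    S.word j β ((t (S.F (S.r j)).m).idx) = some β := by
  set m := (S.F (S.r j)).m with hm
  have hb := S.m_bounds (S.r j)
  have hm2 : m < S.bd (j + 1) :=
    lt_of_lt_of_le hb.2 (S.amono.monotone (by have := S.r_lt j; omega))
  rw [S.word_blk hβ hb.1 hm2 (t m).hidx,
    S.scw_blk_eq hβ (le_refl _) (by have := S.r_lt j; omega) hb.1 hb.2]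
  have : S.βone j β (S.r j) = β := if_pos rfl
  rw [this]
  exact S.hYidx (S.r j) β hβ

open Classical in
/-- the creatures of the constructed candidate. -/
noncomputable def crt (j : ℕ) : Creature1 where
  mdn := (t (S.bd j)).mdn
  mup := (t (S.bd (j + 1) - 1)).mup
  hm := lt_of_lt_of_le (t (S.bd j)).hm (mup_le_mup S.ht1 (by have := S.bd_lt j; omega))
  u := (Finset.Icc (S.bd j) (S.bd (j + 1) - 1)).biUnion (fun p => (t p).u)
  hu := by
    intro x hx
    obtain ⟨p, hp, hxp⟩ := Finset.mem_biUnion.mp hx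
    rw [Finset.mem_Icc] at hp
    have hb := mem_u_bounds hxp
    rw [Finset.mem_Ico]
    constructor
    · exact le_trans ((mdn_strictMono S.ht1).monotone hp.1) hb.1
    · exact lt_of_lt_of_le hb.2 (mup_le_mup S.ht1 hp.2)
  idx := (t (S.F (S.r j)).m).idx
  hidx := by
    apply Finset.mem_biUnion.mpr
    refine ⟨(S.F (S.r j)).m, ?_, (t (S.F (S.r j)).m).hidx⟩
    rw [Finset.mem_Icc]
    have hb := S.m_bounds (S.r j)
    have := S.bd_lt j
    have hle : S.aS (S.r j + 1) ≤ S.bd (j + 1) := S.amono.monotone (by have := S.r_lt j; omega)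
    constructor
    · exact hb.1
    · show (S.F (S.r j)).m ≤ S.bd (j + 1) - 1
      have := hb.2
      omega
  A := (S.F (S.r j)).B
  hA := S.Bne _
  hAH := fun a ha => (t (S.F (S.r j)).m).hAH a (S.hBA (S.r j) ha)
  val := ((S.F (S.r j)).B).image (fun β => S.word j β)
  hvalne := (S.Bne _).image _
  hdom := by
    intro f hf x
    obtain ⟨β, hβ, rfl⟩ := Finset.mem_image.mp hf
    by_cases hex : ∃ p, S.bd j ≤ p ∧ p < S.bd (j + 1) ∧ x ∈ (t p).u
    · obtain ⟨p, h1, h2, h3⟩ := hex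
      rw [S.word_blk hβ h1 h2 h3]
      have hiff := (t p).hdom _ (S.scw_blk_mem hβ h2) x
      rw [hiff]
      simp only [Finset.mem_biUnion, Finset.mem_Icc]
      constructor
      · intro _
        exact ⟨p, ⟨h1, by have := S.bd_lt j; omega⟩, h3⟩
      · intro _
        exact h3
    · push_neg at hex
      rw [S.word_none hβ hex]
      simp only [Option.isSome_none, Bool.false_eq_true, false_iff]
      intro hmem
      obtain ⟨p, hp, hxp⟩ := Finset.mem_biUnion.mp hmem
      rw [Finset.mem_Icc] at hp
      exact hex p hp.1 (by have := S.bd_lt j; omega) hxp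
  hran := by
    intro f hf x a hfa
    obtain ⟨β, hβ, rfl⟩ := Finset.mem_image.mp hf
    by_cases hex : ∃ p, S.bd j ≤ p ∧ p < S.bd (j + 1) ∧ x ∈ (t p).u
    · obtain ⟨p, h1, h2, h3⟩ := hex
      rw [S.word_blk hβ h1 h2 h3] at hfa
      exact (t p).hran _ (S.scw_blk_mem hβ h2) x a hfa
    · push_neg at hex
      rw [S.word_none hβ hex] at hfa
      exact absurd hfa (by simp)
  hproj := by
    intro a
    constructor
    · intro ha
      exact ⟨S.word j a, Finset.mem_image.mpr ⟨a, ha, rfl⟩, S.word_idx ha⟩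
    · rintro ⟨f, hf, hfa⟩
      obtain ⟨β, hβ, rfl⟩ := Finset.mem_image.mp hf
      rw [S.word_idx hβ] at hfa
      rwa [← Option.some_inj.mp hfa]
  nor := Real.logb 2 ((S.F (S.r j)).B.card)
  hnor := rfl

lemma crt_sigma (j : ℕ) : S.crt j ∈ Sigma1 t (S.bd j) (S.bd (j + 1) - 1) := by
  classical
  refine ⟨rfl, rfl, rfl, ⟨(S.F (S.r j)).m, ?_, ?_, rfl, S.hBA _⟩, ?_⟩
  · exact (S.m_bounds (S.r j)).1
  · have h1 := (S.m_bounds (S.r j)).2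
    have h2 : S.aS (S.r j + 1) ≤ S.bd (j + 1) := S.amono.monotone (by have := S.r_lt j; omega)
    omega
  · intro f hf
    obtain ⟨β, hβ, rfl⟩ := Finset.mem_image.mp hf
    have hbd := S.bd_lt j
    refine ⟨fun p => (S.scw j β).blk p, ?_, ?_, ?_⟩
    · intro p h1 h2
      exact S.scw_blk_mem hβ (by omega)
    · intro p h1 h2 x hx
      exact S.word_blk hβ h1 (by omega) hx
    · intro x hx
      exact S.word_none hβ (fun p h1 h2 => hx p h1 (by omega))

lemma crt_PC : PCtt1 (fun j => S.crt j) := by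
  constructor
  · intro n
    have h := S.ht1 (S.bd (n + 1) - 1)
    have harith : S.bd (n + 1) - 1 + 1 = S.bd (n + 1) := by have := S.bd_lt n; omega
    rw [harith] at h
    exact h
  · show Tendsto (fun j => Real.logb 2 (((S.F (S.r j)).B.card : ℝ))) atTop atTop
    have h2 : Tendsto (fun j : ℕ => Real.logb 2 ((j : ℝ) + 1)) atTop atTop :=
      (Real.tendsto_logb_atTop one_lt_two).comp
        (tendsto_atTop_add_const_right _ 1 tendsto_natCast_atTop_atTop)
    apply tendsto_atTop_mono _ h2
    intro j
    apply Real.logb_le_logb_of_le one_lt_two (by positivity)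
    have hc : j + 1 ≤ (S.F (S.r j)).B.card := by
      have h3 : j ≤ S.r j := S.hrmono.le_apply
      exact le_trans (by omega) (S.hcard (S.r j))
    exact_mod_cast hc

open Classical in
/-- the letters of an `n+1`-fold merged chain starting at block `i`. -/
noncomputable def bigβ (i n : ℕ) (βs : ℕ → ℕ) : ℕ → ℕ := fun q =>
  if h : ∃ rr, rr ≤ n ∧ q = S.r (i + rr) then βs h.choose else S.db q

lemma bigβ_at {i n rr : ℕ} (βs : ℕ → ℕ) (hrr : rr ≤ n) :
    S.bigβ i n βs (S.r (i + rr)) = βs rr := by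
  rw [bigβ]
  have hex : ∃ rr', rr' ≤ n ∧ S.r (i + rr) = S.r (i + rr') := ⟨rr, hrr, rfl⟩
  rw [dif_pos hex]
  have hs := hex.choose_spec
  have : i + rr = i + hex.choose := S.hrmono.injective hs.2
  have : hex.choose = rr := by omega
  rw [this]

lemma bigβ_not {i n q : ℕ} (βs : ℕ → ℕ) (h : ∀ rr, rr ≤ n → q ≠ S.r (i + rr)) :
    S.bigβ i n βs q = S.db q := by
  rw [bigβ, dif_neg]
  rintro ⟨rr, h1, h2⟩
  exact h rr h1 h2

lemma bigβ_mem {i n : ℕ} {βs : ℕ → ℕ}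
    (hβs : ∀ rr, rr ≤ n → βs rr ∈ (S.F (S.r (i + rr))).B) (q : ℕ) :
    S.bigβ i n βs q ∈ (S.F q).B := by
  rw [bigβ]
  split_ifs with h
  · have hs := h.choose_spec
    have := hβs _ hs.1
    rwa [← hs.2] at this
  · exact S.db_mem q

lemma bigβ_agree {i n rr q₀ : ℕ} (βs : ℕ → ℕ) (hrr : rr ≤ n) (h1 : S.r (i + rr) ≤ q₀)
    (h2 : q₀ ≤ S.r (i + rr + 1) - 1) :
    S.bigβ i n βs q₀ = S.βone (i + rr) (βs rr) q₀ := by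
  have hlt : q₀ < S.r (i + rr + 1) := by
    have := S.hrmono (show i + rr < i + rr + 1 by omega)
    omega
  by_cases hq : q₀ = S.r (i + rr)
  · rw [hq, S.bigβ_at βs hrr, βone, if_pos rfl]
  · rw [βone, if_neg hq]
    apply S.bigβ_not
    intro rr' hrr' heq
    have e1 : i + rr ≤ i + rr' := by
      by_contra hc
      push_neg at hc
      have := S.hrmono hc
      omega
    have e2 : i + rr' < i + rr + 1 := by
      by_contra hc
      push_neg at hc
      have := S.hrmono.monotone hc
      omega
    have : rr' = rr := by omega
    rw [this] at heq
    exact hq heq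

lemma color_eq (hd : ∀ k f, d k f < l) {i n : ℕ} {βs : ℕ → ℕ}
    (hβs : ∀ rr, rr ≤ n → βs rr ∈ (S.F (S.r (i + rr))).B)
    {f : PF}
    (hf1 : ∀ rr, rr ≤ n → ∀ x ∈ (S.crt (i + rr)).u, f x = S.word (i + rr) (βs rr) x)
    (hf2 : ∀ x, (∀ rr, rr ≤ n → x ∉ (S.crt (i + rr)).u) → f x = none) :
    d (S.bd i) f = S.v := by
  set BC := S.schain (S.r i) (S.r (i + n + 1) - 1) (S.bigβ i n βs) with hBC
  have hrle : S.r i ≤ S.r (i + n + 1) - 1 := by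
    have := S.hrmono (show i < i + n + 1 by omega)
    omega
  have hBm : ∀ q, S.r i ≤ q → q ≤ S.r (i + n + 1) - 1 → S.bigβ i n βs q ∈ (S.F q).B :=
    fun q _ _ => S.bigβ_mem hβs q
  have hr1 : S.r (i + n + 1) - 1 + 1 = S.r (i + n + 1) := by
    have := S.hrmono (show i < i + n + 1 by omega)
    omega
  have hlen : BC.1.length = S.bd (i + n + 1) := by
    rw [hBC, S.schain_len hrle hBm, hr1]
    rfl
  have hG : BC ∈ Gset (d := d) (l := l) S.U (S.bd i) := S.schain_G hrle hBm
  have hfe : f = glue t (S.bd i) BC := by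
    funext x
    by_cases hex : ∃ p, S.bd i ≤ p ∧ p < S.bd (i + n + 1) ∧ x ∈ (t p).u
    · obtain ⟨p, hp1, hp2, hpx⟩ := hex
      obtain ⟨rr, hrr, hq1, hq2⟩ := find_block (g := fun rr => S.bd (i + rr)) (n := n) (p := p)
        (by show S.bd (i + 0) ≤ p; rw [Nat.add_zero]; exact hp1)
        (by show p < S.bd (i + (n + 1)); rw [show i + (n + 1) = i + n + 1 by omega]; exact hp2)
      have hbd1 : S.bd (i + rr) ≤ p := hq1
      have hbd2 : p < S.bd (i + rr + 1) := by
        have h' : p < S.bd (i + (rr + 1)) := hq2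
        rwa [show i + (rr + 1) = i + rr + 1 by omega] at h'
      -- find the fine block q₀
      have hg0 : (fun k => S.aS (S.r (i + rr) + k)) 0 ≤ p := by
        show S.aS (S.r (i + rr) + 0) ≤ p
        rw [Nat.add_zero]
        exact hbd1
      have hgn : p < (fun k => S.aS (S.r (i + rr) + k)) ((S.r (i + rr + 1) - 1 - S.r (i + rr)) + 1) := by
        show p < S.aS (S.r (i + rr) + (S.r (i + rr + 1) - 1 - S.r (i + rr)) + 1)
        have harith : S.r (i + rr) + (S.r (i + rr + 1) - 1 - S.r (i + rr)) + 1 = S.r (i + rr + 1) := by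
          have := S.hrmono (show i + rr < i + rr + 1 by omega)
          omega
        rw [harith]
        exact hbd2
      obtain ⟨qq, hqq, hq3, hq4⟩ := find_block (g := fun k => S.aS (S.r (i + rr) + k)) hg0 hgn
      set q₀ := S.r (i + rr) + qq with hq₀
      have hrlt : S.r (i + rr) < S.r (i + rr + 1) := S.hrmono (by omega)
      have hb1 : S.r (i + rr) ≤ q₀ := by omega
      have hb2 : q₀ ≤ S.r (i + rr + 1) - 1 := by omega
      have hb3 : S.aS q₀ ≤ p := hq3
      have hb4 : p < S.aS (q₀ + 1) := hq4
      have hxmem : x ∈ (S.crt (i + rr)).u := by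
        apply Finset.mem_biUnion.mpr
        refine ⟨p, Finset.mem_Icc.mpr ⟨hbd1, ?_⟩, hpx⟩
        have := S.bd_lt (i + rr)
        omega
      have hβrr := hβs rr hrr
      rw [hf1 rr hrr x hxmem, S.word_blk hβrr hbd1 hbd2 hpx,
        S.scw_blk_eq hβrr hb1 hb2 hb3 hb4,
        glue_eq_blk S.ht1 hp1 (by rwa [hlen]) hpx, hBC,
        S.schain_blk hrle hBm (le_trans (S.hrmono.monotone (by omega)) hb1)
          (by
            have : S.r (i + rr + 1) ≤ S.r (i + n + 1) := S.hrmono.monotone (by omega)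
            omega) hb3 hb4,
        S.bigβ_agree βs hrr hb1 hb2]
    · push_neg at hex
      have hnone : f x = none := by
        apply hf2 x
        intro rr hrr hmem
        obtain ⟨p, hp, hxp⟩ := Finset.mem_biUnion.mp hmem
        rw [Finset.mem_Icc] at hp
        apply hex p (le_trans (S.bdmono.monotone (by omega)) hp.1) ?_ hxp
        have h1 : S.bd (i + rr + 1) ≤ S.bd (i + n + 1) := S.bdmono.monotone (by omega)
        have := S.bd_lt (i + rr)
        omega
      rw [hnone, glue_eq_none (fun p h1 h2 => hex p h1 (by rwa [hlen] at h2) )]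
  rw [hfe]
  have hcolor := Gset_color S.U hG
  rw [hcolor.2]
  exact S.hlofe i

end Setup

end Stmt12Aux

theorem stmt12 (t : ℕ → Creature1) (ht : PCtt1 t)
    (l : ℕ) (hl : 1 ≤ l)
    (d : ℕ → (ℕ → Option ℕ) → ℕ) (hd : ∀ k f, d k f < l) :
    ∃ s : ℕ → Creature1, PCtt1 s ∧ le1 s t ∧
      ∃ l' < l, ∀ i k, s i ∈ SigmattTail1 t k →
        ∀ f ∈ postt1 s i, d k f = l' := by
  classical
  obtain ⟨ht1, ht2⟩ := ht
  obtain ⟨S⟩ := Stmt12Aux.exists_setup (t := t) d l ht1 ht2 hd hl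
  refine ⟨fun j => S.crt j, S.crt_PC, ⟨S.bd, S.bdmono, fun n => S.crt_sigma n⟩, S.v, S.hv, ?_⟩
  intro i k hk f hf
  have hkbd : k = S.bd i := by
    obtain ⟨n, hmem⟩ := Set.mem_iUnion.mp hk
    have h1 : (S.crt i).mdn = (t k).mdn := hmem.1
    have h2 : (S.crt i).mdn = (t (S.bd i)).mdn := rfl
    exact ((Stmt12Aux.mdn_strictMono ht1).injective (by rw [← h1, h2])).symm
  subst hkbd
  obtain ⟨n, g, hg1, hg2, hg3⟩ := hf
  have hsel : ∀ rr, rr ≤ n → ∃ β, β ∈ (S.F (S.r (i + rr))).B ∧ g rr = S.word (i + rr) β := by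
    intro rr hrr
    have hv := hg1 rr hrr
    obtain ⟨β, hβ, he⟩ := Finset.mem_image.mp hv
    exact ⟨β, hβ, he.symm⟩
  set βs : ℕ → ℕ := fun rr => if h : rr ≤ n then (hsel rr h).choose else 0 with hβs
  apply S.color_eq hd (n := n) (βs := βs)
  · intro rr hrr
    rw [hβs]
    dsimp only
    rw [dif_pos hrr]
    exact (hsel rr hrr).choose_spec.1
  · intro rr hrr x hx
    rw [hg2 rr hrr x hx, hβs]
    dsimp only
    rw [dif_pos hrr, ← (hsel rr hrr).choose_spec.2]
  · exact hg3
end
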